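/- arXiv:2301.08206 — 5 statements merged into one kernel-verified Lean document; each statement's English description precedes it below -/
import Mathlib

section
/- Let $c$ be a Coxeter element of the dihedral group $I_2(m)$ of order $2m$ (with $m \geq 2$), and fix $p \in (0,1)$. The expected number of steps of the Ungarian Markov chain on the $c$-Cambrian lattice (whose Hasse diagram consists of the two chains $e \lessdot \alpha_1 \lessdot \alpha_2 \lessdot \cdots \lessdot \alpha_m$ and $e \lessdot t \lessdot \alpha_m$) to go from the top element $\alpha_m$ to the bottom element $e$ equals $\frac{1 + m(1-p)}{2p - p^2}$. -/
open Finset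
open scoped Classical

/-- The set of elements covered by `x`. -/
noncomputable def ungarCov {L : Type*} [Fintype L] [Preorder L] (x : L) : Finset L :=
  Finset.univ.filter (fun y => y ⋖ x)

/-- Transition probabilities of the Ungarian Markov chain. -/
noncomputable def ungarP {L : Type*} [Fintype L] [Lattice L] [BoundedOrder L]
    (p : ℝ) (x y : L) : ℝ :=
  ∑ T ∈ (ungarCov x).powerset.filter (fun T => (insert x T).inf id = y),
    p ^ T.card * (1 - p) ^ ((ungarCov x).card - T.card)

/-- `E` is the expected-number-of-steps-to-`⊥` function of the Ungarian Markov chain: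
it satisfies the defining first-step recurrence. -/
def IsUngarExp {L : Type*} [Fintype L] [Lattice L] [BoundedOrder L]
    (p : ℝ) (E : L → ℝ) : Prop :=
  E ⊥ = 0 ∧ ∀ x : L, x ≠ ⊥ → E x = 1 + ∑ y : L, ungarP p x y * E y

/-- For a Coxeter element `c` of the dihedral group `I₂(m)` (`m ≥ 2`)
and `p ∈ (0,1)`, the expected top-to-bottom absorption time of the Ungarian Markov
chain on the `c`-Cambrian lattice (two chains `e ⋖ α₁ ⋖ ⋯ ⋖ α_m` and `e ⋖ t ⋖ α_m`)
equals `(1 + m(1-p)) / (2p - p²)`. The lattice is specified up to isomorphism by the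
hypotheses below (with `α 0 = e = ⊥` and `α m = ⊤`). -/
theorem stmt_5 {L : Type*} [Fintype L] [Lattice L] [BoundedOrder L]
    (m : ℕ) (hm : 2 ≤ m) (α : Fin (m + 1) → L) (t : L)
    (hα : ∀ k l : Fin (m + 1), α k ≤ α l ↔ k ≤ l)
    (hbot : α 0 = ⊥) (htop : α (Fin.last m) = ⊤)
    (htα : ∀ k : Fin (m + 1), t ≤ α k ↔ α k = ⊤)
    (hαt : ∀ k : Fin (m + 1), α k ≤ t ↔ α k = ⊥)
    (htne : ∀ k : Fin (m + 1), t ≠ α k)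
    (hall : ∀ x : L, x = t ∨ ∃ k : Fin (m + 1), x = α k)
    (p : ℝ) (hp : 0 < p) (hp1 : p < 1)
    (E : L → ℝ) (hE : IsUngarExp p E) :
    E ⊤ = (1 + m * (1 - p)) / (2 * p - p ^ 2) := by
  classical
  obtain ⟨hE0, hEstep⟩ := hE
  have hp0 : p ≠ 0 := ne_of_gt hp
  -- basic structure lemmas
  have hinj : Function.Injective α := fun a b h =>
    le_antisymm ((hα a b).mp h.le) ((hα b a).mp h.ge)
  have hαlt : ∀ k l : Fin (m + 1), α k < α l ↔ k < l := by
    intro k l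
    rw [lt_iff_le_not_ge, lt_iff_le_not_ge, hα, hα]
  have htopk : ∀ k : Fin (m + 1), α k = ⊤ ↔ k = Fin.last m := by
    intro k
    constructor
    · intro h; exact hinj (h.trans htop.symm)
    · rintro rfl; exact htop
  have hbotk : ∀ k : Fin (m + 1), α k = ⊥ ↔ k = 0 := by
    intro k
    constructor
    · intro h; exact hinj (h.trans hbot.symm)
    · rintro rfl; exact hbot
  have htbot : t ≠ ⊥ := fun h => htne 0 (by rw [h, hbot])
  have httop : t ≠ ⊤ := fun h => htne (Fin.last m) (by rw [h, htop])
  have hltt : ∀ z : L, z < t → z = ⊥ := by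
    intro z hz
    rcases hall z with rfl | ⟨k, rfl⟩
    · exact absurd hz (lt_irrefl _)
    · exact (hαt k).mp hz.le
  have htlt : ∀ z : L, t < z → z = ⊤ := by
    intro z hz
    rcases hall z with rfl | ⟨k, rfl⟩
    · exact absurd hz (lt_irrefl _)
    · exact (htα k).mp hz.le
  -- cover sets
  have covt : ungarCov t = {⊥} := by
    ext y
    simp only [ungarCov, mem_filter, mem_univ, true_and, mem_singleton]
    constructor
    · intro h; exact hltt y h.1
    · rintro rfl
      refine ⟨htbot.bot_lt, fun z h1 h2 => ?_⟩
      rw [hltt z h2] at h1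
      exact lt_irrefl _ h1
  have covα : ∀ (i : ℕ) (hi : i + 1 < m),
      ungarCov (α ⟨i + 1, by omega⟩) = {α ⟨i, by omega⟩} := by
    intro i hi
    ext y
    simp only [ungarCov, mem_filter, mem_univ, true_and, mem_singleton]
    constructor
    · intro h
      rcases hall y with rfl | ⟨⟨j, hj⟩, rfl⟩
      · exfalso
        have h1 := (htα _).mp h.1.le
        rw [htopk] at h1
        have h2 : i + 1 = m := congrArg Fin.val h1
        omega
      · have hj1 : j < i + 1 := Fin.mk_lt_mk.mp ((hαlt _ _).mp h.1)
        have hji : ¬ j < i := by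
          intro hji
          have c1 : α ⟨j, hj⟩ < α ⟨i, by omega⟩ := (hαlt _ _).mpr (Fin.mk_lt_mk.mpr hji)
          have c2 : α (⟨i, by omega⟩ : Fin (m + 1)) < α ⟨i + 1, by omega⟩ :=
            (hαlt _ _).mpr (Fin.mk_lt_mk.mpr (Nat.lt_succ_self i))
          exact h.2 c1 c2
        exact congrArg α (Fin.ext (by omega : j = i))
    · rintro rfl
      refine ⟨(hαlt _ _).mpr (Fin.mk_lt_mk.mpr (Nat.lt_succ_self i)), fun z h1 h2 => ?_⟩
      rcases hall z with rfl | ⟨⟨j, hj⟩, rfl⟩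
      · have h3 := htlt _ h2
        rw [htopk] at h3
        have h4 : i + 1 = m := congrArg Fin.val h3
        omega
      · have h3 : i < j := Fin.mk_lt_mk.mp ((hαlt _ _).mp h1)
        have h4 : j < i + 1 := Fin.mk_lt_mk.mp ((hαlt _ _).mp h2)
        omega
  have hm1 : m - 1 < m + 1 := by omega
  have hane : α ⟨m - 1, hm1⟩ ≠ t := fun h => htne _ h.symm
  have hanetop : α ⟨m - 1, hm1⟩ ≠ ⊤ := by
    intro h
    have h2 := (htopk _).mp h
    have : m - 1 = m := congrArg Fin.val h2
    omega
  have pows : ∀ z : L, ({z} : Finset L).powerset = {∅, {z}} := by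
    intro z
    ext s
    simp [Finset.subset_singleton_iff]
  have covtop : ungarCov (⊤ : L) = {α ⟨m - 1, hm1⟩, t} := by
    ext y
    simp only [ungarCov, mem_filter, mem_univ, true_and, mem_insert, mem_singleton]
    constructor
    · intro h
      rcases hall y with rfl | ⟨⟨j, hj⟩, rfl⟩
      · exact Or.inr rfl
      · left
        have hjm : j ≠ m := by
          intro hjm
          have : α ⟨j, hj⟩ = ⊤ := (htopk _).mpr (Fin.ext hjm)
          rw [this] at h
          exact lt_irrefl _ h.1
        have hjge : ¬ j < m - 1 := by
          intro hjl
          exact h.2 ((hαlt _ _).mpr (Fin.mk_lt_mk.mpr hjl)) (hanetop.lt_top)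
        exact congrArg α (Fin.ext (by omega : j = m - 1))
    · intro h
      rcases h with rfl | rfl
      · refine ⟨hanetop.lt_top, fun z h1 h2 => ?_⟩
        rcases hall z with rfl | ⟨⟨j, hj⟩, rfl⟩
        · have h3 := (hαt _).mp h1.le
          rw [hbotk] at h3
          have h4 : m - 1 = 0 := congrArg Fin.val h3
          omega
        · have h3 : m - 1 < j := Fin.mk_lt_mk.mp ((hαlt _ _).mp h1)
          have hjm : j ≠ m := by
            intro hjm
            have : α ⟨j, hj⟩ = ⊤ := (htopk _).mpr (Fin.ext hjm)
            rw [this] at h2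
            exact lt_irrefl _ h2
          omega
      · refine ⟨httop.lt_top, fun z h1 h2 => ?_⟩
        rw [htlt z h1] at h2
        exact lt_irrefl _ h2
  -- rewrite the expectation sum over subsets
  have key : ∀ x : L, ∑ y : L, ungarP p x y * E y
      = ∑ T ∈ (ungarCov x).powerset,
          p ^ T.card * (1 - p) ^ ((ungarCov x).card - T.card) * E ((insert x T).inf id) := by
    intro x
    unfold ungarP
    simp only [Finset.sum_mul, Finset.sum_filter]
    rw [Finset.sum_comm]
    refine Finset.sum_congr rfl fun T _ => ?_
    simp only [ite_mul, zero_mul]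
    rw [Finset.sum_ite_eq Finset.univ ((insert x T).inf id)
      (fun y => p ^ T.card * (1 - p) ^ ((ungarCov x).card - T.card) * E y)]
    simp
  -- one-step recurrence for elements with a single cover
  have step1 : ∀ x z : L, x ≠ ⊥ → ungarCov x = {z} → z ≤ x → E x = E z + 1 / p := by
    intro x z hx hcov hzx
    have hrec := hEstep x hx
    rw [key x, hcov, pows z,
      Finset.sum_insert (by rw [Finset.mem_singleton]; exact (Finset.singleton_ne_empty _).symm), Finset.sum_singleton] at hrec
    simp only [Finset.card_empty, Finset.card_singleton, Finset.inf_empty,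
      Finset.inf_insert, Finset.inf_singleton, id_eq, inf_idem, pow_zero, pow_one,
      Nat.sub_self, Nat.sub_zero, one_mul, mul_one, inf_top_eq, top_inf_eq] at hrec
    rw [inf_eq_right.mpr hzx] at hrec
    have h2 : p * E x = p * E z + 1 := by nlinarith [hrec]
    field_simp
    linarith
  have Et : E t = 1 / p := by
    have := step1 t ⊥ htbot covt bot_le
    rw [hE0] at this
    linarith
  have Eα : ∀ (i : ℕ) (h' : i < m + 1), i < m → E (α ⟨i, h'⟩) = i / p := by
    intro i
    induction i with
    | zero =>
      intro h' _
      have h0 : (⟨0, h'⟩ : Fin (m + 1)) = 0 := rfl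
      rw [h0, hbot, hE0]
      simp
    | succ j ih =>
      intro h' hi
      have hjb : α (⟨j + 1, h'⟩ : Fin (m + 1)) ≠ ⊥ := by
        intro h
        have h2 := (hbotk _).mp h
        have : j + 1 = 0 := congrArg Fin.val h2
        omega
      have hle : α (⟨j, by omega⟩ : Fin (m + 1)) ≤ α ⟨j + 1, h'⟩ :=
        (hα _ _).mpr (by simp [Fin.mk_le_mk])
      have := step1 _ _ hjb (covα j hi) hle
      rw [ih (by omega) (by omega)] at this
      rw [this]
      push_cast
      field_simp
  -- the top element
  have htopbot : (⊤ : L) ≠ ⊥ := fun h => htbot (le_bot_iff.mp (h ▸ le_top))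
  have hat : α ⟨m - 1, hm1⟩ ⊓ t = ⊥ := by
    rcases eq_or_lt_of_le (inf_le_right : α ⟨m - 1, hm1⟩ ⊓ t ≤ t) with h | h
    · exfalso
      have h1 : t ≤ α ⟨m - 1, hm1⟩ := h ▸ inf_le_left
      exact hanetop ((htα _).mp h1)
    · exact hltt _ h
  have hnotmem : α ⟨m - 1, hm1⟩ ∉ ({t} : Finset L) := by simp [hane]
  have hrec := hEstep ⊤ htopbot
  rw [key ⊤, covtop, show ({α ⟨m - 1, hm1⟩, t} : Finset L) = insert (α ⟨m - 1, hm1⟩) {t} from rfl,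
    Finset.sum_powerset_insert hnotmem, pows t,
    Finset.sum_insert (by rw [Finset.mem_singleton]; exact (Finset.singleton_ne_empty _).symm), Finset.sum_singleton,
    Finset.sum_insert (by rw [Finset.mem_singleton]; exact (Finset.singleton_ne_empty _).symm), Finset.sum_singleton] at hrec
  simp only [Finset.card_empty, Finset.card_singleton, Finset.inf_empty,
    Finset.card_insert_of_notMem, Finset.notMem_empty, not_false_iff, hane,
    Finset.mem_singleton, Finset.inf_insert, Finset.inf_singleton, id_eq,
    pow_zero, pow_one, one_mul, mul_one, top_inf_eq, inf_top_eq, hat, hE0, mul_zero,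
    Nat.sub_self, Nat.sub_zero, add_zero] at hrec
  rw [Eα (m - 1) hm1 (by omega), Et] at hrec
  have hmc : ((m - 1 : ℕ) : ℝ) = (m : ℝ) - 1 := by
    rw [Nat.cast_sub (by omega)]; simp
  rw [hmc] at hrec
  have hq : 2 * p - p ^ 2 ≠ 0 := by nlinarith
  have hm0 : (0:ℝ) < m := by positivity
  field_simp at hrec
  have h2 : p * ((2 * p - p ^ 2) * E ⊤) = p * (1 + m * (1 - p)) := by linear_combination hrec
  have h3 := mul_left_cancel₀ hp0 h2
  rw [eq_div_iff hq]
  linarith [h3]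
end

section
/- Let $L$ be a finite trim lattice and let $x \in \mathrm{spine}(L)$. Then the interval $[\hat{0}, x]$ of $L$ is a trim lattice whose spine equals $\mathrm{spine}(L) \cap [\hat{0}, x]$. -/
open Finset
open scoped Classical

/-- The maximum cardinality of a chain in a finite preorder. -/
noncomputable def maxChainCard (L : Type*) [Fintype L] [Preorder L] : ℕ :=
  Finset.sup (Finset.univ.powerset.filter
    (fun C : Finset L => IsChain (· ≤ ·) (C : Set L))) Finset.card

/-- The number of join-irreducible elements (elements covering exactly one element). -/
noncomputable def numJoinIrred (L : Type*) [Fintype L] [Preorder L] : ℕ :=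
  (Finset.univ.filter
    (fun a : L => (Finset.univ.filter (fun y : L => y ⋖ a)).card = 1)).card

/-- The number of meet-irreducible elements (elements covered by exactly one element). -/
noncomputable def numMeetIrred (L : Type*) [Fintype L] [Preorder L] : ℕ :=
  (Finset.univ.filter
    (fun a : L => (Finset.univ.filter (fun y : L => a ⋖ y)).card = 1)).card

/-- `x` is a left modular element of the lattice `L`. -/
def IsLeftModular {L : Type*} [Lattice L] (x : L) : Prop :=
  ∀ y z : L, y ≤ z → (y ⊔ x) ⊓ z = y ⊔ (x ⊓ z)

/-- A finite lattice is trim if it is extremal (its length equals its number of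
join-irreducibles and its number of meet-irreducibles) and left modular (it has a
maximal chain all of whose elements are left modular). -/
def IsTrim (L : Type*) [Fintype L] [Lattice L] : Prop :=
  (maxChainCard L - 1 = numJoinIrred L ∧ maxChainCard L - 1 = numMeetIrred L) ∧
  ∃ C : Finset L, IsChain (· ≤ ·) (C : Set L) ∧
    (∀ D : Finset L, IsChain (· ≤ ·) (D : Set L) → C ⊆ D → D = C) ∧
    ∀ x ∈ C, IsLeftModular x

/-- The spine of a finite lattice: the set of elements lying on at least one
maximum-length chain. -/
noncomputable def spineF (L : Type*) [Fintype L] [Preorder L] : Finset L :=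
  Finset.univ.filter (fun x : L => ∃ C : Finset L,
    IsChain (· ≤ ·) (C : Set L) ∧ C.card = maxChainCard L ∧ x ∈ C)

set_option linter.unusedSectionVars false
set_option linter.unusedVariables false
set_option maxHeartbeats 2000000

theorem fexmin_old {α : Type*} [Preorder α] (s : Finset α) (h : s.Nonempty) :
    ∃ m ∈ s, ∀ x ∈ s, ¬ x < m := by
  obtain ⟨m, hm⟩ := Finset.exists_minimal h
  exact ⟨m, hm.1, fun y hy hlt => hlt.not_ge (hm.2 hy hlt.le)⟩

theorem fexmax_old {α : Type*} [Preorder α] (s : Finset α) (h : s.Nonempty) :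
    ∃ m ∈ s, ∀ x ∈ s, ¬ m < x := by
  obtain ⟨m, hm⟩ := Finset.exists_maximal h
  exact ⟨m, hm.1, fun y hy hlt => hlt.not_ge (hm.2 hy hlt.le)⟩



section A
variable {L : Type*} [Fintype L] [Preorder L]

/-- max card of a chain contained in `s` -/
noncomputable def mcc (s : Set L) : ℕ :=
  Finset.sup (Finset.univ.powerset.filter
    (fun C : Finset L => IsChain (· ≤ ·) (C : Set L) ∧ ↑C ⊆ s)) Finset.card

theorem le_mcc {s : Set L} {C : Finset L} (h1 : IsChain (· ≤ ·) (C : Set L))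
    (h2 : ↑C ⊆ s) : C.card ≤ mcc s :=
  Finset.le_sup (by simp [h1, h2])

theorem mcc_exists (s : Set L) : ∃ C : Finset L,
    IsChain (· ≤ ·) (C : Set L) ∧ ↑C ⊆ s ∧ C.card = mcc s := by
  have hne : (Finset.univ.powerset.filter
      (fun C : Finset L => IsChain (· ≤ ·) (C : Set L) ∧ ↑C ⊆ s)).Nonempty := by
    refine ⟨∅, ?_⟩
    simp only [Finset.mem_filter, Finset.mem_powerset, Finset.empty_subset, true_and,
      Finset.coe_empty]
    exact ⟨IsChain.empty, Set.empty_subset _⟩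
  obtain ⟨C, hC, hcard⟩ := Finset.exists_mem_eq_sup _ hne Finset.card
  simp only [Finset.mem_filter] at hC
  exact ⟨C, hC.2.1, hC.2.2, hcard.symm⟩

theorem maxChainCard_eq_mcc : maxChainCard L = mcc (Set.univ : Set L) := by
  unfold maxChainCard mcc
  congr 1
  apply Finset.filter_congr
  intro C _
  constructor
  · intro h; exact ⟨h, Set.subset_univ _⟩
  · intro h; exact h.1

end A

section B
variable {L : Type*} [Fintype L] [PartialOrder L]

theorem mem_of_attains_mcc {s : Set L} {C : Finset L} (hch : IsChain (· ≤ ·) (C : Set L))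
    (hsub : ↑C ⊆ s) (hcard : C.card = mcc s) {e : L} (he : e ∈ s)
    (hcomp : ∀ c ∈ C, e ≤ c ∨ c ≤ e) : e ∈ C := by
  by_contra hne
  have hch' : IsChain (· ≤ ·) ((insert e C : Finset L) : Set L) := by
    rw [Finset.coe_insert]
    exact hch.insert (fun b hb _ => (hcomp b hb))
  have hsub' : ((insert e C : Finset L) : Set L) ⊆ s := by
    rw [Finset.coe_insert]
    exact Set.insert_subset he hsub
  have := le_mcc hch' hsub'
  rw [Finset.card_insert_of_notMem hne, hcard] at this
  omega

theorem covBy_of_attains_mcc {s : Set L} {C : Finset L} (hch : IsChain (· ≤ ·) (C : Set L))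
    (hsub : ↑C ⊆ s) (hcard : C.card = mcc s)
    (hconv : ∀ a ∈ s, ∀ b ∈ s, ∀ z, a ≤ z → z ≤ b → z ∈ s)
    {a b : L} (ha : a ∈ C) (hb : b ∈ C) (hab : a < b)
    (hcons : ∀ c ∈ C, ¬(a < c ∧ c < b)) : a ⋖ b := by
  refine ⟨hab, fun z haz hzb => ?_⟩
  have hzs : z ∈ s := hconv a (hsub ha) b (hsub hb) z haz.le hzb.le
  have hzC : z ∈ C := by
    refine mem_of_attains_mcc hch hsub hcard hzs (fun c hc => ?_)
    rcases eq_or_ne c a with rfl | hca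
    · exact Or.inr haz.le
    rcases eq_or_ne c b with rfl | hcb
    · exact Or.inl hzb.le
    rcases hch ha hc (Ne.symm hca) with h1 | h1
    · rcases hch hc hb hcb with h2 | h2
      · exact absurd ⟨lt_of_le_of_ne h1 (Ne.symm hca), lt_of_le_of_ne h2 hcb⟩ (hcons c hc)
      · exact Or.inl (hzb.le.trans h2)
    · exact Or.inr (h1.trans haz.le)
  exact hcons z hzC ⟨haz, hzb⟩

theorem chain_enum : ∀ (n : ℕ) (C : Finset L), C.card = n → IsChain (· ≤ ·) (C : Set L) →
    ∃ f : Fin n → L, StrictMono f ∧ (∀ i, f i ∈ C) ∧ ∀ a ∈ C, ∃ i, f i = a := by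
  intro n
  induction n with
  | zero =>
    intro C hc _
    refine ⟨Fin.elim0, fun i => i.elim0, fun i => i.elim0, fun a ha => ?_⟩
    rw [Finset.card_eq_zero] at hc; subst hc; simp at ha
  | succ n ih =>
    intro C hc hch
    have hne : C.Nonempty := by rw [← Finset.card_pos, hc]; omega
    obtain ⟨m, hm, hmin⟩ := fexmin_old C hne
    have hleast : ∀ b ∈ C, m ≤ b := by
      intro b hb
      rcases eq_or_ne b m with rfl | h
      · exact le_rfl
      rcases hch hb hm h with h1 | h1
      · exact absurd (lt_of_le_of_ne h1 h) (hmin b hb)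
      · exact h1
    have hcard' : (C.erase m).card = n := by
      rw [Finset.card_erase_of_mem hm, hc]; rfl
    have hch' : IsChain (· ≤ ·) ((C.erase m : Finset L) : Set L) :=
      hch.mono (by intro z hz; simp only [Finset.coe_erase, Set.mem_diff] at hz; exact hz.1)
    obtain ⟨f, hf1, hf2, hf3⟩ := ih (C.erase m) hcard' hch'
    have hfm : ∀ i, m < f i := by
      intro i
      have h1 := hf2 i
      have h2 : f i ≠ m := Finset.ne_of_mem_erase h1
      exact lt_of_le_of_ne (hleast _ (Finset.mem_of_mem_erase h1)) (Ne.symm h2)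
    refine ⟨fun i => if h : (i : ℕ) = 0 then m else f ⟨(i : ℕ) - 1, by omega⟩, ?_, ?_, ?_⟩
    · intro i j hij
      rcases i with ⟨i, hi⟩; rcases j with ⟨j, hj⟩
      have hij' : i < j := hij
      beta_reduce
      rcases Nat.eq_zero_or_pos i with rfl | hi0
      · rw [dif_pos rfl, dif_neg (by simpa using by omega : ¬ (⟨j, hj⟩ : Fin (n+1)).1 = 0)]
        exact hfm _
      · rw [dif_neg (by simpa using by omega : ¬ (⟨i, hi⟩ : Fin (n+1)).1 = 0),
            dif_neg (by simpa using by omega : ¬ (⟨j, hj⟩ : Fin (n+1)).1 = 0)]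
        exact hf1 (by simp [Fin.lt_def]; omega)
    · intro i
      rcases i with ⟨i, hi⟩
      beta_reduce
      rcases Nat.eq_zero_or_pos i with rfl | hi0
      · rw [dif_pos rfl]; exact hm
      · rw [dif_neg (by simpa using by omega : ¬ (⟨i, hi⟩ : Fin (n+1)).1 = 0)]
        exact Finset.mem_of_mem_erase (hf2 _)
    · intro a ha
      rcases eq_or_ne a m with rfl | hne'
      · exact ⟨⟨0, by omega⟩, by beta_reduce; rw [dif_pos rfl]⟩
      · obtain ⟨⟨i, hilt⟩, hi⟩ := hf3 a (Finset.mem_erase.2 ⟨hne', ha⟩)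
        refine ⟨⟨i + 1, by omega⟩, ?_⟩
        beta_reduce
        rw [dif_neg (by simp)]
        simpa using hi
end B

section C
variable {L : Type*} [Fintype L] [PartialOrder L]

theorem le_maxChainCard {C : Finset L} (h : IsChain (· ≤ ·) (C : Set L)) :
    C.card ≤ maxChainCard L := by
  rw [maxChainCard_eq_mcc]; exact le_mcc h (Set.subset_univ _)

theorem maxChainCard_exists (L : Type*) [Fintype L] [Preorder L] : ∃ C : Finset L,
    IsChain (· ≤ ·) (C : Set L) ∧ C.card = maxChainCard L := by
  rw [maxChainCard_eq_mcc]
  obtain ⟨C, h1, _, h3⟩ := mcc_exists (Set.univ : Set L)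
  exact ⟨C, h1, h3⟩

theorem maxChainCard_subtype (s : Set L) [Fintype s] : maxChainCard s = mcc s := by
  apply le_antisymm
  · unfold maxChainCard
    apply Finset.sup_le
    intro D hD
    simp only [Finset.mem_filter] at hD
    have hch : IsChain (· ≤ ·) ((D.image Subtype.val : Finset L) : Set L) := by
      rw [Finset.coe_image]
      exact hD.2.image_of_map_rel (· ≤ ·) (· ≤ ·) (Subtype.val) (fun a b h => h)
    have hsub : ((D.image Subtype.val : Finset L) : Set L) ⊆ s := by
      intro z hz
      simp only [Finset.coe_image, Set.mem_image] at hz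
      obtain ⟨a, _, rfl⟩ := hz
      exact a.2
    have := le_mcc hch hsub
    rwa [Finset.card_image_of_injective _ Subtype.val_injective] at this
  · obtain ⟨C, h1, h2, h3⟩ := mcc_exists s
    rw [← h3]
    set D : Finset s := C.attach.map
      ⟨fun a => (⟨a.1, h2 (Finset.mem_coe.2 a.2)⟩ : s),
       fun a b hab => Subtype.ext (congrArg Subtype.val hab : (a:L) = b)⟩ with hD
    have hcard : D.card = C.card := by rw [hD, Finset.card_map, Finset.card_attach]
    have hch : IsChain (· ≤ ·) (D : Set s) := by
      intro u hu v hv huv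
      rw [Finset.mem_coe, hD, Finset.mem_map] at hu hv
      obtain ⟨⟨a, ha⟩, -, rfl⟩ := hu
      obtain ⟨⟨b, hb⟩, -, rfl⟩ := hv
      simp only [Function.Embedding.coeFn_mk]
      have hab : a ≠ b := fun h => huv (by subst h; rfl)
      rcases h1 (Finset.mem_coe.2 ha) (Finset.mem_coe.2 hb) hab with h | h
      · exact Or.inl h
      · exact Or.inr h
    rw [← hcard]
    apply Finset.le_sup
    simp only [Finset.mem_filter, Finset.mem_powerset]
    exact ⟨Finset.subset_univ _, hch⟩

theorem strictMono_image_card {k : ℕ} {f : Fin k → L} (hf : StrictMono f) :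
    (Finset.univ.image f).card = k := by
  rw [Finset.card_image_of_injective _ hf.injective, Finset.card_univ, Fintype.card_fin]

theorem strictMono_image_chain {k : ℕ} {f : Fin k → L} (hf : StrictMono f) :
    IsChain (· ≤ ·) ((Finset.univ.image f : Finset L) : Set L) := by
  intro u hu v hv _
  simp only [Finset.coe_image, Set.mem_image, Finset.mem_coe, Finset.mem_univ, true_and,
    Finset.coe_univ, Set.image_univ, Set.mem_range] at hu hv
  obtain ⟨i, rfl⟩ := hu
  obtain ⟨j, rfl⟩ := hv
  rcases le_total i j with h | h
  · exact Or.inl (hf.monotone h)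
  · exact Or.inr (hf.monotone h)

end C

section D
variable {L : Type*} [Fintype L] [Preorder L]

/-- join-irreducible: covers exactly one element -/
def JIp (a : L) : Prop := (Finset.univ.filter (fun y : L => y ⋖ a)).card = 1

/-- meet-irreducible: covered by exactly one element -/
def MIp (a : L) : Prop := (Finset.univ.filter (fun y : L => a ⋖ y)).card = 1

theorem numJoinIrred_eq : numJoinIrred L = (Finset.univ.filter (fun a : L => JIp a)).card := by
  unfold numJoinIrred JIp
  congr!

theorem numMeetIrred_eq : numMeetIrred L = (Finset.univ.filter (fun a : L => MIp a)).card := by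
  unfold numMeetIrred MIp
  congr!

theorem JIp_iff {a : L} : JIp a ↔ ∃ b, b ⋖ a ∧ ∀ c, c ⋖ a → c = b := by
  unfold JIp
  rw [Finset.card_eq_one]
  constructor
  · rintro ⟨b, hb⟩
    have hmem : b ∈ Finset.univ.filter (fun y : L => y ⋖ a) := hb ▸ Finset.mem_singleton_self b
    refine ⟨b, (Finset.mem_filter.1 hmem).2, fun c hc => ?_⟩
    have : c ∈ ({b} : Finset L) := hb ▸ Finset.mem_filter.2 ⟨Finset.mem_univ c, hc⟩
    exact Finset.mem_singleton.1 this
  · rintro ⟨b, hb, hu⟩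
    refine ⟨b, Finset.ext fun c => ?_⟩
    simp only [Finset.mem_filter, Finset.mem_univ, true_and, Finset.mem_singleton]
    exact ⟨fun h => hu c h, fun h => h ▸ hb⟩

theorem MIp_iff {a : L} : MIp a ↔ ∃ b, a ⋖ b ∧ ∀ c, a ⋖ c → c = b := by
  unfold MIp
  rw [Finset.card_eq_one]
  constructor
  · rintro ⟨b, hb⟩
    have hmem : b ∈ Finset.univ.filter (fun y : L => a ⋖ y) := hb ▸ Finset.mem_singleton_self b
    refine ⟨b, (Finset.mem_filter.1 hmem).2, fun c hc => ?_⟩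
    have : c ∈ ({b} : Finset L) := hb ▸ Finset.mem_filter.2 ⟨Finset.mem_univ c, hc⟩
    exact Finset.mem_singleton.1 this
  · rintro ⟨b, hb, hu⟩
    refine ⟨b, Finset.ext fun c => ?_⟩
    simp only [Finset.mem_filter, Finset.mem_univ, true_and, Finset.mem_singleton]
    exact ⟨fun h => hu c h, fun h => h ▸ hb⟩

end D

section E
variable {L : Type*} [Fintype L] [Lattice L]

theorem exists_JIp [OrderBot L] {a b : L} (h : b < a) :
    ∃ j : L, JIp j ∧ j ≤ a ∧ ¬ j ≤ b := by
  have hne : (Finset.univ.filter (fun t : L => t ≤ a ∧ ¬ t ≤ b)).Nonempty :=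
    ⟨a, Finset.mem_filter.2 ⟨Finset.mem_univ a, le_rfl, h.not_ge⟩⟩
  obtain ⟨j, hj, hjmin⟩ := fexmin_old _ hne
  rw [Finset.mem_filter] at hj
  obtain ⟨-, hja, hjb⟩ := hj
  have hlow : ∀ t, t < j → t ≤ b := by
    intro t ht
    by_contra htb
    exact hjmin t (Finset.mem_filter.2 ⟨Finset.mem_univ t, ht.le.trans hja, htb⟩) ht
  have hjbot : j ≠ ⊥ := fun h' => hjb (h' ▸ bot_le)
  obtain ⟨c, hc, hcmax⟩ := fexmax_old (Finset.univ.filter (fun t : L => t < j))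
    ⟨⊥, Finset.mem_filter.2 ⟨Finset.mem_univ _, bot_lt_iff_ne_bot.2 hjbot⟩⟩
  rw [Finset.mem_filter] at hc
  have hcov : c ⋖ j := ⟨hc.2, fun z h1 h2 =>
    hcmax z (Finset.mem_filter.2 ⟨Finset.mem_univ z, h2⟩) h1⟩
  have huniq : ∀ d, d ⋖ j → d = c := by
    intro d hd
    by_contra hdc
    have hdb : d ≤ b := hlow d hd.1
    have hcb : c ≤ b := hlow c hc.2
    have h1 : c ⊔ d ≤ j := sup_le hcov.1.le hd.1.le
    have h2 : c < c ⊔ d := by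
      rcases lt_or_eq_of_le (le_sup_left : c ≤ c ⊔ d) with h' | h'
      · exact h'
      · exfalso
        have hdc' : d ≤ c := le_sup_right.trans h'.symm.le
        rcases lt_or_eq_of_le hdc' with h'' | h''
        · exact hd.2 h'' hc.2
        · exact hdc h''
    have h3 : c ⊔ d = j := by
      rcases lt_or_eq_of_le h1 with h' | h'
      · exact absurd h' (hcov.2 h2)
      · exact h'
    exact hjb (h3 ▸ sup_le hcb hdb)
  refine ⟨j, JIp_iff.2 ⟨c, hcov, huniq⟩, hja, hjb⟩

theorem exists_MIp [OrderTop L] {a b : L} (h : b < a) :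
    ∃ m : L, MIp m ∧ b ≤ m ∧ ¬ a ≤ m := by
  have hne : (Finset.univ.filter (fun t : L => b ≤ t ∧ ¬ a ≤ t)).Nonempty :=
    ⟨b, Finset.mem_filter.2 ⟨Finset.mem_univ b, le_rfl, h.not_ge⟩⟩
  obtain ⟨m, hm, hmmax⟩ := fexmax_old _ hne
  rw [Finset.mem_filter] at hm
  obtain ⟨-, hbm, ham⟩ := hm
  have hhigh : ∀ t, m < t → a ≤ t := by
    intro t ht
    by_contra hta
    exact hmmax t (Finset.mem_filter.2 ⟨Finset.mem_univ t, hbm.trans ht.le, hta⟩) ht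
  have hmtop : m ≠ ⊤ := fun h' => ham (h' ▸ le_top)
  obtain ⟨c, hc, hcmin⟩ := fexmin_old (Finset.univ.filter (fun t : L => m < t))
    ⟨⊤, Finset.mem_filter.2 ⟨Finset.mem_univ _, lt_top_iff_ne_top.2 hmtop⟩⟩
  rw [Finset.mem_filter] at hc
  have hcov : m ⋖ c := ⟨hc.2, fun z h1 h2 =>
    hcmin z (Finset.mem_filter.2 ⟨Finset.mem_univ z, h1⟩) h2⟩
  have huniq : ∀ d, m ⋖ d → d = c := by
    intro d hd
    by_contra hdc
    have hda : a ≤ d := hhigh d hd.1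
    have hca : a ≤ c := hhigh c hc.2
    have h1 : m ≤ c ⊓ d := le_inf hcov.1.le hd.1.le
    have h2 : c ⊓ d < c := by
      rcases lt_or_eq_of_le (inf_le_left : c ⊓ d ≤ c) with h' | h'
      · exact h'
      · exfalso
        have hcd' : c ≤ d := h'.symm.le.trans inf_le_right
        rcases lt_or_eq_of_le hcd' with h'' | h''
        · exact hd.2 hc.2 h''
        · exact hdc h''.symm
    have h3 : m = c ⊓ d := by
      rcases lt_or_eq_of_le h1 with h' | h'
      · exact absurd h2 (hcov.2 h')
      · exact h'
    exact ham (h3 ▸ le_inf hca hda)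
  refine ⟨m, MIp_iff.2 ⟨c, hcov, huniq⟩, hbm, ham⟩

end E

section F
variable {L : Type*} [Fintype L] [Lattice L]

theorem chain_card_le_JI [OrderBot L] {x : L} {C : Finset L}
    (hch : IsChain (· ≤ ·) (C : Set L)) (hsub : ∀ c ∈ C, c ≤ x) :
    C.card ≤ (Finset.univ.filter (fun j : L => JIp j ∧ j ≤ x)).card + 1 := by
  rcases hk : C.card with _ | k
  · omega
  obtain ⟨f, hf1, hf2, hf3⟩ := chain_enum (k+1) C hk hch
  have hstep : ∀ i : Fin k, f i.castSucc < f i.succ := fun i => hf1 ((Fin.castSucc_lt_succ (i := i)))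
  have h : ∀ i : Fin k, ∃ jj : L, JIp jj ∧ jj ≤ f i.succ ∧ ¬ jj ≤ f i.castSucc :=
    fun i => exists_JIp (hstep i)
  choose j hj1 hj2 hj3 using h
  have hcard : k ≤ (Finset.univ.filter (fun j : L => JIp j ∧ j ≤ x)).card := by
    have := Finset.card_le_card_of_injOn (s := (Finset.univ : Finset (Fin k)))
      (t := Finset.univ.filter (fun j : L => JIp j ∧ j ≤ x)) j
      (fun i _ => Finset.mem_filter.2 ⟨Finset.mem_univ _, hj1 i, (hj2 i).trans (hsub _ (hf2 _))⟩)
      (fun i _ i' _ hii => by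
        by_contra hne
        rcases lt_or_gt_of_ne hne with hlt | hlt
        · have : j i ≤ f i'.castSucc := (hj2 i).trans (hf1.monotone
            (by have hv : (_ : ℕ) < _ := hlt; rw [Fin.le_def]; simp only [Fin.val_succ, Fin.coe_castSucc]; omega))
          exact hj3 i' (hii ▸ this)
        · have : j i' ≤ f i.castSucc := (hj2 i').trans (hf1.monotone
            (by have hv : (_ : ℕ) < _ := hlt; rw [Fin.le_def]; simp only [Fin.val_succ, Fin.coe_castSucc]; omega))
          exact hj3 i (hii ▸ this))
    simpa using this
  omega

theorem chain_card_le_MI [OrderTop L] {y : L} {C : Finset L}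
    (hch : IsChain (· ≤ ·) (C : Set L)) (hsub : ∀ c ∈ C, y ≤ c) :
    C.card ≤ (Finset.univ.filter (fun m : L => MIp m ∧ y ≤ m)).card + 1 := by
  rcases hk : C.card with _ | k
  · omega
  obtain ⟨f, hf1, hf2, hf3⟩ := chain_enum (k+1) C hk hch
  have hstep : ∀ i : Fin k, f i.castSucc < f i.succ := fun i => hf1 ((Fin.castSucc_lt_succ (i := i)))
  have h : ∀ i : Fin k, ∃ mm : L, MIp mm ∧ f i.castSucc ≤ mm ∧ ¬ f i.succ ≤ mm :=
    fun i => exists_MIp (hstep i)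
  choose m hm1 hm2 hm3 using h
  have hcard : k ≤ (Finset.univ.filter (fun m : L => MIp m ∧ y ≤ m)).card := by
    have := Finset.card_le_card_of_injOn (s := (Finset.univ : Finset (Fin k)))
      (t := Finset.univ.filter (fun m : L => MIp m ∧ y ≤ m)) m
      (fun i _ => Finset.mem_filter.2 ⟨Finset.mem_univ _, hm1 i,
        (hsub _ (hf2 i.castSucc)).trans (hm2 i)⟩)
      (fun i _ i' _ hii => by
        by_contra hne
        rcases lt_or_gt_of_ne hne with hlt | hlt
        · have : f i.succ ≤ m i' := (hf1.monotone
            (by have hv : (_ : ℕ) < _ := hlt; rw [Fin.le_def]; simp only [Fin.val_succ, Fin.coe_castSucc]; omega)).trans (hm2 i')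
          exact hm3 i (hii ▸ this)
        · have : f i'.succ ≤ m i := (hf1.monotone
            (by have hv : (_ : ℕ) < _ := hlt; rw [Fin.le_def]; simp only [Fin.val_succ, Fin.coe_castSucc]; omega)).trans (hm2 i)
          exact hm3 i' (hii ▸ this))
    simpa using this
  omega

end F

section G
variable {L : Type*} [Fintype L] [PartialOrder L]

theorem mono_image_card [DecidableEq L] {N : ℕ} {g : Fin (N+1) → L} (hg : Monotone g) (W : Finset (Fin N))
    (hW : ∀ k ∈ W, g k.castSucc < g k.succ) : W.card + 1 ≤ (Finset.univ.image g).card := by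
  have h0 : ∀ k ∈ W, g 0 < g k.succ := fun k hk =>
    lt_of_le_of_lt (hg (Fin.zero_le _)) (hW k hk)
  have hinj : Set.InjOn (fun k : Fin N => g k.succ) W := by
    intro k hk k' hk' hkk0
    have hkk : g k.succ = g k'.succ := hkk0
    by_contra hne
    rcases lt_or_gt_of_ne hne with hlt | hlt
    · have h1 : g k.succ ≤ g k'.castSucc := hg
        (by have hv : (_ : ℕ) < _ := hlt; rw [Fin.le_def]; simp only [Fin.val_succ, Fin.coe_castSucc]; omega)
      exact absurd (hkk ▸ (h1.trans_lt (hW k' hk'))) (lt_irrefl _)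
    · have h1 : g k'.succ ≤ g k.castSucc := hg
        (by have hv : (_ : ℕ) < _ := hlt; rw [Fin.le_def]; simp only [Fin.val_succ, Fin.coe_castSucc]; omega)
      exact absurd (hkk.symm ▸ (h1.trans_lt (hW k hk))) (lt_irrefl _)
  have hnotmem : g 0 ∉ W.image (fun k => g k.succ) := by
    rw [Finset.mem_image]
    rintro ⟨k, hk, hgk⟩
    exact absurd (hgk ▸ h0 k hk) (lt_irrefl _)
  have hsub : insert (g 0) (W.image (fun k => g k.succ)) ⊆ Finset.univ.image g := by
    intro z hz
    rcases Finset.mem_insert.1 hz with rfl | hz'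
    · exact Finset.mem_image.2 ⟨0, Finset.mem_univ _, rfl⟩
    · obtain ⟨k, _, rfl⟩ := Finset.mem_image.1 hz'
      exact Finset.mem_image.2 ⟨k.succ, Finset.mem_univ _, rfl⟩
  have := Finset.card_le_card hsub
  rw [Finset.card_insert_of_notMem hnotmem, Finset.card_image_of_injOn hinj] at this
  omega

theorem partition_singletons {n : ℕ} (A : Fin n → Finset L) (U : Finset L)
    (hsub : ∀ i, A i ⊆ U) (hne : ∀ i, (A i).Nonempty)
    (hdisj : ∀ i j, i ≠ j → Disjoint (A i) (A j)) (hU : U.card = n) :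
    ∃ j : Fin n → L, (∀ i, A i = {j i}) ∧ (∀ a ∈ U, ∃ i, j i = a) := by
  have hdisj' : ∀ i ∈ (Finset.univ : Finset (Fin n)), ∀ j ∈ Finset.univ, i ≠ j →
      Disjoint (A i) (A j) := fun i _ j _ h => hdisj i j h
  have hBsub : Finset.univ.biUnion A ⊆ U := by
    intro a ha
    obtain ⟨i, _, hi⟩ := Finset.mem_biUnion.1 ha
    exact hsub i hi
  have hsum : ∑ i : Fin n, (A i).card = (Finset.univ.biUnion A).card :=
    (Finset.card_biUnion hdisj').symm
  have hsumle : ∑ i : Fin n, (A i).card ≤ n := by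
    have := Finset.card_le_card hBsub
    omega
  have hone : ∀ i, (A i).card = 1 := by
    intro i
    by_contra hne1
    have h2 : 2 ≤ (A i).card := by
      have := (hne i).card_pos
      omega
    have hlt : ∑ _i : Fin n, 1 < ∑ i : Fin n, (A i).card := by
      apply Finset.sum_lt_sum (fun j _ => (hne j).card_pos)
      exact ⟨i, Finset.mem_univ i, by omega⟩
    simp only [Finset.sum_const, Finset.card_univ, Fintype.card_fin, smul_eq_mul, mul_one] at hlt
    omega
  have hBeq : Finset.univ.biUnion A = U := by
    apply Finset.eq_of_subset_of_card_le hBsub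
    rw [← hsum, hU]
    simp [hone]
  choose j hj using fun i => Finset.card_eq_one.1 (hone i)
  refine ⟨j, hj, fun a ha => ?_⟩
  rw [← hBeq] at ha
  obtain ⟨i, _, hi⟩ := Finset.mem_biUnion.1 ha
  rw [hj i, Finset.mem_singleton] at hi
  exact ⟨i, hi.symm⟩

theorem chain_maximal_criterion {M : Type*} [Fintype M] [PartialOrder M] [BoundedOrder M]
    {D : Finset M} (hch : IsChain (· ≤ ·) (D : Set M)) (hbot : (⊥ : M) ∈ D)
    (hcov : ∀ a ∈ D, a ≠ ⊤ → ∃ b ∈ D, a ⋖ b) :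
    ∀ E : Finset M, IsChain (· ≤ ·) (E : Set M) → D ⊆ E → E = D := by
  have htop : (⊤ : M) ∈ D := by
    obtain ⟨g, hg, hgmax⟩ := fexmax_old D ⟨⊥, hbot⟩
    rcases eq_or_ne g ⊤ with rfl | hne
    · exact hg
    · obtain ⟨b, hb, hgb⟩ := hcov g hg hne
      exact absurd hgb.1 (hgmax b hb)
  intro E hE hDE
  apply Finset.Subset.antisymm _ hDE
  intro e he
  by_contra heD
  have hcomp : ∀ d ∈ D, d ≤ e ∨ e ≤ d := by
    intro d hd
    have hde : d ≠ e := fun h => heD (h ▸ hd)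
    rcases hE (Finset.mem_coe.2 (hDE hd)) (Finset.mem_coe.2 he) hde with h | h
    · exact Or.inl h
    · exact Or.inr h
  obtain ⟨d, hd, hdmax⟩ := fexmax_old (D.filter (· ≤ e))
    ⟨⊥, Finset.mem_filter.2 ⟨hbot, bot_le⟩⟩
  rw [Finset.mem_filter] at hd
  obtain ⟨hdD, hde⟩ := hd
  have hdne : d ≠ e := fun h => heD (h ▸ hdD)
  rcases eq_or_ne d ⊤ with rfl | hdtop
  · exact hdne (le_antisymm hde le_top)
  obtain ⟨b, hbD, hdb⟩ := hcov d hdD hdtop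
  rcases hcomp b hbD with h | h
  · exact hdmax b (Finset.mem_filter.2 ⟨hbD, h⟩) hdb.1
  · have heb : e < b := lt_of_le_of_ne h (fun h' => heD (h' ▸ hbD))
    exact hdb.2 (lt_of_le_of_ne hde hdne) heb

end G

section H
variable {L : Type*} [Fintype L] [Lattice L] [BoundedOrder L] {x : L}
  [Fintype (Set.Icc (⊥ : L) x)]

theorem covBy_Icc_iff {a b : Set.Icc (⊥ : L) x} : a ⋖ b ↔ (a : L) ⋖ (b : L) := by
  constructor
  · rintro ⟨h1, h2⟩
    refine ⟨by exact_mod_cast h1, fun z hz1 hz2 => ?_⟩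
    have hzmem : z ∈ Set.Icc (⊥ : L) x := ⟨bot_le, hz2.le.trans b.2.2⟩
    exact h2 (show a < ⟨z, hzmem⟩ by exact_mod_cast hz1)
      (show (⟨z, hzmem⟩ : Set.Icc (⊥ : L) x) < b by exact_mod_cast hz2)
  · rintro ⟨h1, h2⟩
    refine ⟨by exact_mod_cast h1, fun z hz1 hz2 => ?_⟩
    exact h2 (show (a : L) < (z : L) by exact_mod_cast hz1)
      (show (z : L) < (b : L) by exact_mod_cast hz2)

theorem JIp_Icc_iff {a : Set.Icc (⊥ : L) x} : JIp a ↔ JIp (a : L) := by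
  unfold JIp
  have : (Finset.univ.filter (fun y : Set.Icc (⊥ : L) x => y ⋖ a)).card =
      (Finset.univ.filter (fun y : L => y ⋖ (a : L))).card := by
    apply Finset.card_bij (fun (y : Set.Icc (⊥ : L) x) _ => (y : L))
    · intro y hy
      simp only [Finset.mem_filter, Finset.mem_univ, true_and] at hy ⊢
      exact covBy_Icc_iff.1 hy
    · intro y _ y' _ h
      exact Subtype.ext h
    · intro y hy
      simp only [Finset.mem_filter, Finset.mem_univ, true_and] at hy
      have hymem : y ∈ Set.Icc (⊥ : L) x := ⟨bot_le, hy.1.le.trans a.2.2⟩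
      refine ⟨⟨y, hymem⟩, ?_, rfl⟩
      simp only [Finset.mem_filter, Finset.mem_univ, true_and]
      exact covBy_Icc_iff.2 hy
  rw [this]

theorem numJoinIrred_Icc : numJoinIrred (Set.Icc (⊥ : L) x) =
    (Finset.univ.filter (fun a : L => JIp a ∧ a ≤ x)).card := by
  rw [numJoinIrred_eq]
  apply Finset.card_bij (fun (a : Set.Icc (⊥ : L) x) _ => (a : L))
  · intro a ha
    simp only [Finset.mem_filter, Finset.mem_univ, true_and] at ha ⊢
    exact ⟨JIp_Icc_iff.1 ha, a.2.2⟩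
  · intro a _ a' _ h
    exact Subtype.ext h
  · intro a ha
    simp only [Finset.mem_filter, Finset.mem_univ, true_and] at ha
    refine ⟨⟨a, ⟨bot_le, ha.2⟩⟩, ?_, rfl⟩
    simp only [Finset.mem_filter, Finset.mem_univ, true_and]
    exact JIp_Icc_iff.2 ha.1

theorem MIp_Icc_card {a : Set.Icc (⊥ : L) x} :
    (Finset.univ.filter (fun y : Set.Icc (⊥ : L) x => a ⋖ y)).card =
    (Finset.univ.filter (fun y : L => (a : L) ⋖ y ∧ y ≤ x)).card := by
  apply Finset.card_bij (fun (y : Set.Icc (⊥ : L) x) _ => (y : L))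
  · intro y hy
    simp only [Finset.mem_filter, Finset.mem_univ, true_and] at hy ⊢
    exact ⟨covBy_Icc_iff.1 hy, y.2.2⟩
  · intro y _ y' _ h
    exact Subtype.ext h
  · intro y hy
    simp only [Finset.mem_filter, Finset.mem_univ, true_and] at hy
    refine ⟨⟨y, ⟨bot_le, hy.2⟩⟩, ?_, rfl⟩
    simp only [Finset.mem_filter, Finset.mem_univ, true_and]
    exact covBy_Icc_iff.2 hy.1

theorem leftModular_Icc {w : L} (hw : IsLeftModular w) :
    IsLeftModular (⟨w ⊓ x, ⟨bot_le, inf_le_right⟩⟩ : Set.Icc (⊥ : L) x) := by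
  intro y z hyz
  apply Subtype.ext
  show ((y : L) ⊔ (w ⊓ x)) ⊓ (z : L) = (y : L) ⊔ ((w ⊓ x) ⊓ (z : L))
  have hyz' : (y : L) ≤ (z : L) := hyz
  apply le_antisymm
  · have h1 : ((y : L) ⊔ (w ⊓ x)) ⊓ (z : L) ≤ ((y : L) ⊔ w) ⊓ (z : L) :=
      inf_le_inf_right _ (sup_le_sup_left inf_le_left _)
    rw [hw _ _ hyz'] at h1
    refine h1.trans (sup_le_sup_left ?_ _)
    exact le_inf (le_inf inf_le_left (inf_le_right.trans z.2.2)) inf_le_right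
  · exact sup_le (le_inf le_sup_left hyz')
      (le_inf (inf_le_left.trans le_sup_right) inf_le_right)

theorem covBy_inf_of_leftModular {w w' : L} (hw : IsLeftModular w) (hcov : w ⋖ w') :
    w ⊓ x = w' ⊓ x ∨ (w ⊓ x) ⋖ (w' ⊓ x) := by
  have hle : w ⊓ x ≤ w' ⊓ x := inf_le_inf_right _ hcov.1.le
  rcases eq_or_lt_of_le hle with h | h
  · exact Or.inl h
  refine Or.inr ⟨h, fun t ht1 ht2 => ?_⟩
  have htx : t ≤ x := ht2.le.trans inf_le_right
  have htw : ¬ t ≤ w := fun h' => absurd (le_inf h' htx) ht1.not_ge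
  have htw' : t ≤ w' := ht2.le.trans inf_le_left
  have hsup : t ⊔ w = w' := by
    rcases eq_or_lt_of_le (sup_le htw' hcov.1.le : t ⊔ w ≤ w') with h' | h'
    · exact h'
    · exfalso
      have : w < t ⊔ w := lt_of_le_of_ne le_sup_right
        (fun h'' => htw (le_sup_left.trans h''.symm.le))
      exact hcov.2 this h'
  have := hw t (w' ⊓ x) (le_inf htw' htx)
  rw [hsup] at this
  have hinf : w ⊓ (w' ⊓ x) = w ⊓ x := by
    rw [← inf_assoc, inf_eq_left.2 hcov.1.le]
  rw [hinf] at this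
  have hl : w' ⊓ (w' ⊓ x) = w' ⊓ x := by rw [← inf_assoc, inf_idem]
  rw [hl] at this
  have heq : w' ⊓ x = t := by rw [this]; exact sup_eq_left.2 ht1.le
  exact absurd (heq ▸ ht2) (lt_irrefl _)
end H

section I
variable {L : Type*} [Fintype L] [PartialOrder L]

theorem exists_covBy_le {a b : L} (h : a < b) : ∃ s, a ⋖ s ∧ s ≤ b := by
  obtain ⟨s, hs, hsmin⟩ := fexmin_old
    (Finset.univ.filter (fun t : L => a < t ∧ t ≤ b))
    ⟨b, Finset.mem_filter.2 ⟨Finset.mem_univ _, h, le_rfl⟩⟩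
  rw [Finset.mem_filter] at hs
  refine ⟨s, ⟨hs.2.1, fun z hz1 hz2 => ?_⟩, hs.2.2⟩
  exact hsmin z (Finset.mem_filter.2 ⟨Finset.mem_univ _, hz1, hz2.le.trans hs.2.2⟩) hz2

theorem subtype_chain_of_chain {s : Set L} [Fintype s] {C : Finset L}
    (h1 : IsChain (· ≤ ·) (C : Set L)) (h2 : ↑C ⊆ s) :
    ∃ D : Finset s, IsChain (· ≤ ·) (D : Set s) ∧ D.card = C.card ∧
      ∀ a : s, (a : L) ∈ C → a ∈ D := by
  set D : Finset s := C.attach.map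
    ⟨fun a => (⟨a.1, h2 (Finset.mem_coe.2 a.2)⟩ : s),
     fun a b hab => Subtype.ext (congrArg Subtype.val hab : (a : L) = b)⟩ with hD
  refine ⟨D, ?_, by rw [hD, Finset.card_map, Finset.card_attach], ?_⟩
  · intro u hu v hv huv
    rw [Finset.mem_coe, hD, Finset.mem_map] at hu hv
    obtain ⟨⟨a, ha⟩, -, rfl⟩ := hu
    obtain ⟨⟨b, hb⟩, -, rfl⟩ := hv
    simp only [Function.Embedding.coeFn_mk]
    have hab : a ≠ b := fun h => huv (by subst h; rfl)
    rcases h1 (Finset.mem_coe.2 ha) (Finset.mem_coe.2 hb) hab with h | h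
    · exact Or.inl h
    · exact Or.inr h
  · intro a ha
    rw [hD, Finset.mem_map]
    exact ⟨⟨(a : L), ha⟩, Finset.mem_attach _ _, Subtype.ext rfl⟩

theorem chain_of_subtype_chain {s : Set L} [Fintype s] {D : Finset s}
    (h : IsChain (· ≤ ·) (D : Set s)) :
    IsChain (· ≤ ·) ((D.image Subtype.val : Finset L) : Set L) ∧
      (D.image Subtype.val).card = D.card ∧
      ((D.image Subtype.val : Finset L) : Set L) ⊆ s := by
  refine ⟨?_, Finset.card_image_of_injective _ Subtype.val_injective, ?_⟩
  · rw [Finset.coe_image]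
    exact h.image_of_map_rel (· ≤ ·) (· ≤ ·) Subtype.val (fun a b h => h)
  · intro z hz
    simp only [Finset.coe_image, Set.mem_image] at hz
    obtain ⟨a, _, rfl⟩ := hz
    exact a.2

end I

section J
variable {L : Type*} [Fintype L] [PartialOrder L]

theorem monotone_image_chain [DecidableEq L] {k : ℕ} {f : Fin k → L} (hf : Monotone f) :
    IsChain (· ≤ ·) ((Finset.univ.image f : Finset L) : Set L) := by
  intro u hu v hv _
  simp only [Finset.coe_image, Finset.coe_univ, Set.image_univ, Set.mem_range] at hu hv
  obtain ⟨i, rfl⟩ := hu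
  obtain ⟨i', rfl⟩ := hv
  rcases le_total i i' with h | h
  · exact Or.inl (hf h)
  · exact Or.inr (hf h)

end J

theorem mem_spineF {M : Type*} [Fintype M] [Preorder M] {a : M} :
    a ∈ spineF M ↔ ∃ C : Finset M, IsChain (· ≤ ·) (C : Set M) ∧
      C.card = maxChainCard M ∧ a ∈ C := by
  unfold spineF
  rw [Finset.mem_filter]
  simp only [Finset.mem_univ, true_and]

/-- If `L` is a finite trim lattice and `x ∈ spine(L)`, then the
interval `[⊥, x]` of `L` is a trim lattice whose spine is `spine(L) ∩ [⊥, x]`. -/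
theorem stmt_11 {L : Type*} [Fintype L] [Lattice L] [BoundedOrder L]
    (hL : IsTrim L) (x : L) (hx : x ∈ spineF L) :
    IsTrim (Set.Icc (⊥ : L) x) ∧
      Subtype.val '' ((spineF (Set.Icc (⊥ : L) x) : Finset (Set.Icc (⊥ : L) x)) : Set (Set.Icc (⊥ : L) x)) =
        (spineF L : Set L) ∩ Set.Icc (⊥ : L) x := by
  haveI : Fact ((⊥ : L) ≤ x) := ⟨bot_le⟩
  obtain ⟨⟨hJ, hM⟩, Clm, hClm_chain, hClm_max, hClm_lm⟩ := hL
  rw [mem_spineF] at hx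
  obtain ⟨Cx, hCx_chain, hCx_card, hx_mem⟩ := hx
  have hN1 : 1 ≤ maxChainCard L := by
    have h1 : ({⊥} : Finset L).card ≤ maxChainCard L := le_maxChainCard (by
      rw [Finset.coe_singleton]
      intro a ha b hb hne
      exact absurd ((Set.mem_singleton_iff.1 ha).trans (Set.mem_singleton_iff.1 hb).symm) hne)
    simpa using h1
  set n : ℕ := maxChainCard L - 1 with hn
  have hNn : maxChainCard L = n + 1 := by omega
  have hCxcard : Cx.card = n + 1 := by rw [hCx_card, hNn]
  obtain ⟨c, hc_mono, hc_mem, hc_surj⟩ := chain_enum (n+1) Cx hCxcard hCx_chain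
  have hCx_mcc : Cx.card = mcc (Set.univ : Set L) := by rw [hCx_card, maxChainCard_eq_mcc]
  have hc0 : c 0 = ⊥ := by
    obtain ⟨i, hi⟩ := hc_surj ⊥ (by
      refine mem_of_attains_mcc hCx_chain (Set.subset_univ _) hCx_mcc (Set.mem_univ _) ?_
      exact fun cc _ => Or.inl bot_le)
    exact le_bot_iff.1 (hi ▸ hc_mono.monotone (Fin.zero_le i))
  have hclast : c (Fin.last n) = ⊤ := by
    obtain ⟨i, hi⟩ := hc_surj ⊤ (by
      refine mem_of_attains_mcc hCx_chain (Set.subset_univ _) hCx_mcc (Set.mem_univ _) ?_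
      exact fun cc _ => Or.inr le_top)
    exact top_le_iff.1 (hi ▸ hc_mono.monotone (Fin.le_last i))
  have hcov : ∀ i : Fin n, c i.castSucc ⋖ c i.succ := by
    intro i
    refine covBy_of_attains_mcc hCx_chain (Set.subset_univ _) hCx_mcc
      (fun _ _ _ _ z _ _ => Set.mem_univ z) (hc_mem _) (hc_mem _)
      (hc_mono ((Fin.castSucc_lt_succ (i := i)))) ?_
    rintro e he ⟨h1, h2⟩
    obtain ⟨k, rfl⟩ := hc_surj e he
    have hk1 : i.castSucc < k := hc_mono.lt_iff_lt.1 h1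
    have hk2 : k < i.succ := hc_mono.lt_iff_lt.1 h2
    rw [Fin.lt_def] at hk1 hk2
    simp only [Fin.coe_castSucc, Fin.val_succ] at hk1 hk2
    omega
  have hJn : (Finset.univ.filter (fun a : L => JIp a)).card = n := by
    rw [← numJoinIrred_eq, ← hJ]
  have hMn : (Finset.univ.filter (fun a : L => MIp a)).card = n := by
    rw [← numMeetIrred_eq, ← hM]
  have hsucc_le : ∀ {i i' : Fin n}, i < i' → c i.succ ≤ c i'.castSucc := by
    intro i i' h
    apply hc_mono.monotone
    rw [Fin.le_def]
    have hvv : (i : ℕ) < (i' : ℕ) := h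
    simp only [Fin.val_succ, Fin.coe_castSucc]
    omega
  obtain ⟨j, hj_single, hj_surj⟩ := partition_singletons
    (fun i : Fin n => Finset.univ.filter
      (fun a : L => JIp a ∧ a ≤ c i.succ ∧ ¬ a ≤ c i.castSucc))
    (Finset.univ.filter (fun a : L => JIp a))
    (fun i => by
      intro a ha
      rw [Finset.mem_filter] at ha ⊢
      exact ⟨ha.1, ha.2.1⟩)
    (fun i => by
      obtain ⟨jj, h1, h2, h3⟩ := exists_JIp (hc_mono ((Fin.castSucc_lt_succ (i := i))))
      exact ⟨jj, Finset.mem_filter.2 ⟨Finset.mem_univ _, h1, h2, h3⟩⟩)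
    (fun i i' hne => by
      rw [Finset.disjoint_left]
      intro a ha ha'
      rw [Finset.mem_filter] at ha ha'
      rcases lt_or_gt_of_ne hne with h | h
      · exact ha'.2.2.2 (ha.2.2.1.trans (hsucc_le h))
      · exact ha.2.2.2 (ha'.2.2.1.trans (hsucc_le h)))
    hJn
  have hj_mem : ∀ i, JIp (j i) ∧ j i ≤ c i.succ ∧ ¬ j i ≤ c i.castSucc := by
    intro i
    have h1 : j i ∈ Finset.univ.filter
        (fun a : L => JIp a ∧ a ≤ c i.succ ∧ ¬ a ≤ c i.castSucc) :=
      (hj_single i) ▸ Finset.mem_singleton_self _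
    rw [Finset.mem_filter] at h1
    exact h1.2
  have hj_inj : ∀ i i', j i = j i' → i = i' := by
    intro i i' hii
    by_contra hne
    have h1 := hj_mem i
    have h2 := hj_mem i'
    rcases lt_or_gt_of_ne hne with h | h
    · exact h2.2.2 (hii ▸ (h1.2.1.trans (hsucc_le h)))
    · exact h1.2.2 ((hii ▸ h2.2.1).trans (hsucc_le h))
  obtain ⟨m, hm_single, hm_surj⟩ := partition_singletons
    (fun k : Fin n => Finset.univ.filter
      (fun a : L => MIp a ∧ c k.castSucc ≤ a ∧ ¬ c k.succ ≤ a))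
    (Finset.univ.filter (fun a : L => MIp a))
    (fun k => by
      intro a ha
      rw [Finset.mem_filter] at ha ⊢
      exact ⟨ha.1, ha.2.1⟩)
    (fun k => by
      obtain ⟨mm, h1, h2, h3⟩ := exists_MIp (hc_mono ((Fin.castSucc_lt_succ (i := k))))
      exact ⟨mm, Finset.mem_filter.2 ⟨Finset.mem_univ _, h1, h2, h3⟩⟩)
    (fun k k' hne => by
      rw [Finset.disjoint_left]
      intro a ha ha'
      rw [Finset.mem_filter] at ha ha'
      rcases lt_or_gt_of_ne hne with h | h
      · exact ha.2.2.2 ((hsucc_le h).trans ha'.2.2.1)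
      · exact ha'.2.2.2 ((hsucc_le h).trans ha.2.2.1))
    hMn
  have hm_mem : ∀ k, MIp (m k) ∧ c k.castSucc ≤ m k ∧ ¬ c k.succ ≤ m k := by
    intro k
    have h1 : m k ∈ Finset.univ.filter
        (fun a : L => MIp a ∧ c k.castSucc ≤ a ∧ ¬ c k.succ ≤ a) :=
      (hm_single k) ▸ Finset.mem_singleton_self _
    rw [Finset.mem_filter] at h1
    exact h1.2
  -- cardinality transfer between families and irreducibles
  have hSJcard : ∀ z : L, (Finset.univ.filter (fun i : Fin n => j i ≤ z)).card
      = (Finset.univ.filter (fun a : L => JIp a ∧ a ≤ z)).card := by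
    intro z
    apply Finset.card_bij (fun (i : Fin n) _ => j i)
    · intro i hi
      rw [Finset.mem_filter] at hi ⊢
      exact ⟨Finset.mem_univ _, (hj_mem i).1, hi.2⟩
    · intro i _ i' _ h
      exact hj_inj _ _ h
    · intro a ha
      rw [Finset.mem_filter] at ha
      obtain ⟨i, hi⟩ := hj_surj a (Finset.mem_filter.2 ⟨Finset.mem_univ _, ha.2.1⟩)
      exact ⟨i, Finset.mem_filter.2 ⟨Finset.mem_univ _, hi ▸ ha.2.2⟩, hi⟩
  have hm_inj : ∀ k k', m k = m k' → k = k' := by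
    intro k k' hkk
    by_contra hne
    have h1 := hm_mem k
    have h2 := hm_mem k'
    rcases lt_or_gt_of_ne hne with h | h
    · exact h1.2.2 ((hsucc_le h).trans (hkk ▸ h2.2.1))
    · exact h2.2.2 ((hsucc_le h).trans (hkk ▸ h1.2.1))
  have hTMcard : ∀ z : L, (Finset.univ.filter (fun k : Fin n => z ≤ m k)).card
      = (Finset.univ.filter (fun a : L => MIp a ∧ z ≤ a)).card := by
    intro z
    apply Finset.card_bij (fun (k : Fin n) _ => m k)
    · intro k hk
      rw [Finset.mem_filter] at hk ⊢
      exact ⟨Finset.mem_univ _, (hm_mem k).1, hk.2⟩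
    · intro k _ k' _ h
      exact hm_inj _ _ h
    · intro a ha
      rw [Finset.mem_filter] at ha
      obtain ⟨k, hk⟩ := hm_surj a (Finset.mem_filter.2 ⟨Finset.mem_univ _, ha.2.1⟩)
      exact ⟨k, Finset.mem_filter.2 ⟨Finset.mem_univ _, hk ▸ ha.2.2⟩, hk⟩
  -- fact1 : length of lower intervals
  have fact1 : ∀ z : L, mcc (Set.Icc (⊥ : L) z)
      = (Finset.univ.filter (fun i : Fin n => j i ≤ z)).card + 1 := by
    intro z
    apply le_antisymm
    · obtain ⟨C, hC1, hC2, hC3⟩ := mcc_exists (Set.Icc (⊥ : L) z)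
      rw [← hC3]
      have h1 := chain_card_le_JI hC1 (fun e he => (hC2 (Finset.mem_coe.2 he)).2)
      rw [← hSJcard z] at h1
      exact h1
    · have hgmono : Monotone (fun k : Fin (n+1) => c k ⊓ z) :=
        fun a b hab => inf_le_inf_right _ (hc_mono.monotone hab)
      have hsteps : ∀ i ∈ Finset.univ.filter (fun i : Fin n => j i ≤ z),
          (fun k : Fin (n+1) => c k ⊓ z) i.castSucc < (fun k : Fin (n+1) => c k ⊓ z) i.succ := by
        intro i hi
        rw [Finset.mem_filter] at hi
        have hji := hj_mem i
        have hle : c i.castSucc ⊓ z ≤ c i.succ ⊓ z :=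
          inf_le_inf_right _ (hc_mono ((Fin.castSucc_lt_succ (i := i)))).le
        rcases eq_or_lt_of_le hle with heq | hlt
        · exfalso
          have h2 : j i ≤ c i.castSucc ⊓ z := heq ▸ (le_inf hji.2.1 hi.2)
          exact hji.2.2 (h2.trans inf_le_left)
        · exact hlt
      have h1 := mono_image_card hgmono _ hsteps
      have h2 : ((Finset.univ.image (fun k : Fin (n+1) => c k ⊓ z) : Finset L) : Set L)
          ⊆ Set.Icc (⊥ : L) z := by
        intro t ht
        simp only [Finset.coe_image, Finset.coe_univ, Set.image_univ, Set.mem_range] at ht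
        obtain ⟨k, rfl⟩ := ht
        exact ⟨bot_le, inf_le_right⟩
      exact h1.trans (le_mcc (monotone_image_chain hgmono) h2)
  -- fact2 : length of upper intervals
  have fact2 : ∀ z : L, mcc (Set.Icc z (⊤ : L))
      = (Finset.univ.filter (fun k : Fin n => z ≤ m k)).card + 1 := by
    intro z
    apply le_antisymm
    · obtain ⟨C, hC1, hC2, hC3⟩ := mcc_exists (Set.Icc z (⊤ : L))
      rw [← hC3]
      have h1 := chain_card_le_MI hC1 (fun e he => (hC2 (Finset.mem_coe.2 he)).1)
      rw [← hTMcard z] at h1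
      exact h1
    · have hgmono : Monotone (fun k : Fin (n+1) => c k ⊔ z) :=
        fun a b hab => sup_le_sup_right (hc_mono.monotone hab) _
      have hsteps : ∀ k ∈ Finset.univ.filter (fun k : Fin n => z ≤ m k),
          (fun k : Fin (n+1) => c k ⊔ z) k.castSucc < (fun k : Fin (n+1) => c k ⊔ z) k.succ := by
        intro k hk
        rw [Finset.mem_filter] at hk
        have hmk := hm_mem k
        have hle : c k.castSucc ⊔ z ≤ c k.succ ⊔ z :=
          sup_le_sup_right (hc_mono ((Fin.castSucc_lt_succ (i := k)))).le _
        rcases eq_or_lt_of_le hle with heq | hlt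
        · exfalso
          have h2 : c k.succ ≤ c k.castSucc ⊔ z := heq ▸ le_sup_left
          exact hmk.2.2 (h2.trans (sup_le hmk.2.1 hk.2))
        · exact hlt
      have h1 := mono_image_card hgmono _ hsteps
      have h2 : ((Finset.univ.image (fun k : Fin (n+1) => c k ⊔ z) : Finset L) : Set L)
          ⊆ Set.Icc z (⊤ : L) := by
        intro t ht
        simp only [Finset.coe_image, Finset.coe_univ, Set.image_univ, Set.mem_range] at ht
        obtain ⟨k, rfl⟩ := ht
        exact ⟨le_sup_right, le_top⟩
      exact h1.trans (le_mcc (monotone_image_chain hgmono) h2)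
  -- fact3 : concatenation upper bound
  have fact3 : ∀ z : L, mcc (Set.Icc (⊥ : L) z) + mcc (Set.Icc z (⊤ : L)) ≤ n + 2 := by
    intro z
    obtain ⟨C1, hC11, hC12, hC13⟩ := mcc_exists (Set.Icc (⊥ : L) z)
    obtain ⟨C2, hC21, hC22, hC23⟩ := mcc_exists (Set.Icc z (⊤ : L))
    have hz1 : z ∈ C1 := mem_of_attains_mcc hC11 hC12 hC13 ⟨bot_le, le_rfl⟩
      (fun cc hcc => Or.inr (hC12 (Finset.mem_coe.2 hcc)).2)
    have hz2 : z ∈ C2 := mem_of_attains_mcc hC21 hC22 hC23 ⟨le_rfl, le_top⟩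
      (fun cc hcc => Or.inl (hC22 (Finset.mem_coe.2 hcc)).1)
    have hch : IsChain (· ≤ ·) ((C1 ∪ C2 : Finset L) : Set L) := by
      intro u hu v hv hne
      rw [Finset.mem_coe, Finset.mem_union] at hu hv
      rcases hu with hu | hu <;> rcases hv with hv | hv
      · exact hC11 (Finset.mem_coe.2 hu) (Finset.mem_coe.2 hv) hne
      · exact Or.inl ((hC12 (Finset.mem_coe.2 hu)).2.trans (hC22 (Finset.mem_coe.2 hv)).1)
      · exact Or.inr ((hC12 (Finset.mem_coe.2 hv)).2.trans (hC22 (Finset.mem_coe.2 hu)).1)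
      · exact hC21 (Finset.mem_coe.2 hu) (Finset.mem_coe.2 hv) hne
    have hcard := Finset.card_union_add_card_inter C1 C2
    have hle : (C1 ∪ C2).card ≤ n + 1 := by
      rw [← hNn]
      exact le_maxChainCard hch
    have hint : 1 ≤ (C1 ∩ C2).card :=
      Finset.card_pos.2 ⟨z, Finset.mem_inter.2 ⟨hz1, hz2⟩⟩
    have hintle : (C1 ∩ C2).card ≤ 1 := by
      have hss : C1 ∩ C2 ⊆ {z} := by
        intro t ht
        rw [Finset.mem_inter] at ht
        rw [Finset.mem_singleton]
        exact le_antisymm (hC12 (Finset.mem_coe.2 ht.1)).2 (hC22 (Finset.mem_coe.2 ht.2)).1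
      simpa using Finset.card_le_card hss
    omega
  -- key : spine elements
  have key : ∀ z : L, (∃ C : Finset L, IsChain (· ≤ ·) (C : Set L) ∧
      C.card = maxChainCard L ∧ z ∈ C) →
      (Finset.univ.filter (fun i : Fin n => j i ≤ z)).card
        + (Finset.univ.filter (fun k : Fin n => z ≤ m k)).card = n := by
    rintro z ⟨D, hD1, hD2, hD3⟩
    have hD2' : D.card = n + 1 := by rw [hD2, hNn]
    set D1 := D.filter (fun t => t ≤ z) with hD1def
    set D2 := D.filter (fun t => z ≤ t) with hD2def
    have hsub1 : (D1 : Set L) ⊆ Set.Icc (⊥ : L) z := by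
      intro t ht
      rw [Finset.mem_coe, hD1def, Finset.mem_filter] at ht
      exact ⟨bot_le, ht.2⟩
    have hsub2 : (D2 : Set L) ⊆ Set.Icc z (⊤ : L) := by
      intro t ht
      rw [Finset.mem_coe, hD2def, Finset.mem_filter] at ht
      exact ⟨ht.2, le_top⟩
    have hch1 : IsChain (· ≤ ·) (D1 : Set L) :=
      hD1.mono (by rw [hD1def]; exact Finset.coe_subset.2 (Finset.filter_subset _ _))
    have hch2 : IsChain (· ≤ ·) (D2 : Set L) :=
      hD1.mono (by rw [hD2def]; exact Finset.coe_subset.2 (Finset.filter_subset _ _))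
    have hcover : D ⊆ D1 ∪ D2 := by
      intro d hd
      rcases eq_or_ne d z with rfl | hne
      · exact Finset.mem_union_left _ (Finset.mem_filter.2 ⟨hd, le_rfl⟩)
      · rcases hD1 (Finset.mem_coe.2 hd) (Finset.mem_coe.2 hD3) hne with h | h
        · exact Finset.mem_union_left _ (Finset.mem_filter.2 ⟨hd, h⟩)
        · exact Finset.mem_union_right _ (Finset.mem_filter.2 ⟨hd, h⟩)
    have hinter : D1 ∩ D2 ⊆ {z} := by
      intro t ht
      rw [Finset.mem_inter, hD1def, hD2def, Finset.mem_filter, Finset.mem_filter] at ht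
      rw [Finset.mem_singleton]
      exact le_antisymm ht.1.2 ht.2.2
    have h1 : mcc (Set.Icc (⊥ : L) z) + mcc (Set.Icc z (⊤ : L)) ≥ n + 2 := by
      have hu := Finset.card_union_add_card_inter D1 D2
      have hc1 : D1.card ≤ mcc (Set.Icc (⊥ : L) z) := le_mcc hch1 hsub1
      have hc2 : D2.card ≤ mcc (Set.Icc z (⊤ : L)) := le_mcc hch2 hsub2
      have hDle : n + 1 ≤ (D1 ∪ D2).card := hD2' ▸ Finset.card_le_card hcover
      have hIge : 1 ≤ (D1 ∩ D2).card := by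
        refine Finset.card_pos.2 ⟨z, Finset.mem_inter.2 ⟨?_, ?_⟩⟩
        · exact Finset.mem_filter.2 ⟨hD3, le_rfl⟩
        · exact Finset.mem_filter.2 ⟨hD3, le_rfl⟩
      omega
    have h2 := fact3 z
    have h3 := fact1 z
    have h4 := fact2 z
    omega
  have hxkey := key x ⟨Cx, hCx_chain, hCx_card, hx_mem⟩
  -- interval counts
  have hKmax : maxChainCard (Set.Icc (⊥ : L) x)
      = (Finset.univ.filter (fun i : Fin n => j i ≤ x)).card + 1 := by
    rw [maxChainCard_subtype, fact1]
  have hKJ : numJoinIrred (Set.Icc (⊥ : L) x)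
      = (Finset.univ.filter (fun i : Fin n => j i ≤ x)).card := by
    rw [numJoinIrred_Icc, ← hSJcard]
  have huniv : (Finset.univ : Finset (Fin n)).card = n := by simp
  have hcomplT : (Finset.univ.filter (fun k : Fin n => ¬ x ≤ m k)).card
      = (Finset.univ.filter (fun i : Fin n => j i ≤ x)).card := by
    have h1 := Finset.card_filter_add_card_filter_not
      (s := (Finset.univ : Finset (Fin n))) (p := fun k : Fin n => x ≤ m k)
    omega
  have hKM_le : numMeetIrred (Set.Icc (⊥ : L) x)
      ≤ (Finset.univ.filter (fun k : Fin n => ¬ x ≤ m k)).card := by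
    rw [numMeetIrred_eq]
    apply Finset.card_le_card_of_surjOn
      (fun k : Fin n => (⟨m k ⊓ x, ⟨bot_le, inf_le_right⟩⟩ : Set.Icc (⊥ : L) x))
    intro a ha
    rw [Finset.mem_coe, Finset.mem_filter] at ha
    have hcard1 : (Finset.univ.filter (fun y : L => (a : L) ⋖ y ∧ y ≤ x)).card = 1 := by
      rw [← MIp_Icc_card]; exact ha.2
    obtain ⟨astar, hastar⟩ := Finset.card_eq_one.1 hcard1
    have hastar_mem : (a : L) ⋖ astar ∧ astar ≤ x := by
      have h1 : astar ∈ Finset.univ.filter (fun y : L => (a : L) ⋖ y ∧ y ≤ x) :=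
        hastar ▸ Finset.mem_singleton_self _
      rw [Finset.mem_filter] at h1
      exact h1.2
    have hastar_uniq : ∀ y : L, (a : L) ⋖ y → y ≤ x → y = astar := by
      intro y h1 h2
      have h3 : y ∈ Finset.univ.filter (fun y : L => (a : L) ⋖ y ∧ y ≤ x) :=
        Finset.mem_filter.2 ⟨Finset.mem_univ _, h1, h2⟩
      rw [hastar, Finset.mem_singleton] at h3
      exact h3
    have hax : (a : L) < x := lt_of_lt_of_le hastar_mem.1.1 hastar_mem.2
    have hup : ∀ t : L, (a : L) < t → t ≤ x → astar ≤ t := by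
      intro t h1 h2
      obtain ⟨s, hs1, hs2⟩ := exists_covBy_le h1
      have := hastar_uniq s hs1 (hs2.trans h2)
      exact this ▸ hs2
    obtain ⟨mm, hmm1, hmm2, hmm3⟩ := exists_MIp hastar_mem.1.1
    obtain ⟨k, hk⟩ := hm_surj mm (Finset.mem_filter.2 ⟨Finset.mem_univ _, hmm1⟩)
    have hmk_a : m k ⊓ x = (a : L) := by
      apply le_antisymm
      · by_contra hne
        have h1 : (a : L) ≤ m k ⊓ x := le_inf (hk ▸ hmm2) a.2.2
        have h2 : (a : L) < m k ⊓ x := lt_of_le_of_ne h1 (fun h => hne (h ▸ le_rfl))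
        have h3 := hup _ h2 inf_le_right
        exact hmm3 (hk ▸ (h3.trans inf_le_left))
      · exact le_inf (hk ▸ hmm2) a.2.2
    have hxk : ¬ x ≤ m k := by
      intro h
      have : m k ⊓ x = x := inf_eq_right.2 h
      rw [this] at hmk_a
      exact absurd hmk_a.symm (ne_of_lt hax)
    refine ⟨k, ?_, ?_⟩
    · rw [Finset.mem_coe, Finset.mem_filter]
      exact ⟨Finset.mem_univ _, hxk⟩
    · exact Subtype.ext hmk_a
  have hKM_ge : maxChainCard (Set.Icc (⊥ : L) x) ≤ numMeetIrred (Set.Icc (⊥ : L) x) + 1 := by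
    obtain ⟨D, hD1, hD2⟩ := maxChainCard_exists (Set.Icc (⊥ : L) x)
    have h1 := chain_card_le_MI (y := (⊥ : Set.Icc (⊥ : L) x)) hD1 (fun cc _ => bot_le)
    have heq : (Finset.univ.filter
        (fun mm : Set.Icc (⊥ : L) x => MIp mm ∧ (⊥ : Set.Icc (⊥ : L) x) ≤ mm))
        = Finset.univ.filter (fun mm : Set.Icc (⊥ : L) x => MIp mm) := by
      apply Finset.filter_congr
      intro mm _
      simp only [bot_le, and_true]
    rw [heq, ← numMeetIrred_eq] at h1
    omega
  -- left modular chain of the interval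
  have hClm_bot : (⊥ : L) ∈ Clm := by
    have h1 : IsChain (· ≤ ·) ((insert ⊥ Clm : Finset L) : Set L) := by
      rw [Finset.coe_insert]
      exact hClm_chain.insert (fun b _ _ => Or.inl bot_le)
    have h2 := hClm_max _ h1 (Finset.subset_insert _ _)
    rw [← h2]
    exact Finset.mem_insert_self _ _
  have hClm_top : (⊤ : L) ∈ Clm := by
    have h1 : IsChain (· ≤ ·) ((insert ⊤ Clm : Finset L) : Set L) := by
      rw [Finset.coe_insert]
      exact hClm_chain.insert (fun b _ _ => Or.inr le_top)
    have h2 := hClm_max _ h1 (Finset.subset_insert _ _)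
    rw [← h2]
    exact Finset.mem_insert_self _ _
  have hClm_ne : Clm.Nonempty := ⟨⊥, hClm_bot⟩
  have hrcard : Clm.card = (Clm.card - 1) + 1 := by
    have := Finset.card_pos.2 hClm_ne
    omega
  set r : ℕ := Clm.card - 1 with hr
  obtain ⟨w, hw_mono, hw_mem, hw_surj⟩ := chain_enum (r+1) Clm hrcard hClm_chain
  have hw0 : w 0 = ⊥ := by
    obtain ⟨i, hi⟩ := hw_surj ⊥ hClm_bot
    exact le_bot_iff.1 (hi ▸ hw_mono.monotone (Fin.zero_le i))
  have hwlast : w (Fin.last r) = ⊤ := by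
    obtain ⟨i, hi⟩ := hw_surj ⊤ hClm_top
    exact top_le_iff.1 (hi ▸ hw_mono.monotone (Fin.le_last i))
  have hwcov : ∀ i : Fin r, w i.castSucc ⋖ w i.succ := by
    intro i
    refine ⟨hw_mono ((Fin.castSucc_lt_succ (i := i))), fun z h1 h2 => ?_⟩
    have hchz : IsChain (· ≤ ·) ((insert z Clm : Finset L) : Set L) := by
      rw [Finset.coe_insert]
      refine hClm_chain.insert (fun b hb _ => ?_)
      obtain ⟨k, rfl⟩ := hw_surj b hb
      rcases le_or_gt k i.castSucc with hk | hk
      · exact Or.inr ((hw_mono.monotone hk).trans h1.le)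
      · have hk' : i.succ ≤ k := by
          rw [Fin.le_def]
          rw [Fin.lt_def] at hk
          simp only [Fin.coe_castSucc, Fin.val_succ] at hk ⊢
          omega
        exact Or.inl (h2.le.trans (hw_mono.monotone hk'))
    have h3 := hClm_max _ hchz (Finset.subset_insert _ _)
    have hzClm : z ∈ Clm := by rw [← h3]; exact Finset.mem_insert_self _ _
    obtain ⟨k, rfl⟩ := hw_surj z hzClm
    have hk1 : i.castSucc < k := hw_mono.lt_iff_lt.1 h1
    have hk2 : k < i.succ := hw_mono.lt_iff_lt.1 h2
    rw [Fin.lt_def] at hk1 hk2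
    simp only [Fin.coe_castSucc, Fin.val_succ] at hk1 hk2
    omega
  have hKbot : ((⊥ : Set.Icc (⊥ : L) x) : L) = ⊥ := by
    have h := (bot_le : (⊥ : Set.Icc (⊥ : L) x) ≤ ⟨⊥, ⟨le_rfl, bot_le⟩⟩)
    exact le_bot_iff.1 h
  have hKtop : ((⊤ : Set.Icc (⊥ : L) x) : L) = x := by
    have h := (le_top : (⟨x, ⟨bot_le, le_rfl⟩⟩ : Set.Icc (⊥ : L) x) ≤ ⊤)
    exact le_antisymm (⊤ : Set.Icc (⊥ : L) x).2.2 h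
  have htrim2 : ∃ C : Finset (Set.Icc (⊥ : L) x),
      IsChain (· ≤ ·) (C : Set (Set.Icc (⊥ : L) x)) ∧
      (∀ D : Finset (Set.Icc (⊥ : L) x), IsChain (· ≤ ·) (D : Set (Set.Icc (⊥ : L) x)) →
        C ⊆ D → D = C) ∧
      ∀ a ∈ C, IsLeftModular a := by
    set ff : Fin (r+1) → Set.Icc (⊥ : L) x :=
      fun i => (⟨w i ⊓ x, ⟨bot_le, inf_le_right⟩⟩ : Set.Icc (⊥ : L) x) with hff
    have hffmono : Monotone ff := by
      intro a b hab
      show w a ⊓ x ≤ w b ⊓ x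
      exact inf_le_inf_right _ (hw_mono.monotone hab)
    set D' : Finset (Set.Icc (⊥ : L) x) := Finset.univ.image ff with hD'
    have hD'chain : IsChain (· ≤ ·) (D' : Set (Set.Icc (⊥ : L) x)) := by
      rw [hD']
      exact monotone_image_chain hffmono
    have hD'bot : (⊥ : Set.Icc (⊥ : L) x) ∈ D' := by
      refine Finset.mem_image.2 ⟨0, Finset.mem_univ _, ?_⟩
      apply Subtype.ext
      rw [hKbot]
      show w 0 ⊓ x = ⊥
      rw [hw0, bot_inf_eq]
    have hD'cov : ∀ a ∈ D', a ≠ ⊤ → ∃ b ∈ D', a ⋖ b := by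
      intro a ha hatop
      obtain ⟨i00, -, hi00⟩ := Finset.mem_image.1 ha
      obtain ⟨i0, hi0, hi0max⟩ := fexmax_old
        (Finset.univ.filter (fun i : Fin (r+1) => ff i = a)) ⟨i00, Finset.mem_filter.2
          ⟨Finset.mem_univ _, hi00⟩⟩
      rw [Finset.mem_filter] at hi0
      rcases eq_or_ne i0 (Fin.last r) with rfl | hne
      · exfalso
        apply hatop
        rw [← hi0.2]
        apply Subtype.ext
        rw [hKtop]
        show w (Fin.last r) ⊓ x = x
        rw [hwlast, top_inf_eq]
      · have hi0lt : (i0 : ℕ) < r := by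
          have := i0.isLt
          have h2 : (i0 : ℕ) ≠ r := fun h => hne (Fin.ext h)
          omega
        set i1 : Fin r := ⟨(i0 : ℕ), hi0lt⟩ with hi1
        have hcast : i1.castSucc = i0 := Fin.ext rfl
        have hcov1 : w i0 ⋖ w i1.succ := hcast ▸ hwcov i1
        rcases covBy_inf_of_leftModular (x := x)
            (hClm_lm (w i0) (hw_mem i0)) hcov1 with heq | hcv
        · exfalso
          refine hi0max i1.succ (Finset.mem_filter.2 ⟨Finset.mem_univ _, ?_⟩) ?_
          · rw [← hi0.2]
            apply Subtype.ext
            show w i1.succ ⊓ x = w i0 ⊓ x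
            exact heq.symm
          · rw [← hcast]
            exact (Fin.castSucc_lt_succ (i := i1))
        · refine ⟨ff i1.succ, Finset.mem_image.2 ⟨i1.succ, Finset.mem_univ _, rfl⟩, ?_⟩
          rw [covBy_Icc_iff, ← hi0.2]
          exact hcv
    refine ⟨D', hD'chain, chain_maximal_criterion hD'chain hD'bot hD'cov, ?_⟩
    intro a ha
    obtain ⟨i, -, hi⟩ := Finset.mem_image.1 ha
    rw [← hi]
    exact leftModular_Icc (hClm_lm (w i) (hw_mem i))
  -- assemble IsTrim
  have htrim : IsTrim (Set.Icc (⊥ : L) x) := by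
    refine ⟨⟨?_, ?_⟩, htrim2⟩
    · rw [hKmax, hKJ]
      omega
    · rw [hKmax]
      have h1 := hKM_le
      have h2 := hKM_ge
      rw [hKmax] at h2
      omega
  refine ⟨htrim, ?_⟩
  -- spine equality
  apply Set.eq_of_subset_of_subset
  · rintro z ⟨a, ha, rfl⟩
    rw [Finset.mem_coe, mem_spineF] at ha
    obtain ⟨D, hD1, hD2, hD3⟩ := ha
    have hDtop : (⊤ : Set.Icc (⊥ : L) x) ∈ D := by
      refine mem_of_attains_mcc hD1 (Set.subset_univ _)
        (by rw [hD2, maxChainCard_eq_mcc]) (Set.mem_univ _) (fun d _ => Or.inr le_top)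
    obtain ⟨hC1chain, hC1card, hC1sub⟩ := chain_of_subtype_chain hD1
    set C1 : Finset L := D.image Subtype.val with hC1
    obtain ⟨M2, hM21, hM22, hM23⟩ := mcc_exists (Set.Icc x (⊤ : L))
    have hxM2 : x ∈ M2 := mem_of_attains_mcc hM21 hM22 hM23 ⟨le_rfl, le_top⟩
      (fun cc hcc => Or.inl (hM22 (Finset.mem_coe.2 hcc)).1)
    have hxC1 : x ∈ C1 := by
      rw [hC1]
      refine Finset.mem_image.2 ⟨⊤, hDtop, hKtop⟩
    have hzC1 : (a : L) ∈ C1 := by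
      rw [hC1]
      exact Finset.mem_image.2 ⟨a, hD3, rfl⟩
    have hch : IsChain (· ≤ ·) ((C1 ∪ M2 : Finset L) : Set L) := by
      intro u hu v hv hne
      rw [Finset.mem_coe, Finset.mem_union] at hu hv
      rcases hu with hu | hu <;> rcases hv with hv | hv
      · exact hC1chain (Finset.mem_coe.2 hu) (Finset.mem_coe.2 hv) hne
      · exact Or.inl ((hC1sub (Finset.mem_coe.2 hu)).2.trans (hM22 (Finset.mem_coe.2 hv)).1)
      · exact Or.inr ((hC1sub (Finset.mem_coe.2 hv)).2.trans (hM22 (Finset.mem_coe.2 hu)).1)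
      · exact hM21 (Finset.mem_coe.2 hu) (Finset.mem_coe.2 hv) hne
    have hinter : C1 ∩ M2 = {x} := by
      apply Finset.Subset.antisymm
      · intro t ht
        rw [Finset.mem_inter] at ht
        rw [Finset.mem_singleton]
        exact le_antisymm (hC1sub (Finset.mem_coe.2 ht.1)).2 (hM22 (Finset.mem_coe.2 ht.2)).1
      · intro t ht
        rw [Finset.mem_singleton] at ht
        subst ht
        exact Finset.mem_inter.2 ⟨hxC1, hxM2⟩
    have hucard : (C1 ∪ M2).card = n + 1 := by
      have h1 := Finset.card_union_add_card_inter C1 M2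
      rw [hinter] at h1
      have h2 : C1.card = (Finset.univ.filter (fun i : Fin n => j i ≤ x)).card + 1 := by
        rw [hC1card, hD2, hKmax]
      have h3 : M2.card = (Finset.univ.filter (fun k : Fin n => x ≤ m k)).card + 1 := by
        rw [hM23, fact2]
      simp only [Finset.card_singleton] at h1
      omega
    constructor
    · rw [Finset.mem_coe, spineF, Finset.mem_filter]
      refine ⟨Finset.mem_univ _, C1 ∪ M2, hch, by rw [hucard, hNn], ?_⟩
      exact Finset.mem_union_left _ hzC1
    · exact a.2
  · rintro z ⟨hz1, hz2⟩
    rw [Finset.mem_coe, mem_spineF] at hz1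
    obtain ⟨Dz, hDz1, hDz2, hDz3⟩ := hz1
    have hzkey := key z ⟨Dz, hDz1, hDz2, hDz3⟩
    have hzx : z ≤ x := hz2.2
    obtain ⟨C1, hC11, hC12, hC13⟩ := mcc_exists (Set.Icc (⊥ : L) z)
    have hzC1 : z ∈ C1 := mem_of_attains_mcc hC11 hC12 hC13 ⟨bot_le, le_rfl⟩
      (fun cc hcc => Or.inr (hC12 (Finset.mem_coe.2 hcc)).2)
    set g : Fin (n+1) → L := fun k => (c k ⊓ x) ⊔ z with hg
    have hgmono : Monotone g := fun a b hab =>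
      sup_le_sup_right (inf_le_inf_right _ (hc_mono.monotone hab)) _
    have hg0 : g 0 = z := by
      rw [hg]
      show (c 0 ⊓ x) ⊔ z = z
      rw [hc0, bot_inf_eq, bot_sup_eq]
    set W : Finset (Fin n) := Finset.univ.filter (fun k : Fin n => j k ≤ x ∧ z ≤ m k) with hW
    have hsteps : ∀ k ∈ W, g k.castSucc < g k.succ := by
      intro k hk
      rw [hW, Finset.mem_filter] at hk
      have hmk := hm_mem k
      have hjk := hj_mem k
      have hnle : ¬ c k.succ ⊓ x ≤ m k := by
        intro hle
        have h1 : m k ⊓ c k.succ = c k.castSucc := by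
          rcases eq_or_lt_of_le (le_inf hmk.2.1 (hcov k).1.le :
              c k.castSucc ≤ m k ⊓ c k.succ) with h | h
          · exact h.symm
          · exfalso
            refine (hcov k).2 h ?_
            exact lt_of_le_of_ne inf_le_right (fun he => hmk.2.2 (he ▸ inf_le_left))
        have h2 : c k.succ ⊓ x ≤ c k.castSucc := by
          rw [← h1]
          exact le_inf hle inf_le_left
        have h3 : j k ≤ c k.succ ⊓ x := le_inf hjk.2.1 hk.2.1
        exact hjk.2.2 (h3.trans h2)
      have hle : g k.castSucc ≤ g k.succ := hgmono ((Fin.castSucc_lt_succ (i := k))).le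
      rcases eq_or_lt_of_le hle with heq | hlt
      · exfalso
        have h1 : c k.succ ⊓ x ≤ g k.castSucc := by
          rw [heq]
          exact le_sup_left
        have h2 : g k.castSucc ≤ m k := sup_le (inf_le_left.trans hmk.2.1) hk.2.2
        exact hnle (h1.trans h2)
      · exact hlt
    set C2 : Finset L := Finset.univ.image g with hC2
    have hC2chain : IsChain (· ≤ ·) (C2 : Set L) := monotone_image_chain hgmono
    have hC2card : W.card + 1 ≤ C2.card := mono_image_card hgmono W hsteps
    have hC2sub : (C2 : Set L) ⊆ Set.Icc z x := by
      intro t ht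
      rw [hC2] at ht
      simp only [Finset.coe_image, Finset.coe_univ, Set.image_univ, Set.mem_range] at ht
      obtain ⟨k, rfl⟩ := ht
      exact ⟨le_sup_right, sup_le inf_le_right hzx⟩
    have hzC2 : z ∈ C2 := by
      rw [hC2]
      exact Finset.mem_image.2 ⟨0, Finset.mem_univ _, hg0⟩
    have hWcard : (Finset.univ.filter (fun i : Fin n => j i ≤ x)).card
        ≤ W.card + (Finset.univ.filter (fun k : Fin n => ¬ z ≤ m k)).card := by
      have hsub : Finset.univ.filter (fun i : Fin n => j i ≤ x)
          ⊆ W ∪ Finset.univ.filter (fun k : Fin n => ¬ z ≤ m k) := by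
        intro k hk
        rw [Finset.mem_filter] at hk
        by_cases hzm : z ≤ m k
        · exact Finset.mem_union_left _ (by rw [hW, Finset.mem_filter]; exact ⟨hk.1, hk.2, hzm⟩)
        · exact Finset.mem_union_right _ (Finset.mem_filter.2 ⟨hk.1, hzm⟩)
      exact (Finset.card_le_card hsub).trans (Finset.card_union_le _ _)
    have hnegz : (Finset.univ.filter (fun k : Fin n => z ≤ m k)).card
        + (Finset.univ.filter (fun k : Fin n => ¬ z ≤ m k)).card = n := by
      have h1 := Finset.card_filter_add_card_filter_not
        (s := (Finset.univ : Finset (Fin n))) (p := fun k : Fin n => z ≤ m k)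
      omega
    -- the union
    have hch : IsChain (· ≤ ·) ((C1 ∪ C2 : Finset L) : Set L) := by
      intro u hu v hv hne
      rw [Finset.mem_coe, Finset.mem_union] at hu hv
      rcases hu with hu | hu <;> rcases hv with hv | hv
      · exact hC11 (Finset.mem_coe.2 hu) (Finset.mem_coe.2 hv) hne
      · exact Or.inl ((hC12 (Finset.mem_coe.2 hu)).2.trans (hC2sub (Finset.mem_coe.2 hv)).1)
      · exact Or.inr ((hC12 (Finset.mem_coe.2 hv)).2.trans (hC2sub (Finset.mem_coe.2 hu)).1)
      · exact hC2chain (Finset.mem_coe.2 hu) (Finset.mem_coe.2 hv) hne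
    have hUsub : ((C1 ∪ C2 : Finset L) : Set L) ⊆ Set.Icc (⊥ : L) x := by
      intro t ht
      rw [Finset.coe_union, Set.mem_union] at ht
      rcases ht with ht | ht
      · exact ⟨bot_le, (hC12 ht).2.trans hzx⟩
      · exact ⟨bot_le, (hC2sub ht).2⟩
    have hinter : C1 ∩ C2 = {z} := by
      apply Finset.Subset.antisymm
      · intro t ht
        rw [Finset.mem_inter] at ht
        rw [Finset.mem_singleton]
        exact le_antisymm (hC12 (Finset.mem_coe.2 ht.1)).2 (hC2sub (Finset.mem_coe.2 ht.2)).1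
      · intro t ht
        rw [Finset.mem_singleton] at ht
        subst ht
        exact Finset.mem_inter.2 ⟨hzC1, hzC2⟩
    have hUcard : (C1 ∪ C2).card = (Finset.univ.filter (fun i : Fin n => j i ≤ x)).card + 1 := by
      have h1 := Finset.card_union_add_card_inter C1 C2
      rw [hinter] at h1
      simp only [Finset.card_singleton] at h1
      have h2 : (C1 ∪ C2).card ≤ (Finset.univ.filter (fun i : Fin n => j i ≤ x)).card + 1 := by
        rw [← fact1 x]
        exact le_mcc hch hUsub
      have h3 : C1.card = (Finset.univ.filter (fun i : Fin n => j i ≤ z)).card + 1 := by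
        rw [hC13, fact1]
      have h4 : (Finset.univ.filter (fun i : Fin n => j i ≤ z)).card
          ≤ (Finset.univ.filter (fun i : Fin n => j i ≤ x)).card := by
        apply Finset.card_le_card
        intro i hi
        rw [Finset.mem_filter] at hi ⊢
        exact ⟨hi.1, hi.2.trans hzx⟩
      omega
    obtain ⟨DD, hDD1, hDD2, hDD3⟩ := subtype_chain_of_chain hch hUsub
    refine ⟨⟨z, hz2⟩, ?_, rfl⟩
    rw [Finset.mem_coe, mem_spineF]
    refine ⟨DD, hDD1, ?_, ?_⟩
    · rw [hDD2, hUcard, hKmax]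
    · exact hDD3 _ (Finset.mem_union_left _ hzC1)
end

section
/- Let $L$ be a finite trim lattice with Ungarian Markov chain parameter $p \in (0,1]$. Then the expected top-to-bottom absorption time satisfies $\mathcal{E}(L) \leq \mathcal{E}(\mathrm{spine}(L))$. -/
open Finset
open scoped Classical

/-- The set of elements of the spine covered, within the spine, by `x`. -/
noncomputable def spineCov (L : Type*) [Fintype L] [Lattice L] (x : L) : Finset L :=
  (spineF L).filter (fun y => y < x ∧ ∀ z ∈ spineF L, y < z → ¬ z < x)

/-- Transition probabilities of the Ungarian Markov chain on the spine of `L`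
(a sublattice of `L`, so meets may be computed in `L`). -/
noncomputable def spineP {L : Type*} [Fintype L] [Lattice L] [BoundedOrder L]
    (p : ℝ) (x y : L) : ℝ :=
  ∑ T ∈ (spineCov L x).powerset.filter (fun T => (insert x T).inf id = y),
    p ^ T.card * (1 - p) ^ ((spineCov L x).card - T.card)

/-- `E'` is the expected-number-of-steps-to-`⊥` function of the Ungarian Markov chain
on the spine of `L`. -/
def IsSpineExp {L : Type*} [Fintype L] [Lattice L] [BoundedOrder L]
    (p : ℝ) (E' : L → ℝ) : Prop :=
  E' ⊥ = 0 ∧ ∀ x ∈ spineF L, x ≠ ⊥ →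
    E' x = 1 + ∑ y ∈ spineF L, spineP p x y * E' y


set_option linter.unusedSectionVars false
set_option maxHeartbeats 1000000

section Chunk1
variable {L : Type*} [Fintype L] [Lattice L] [BoundedOrder L]

/-- join-irreducibles -/
noncomputable def JIs (L : Type*) [Fintype L] [Preorder L] : Finset L :=
  Finset.univ.filter (fun a : L => (Finset.univ.filter (fun y : L => y ⋖ a)).card = 1)

noncomputable def MIs (L : Type*) [Fintype L] [Preorder L] : Finset L :=
  Finset.univ.filter (fun a : L => (Finset.univ.filter (fun y : L => a ⋖ y)).card = 1)

noncomputable def Aset (L : Type*) [Fintype L] [Lattice L] (x : L) : Finset L :=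
  (JIs L).filter (· ≤ x)

noncomputable def Bset (L : Type*) [Fintype L] [Lattice L] (x : L) : Finset L :=
  (MIs L).filter (x ≤ ·)

lemma fin_exists_maximal_old {α : Type*} [Preorder α] (s : Finset α) (h : s.Nonempty) :
    ∃ m ∈ s, ∀ x ∈ s, ¬m < x := by
  obtain ⟨m, hm⟩ := Finset.exists_maximal h
  exact ⟨m, hm.1, fun x hx hlt => hlt.not_ge (hm.2 hx hlt.le)⟩

lemma fin_exists_minimal_old {α : Type*} [Preorder α] (s : Finset α) (h : s.Nonempty) :
    ∃ m ∈ s, ∀ x ∈ s, ¬x < m := by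
  obtain ⟨m, hm⟩ := Finset.exists_minimal h
  exact ⟨m, hm.1, fun x hx hlt => hlt.not_ge (hm.2 hx hlt.le)⟩

lemma chain_exists_max {D : Finset L} (hD : IsChain (· ≤ ·) (D : Set L)) (hne : D.Nonempty) :
    ∃ y ∈ D, ∀ t ∈ D, t ≤ y := by
  obtain ⟨y, hy, hmax⟩ := fin_exists_maximal_old D hne
  refine ⟨y, hy, fun t ht => ?_⟩
  rcases eq_or_ne t y with rfl | hne'
  · exact le_rfl
  · rcases hD ht hy hne' with h | h
    · exact h
    · exact absurd (lt_of_le_of_ne h (fun he => hne' he.symm)) (hmax t ht)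

lemma chain_exists_min {D : Finset L} (hD : IsChain (· ≤ ·) (D : Set L)) (hne : D.Nonempty) :
    ∃ y ∈ D, ∀ t ∈ D, y ≤ t := by
  obtain ⟨y, hy, hmin⟩ := fin_exists_minimal_old D hne
  refine ⟨y, hy, fun t ht => ?_⟩
  rcases eq_or_ne t y with rfl | hne'
  · exact le_rfl
  · rcases hD ht hy hne' with h | h
    · exact absurd (lt_of_le_of_ne h (fun he => hne' he)) (hmin t ht)
    · exact h

lemma exists_covBy_of_ne_bot {x : L} (hx : x ≠ ⊥) : ∃ y, y ⋖ x := by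
  have hne : (Finset.univ.filter (fun y : L => y < x)).Nonempty :=
    ⟨⊥, by simp [bot_lt_iff_ne_bot.2 hx]⟩
  obtain ⟨y, hy, hmax⟩ := fin_exists_maximal_old _ hne
  simp only [mem_filter, mem_univ, true_and] at hy
  refine ⟨y, hy, fun c hc hcx => ?_⟩
  exact hmax c (by simp [hcx]) hc

lemma covBy_join {x y₁ y₂ : L} (h1 : y₁ ⋖ x) (h2 : y₂ ⋖ x) (hne : y₁ ≠ y₂) : y₁ ⊔ y₂ = x := by
  have hlt : y₁ < y₁ ⊔ y₂ := by
    rcases lt_or_eq_of_le (le_sup_left : y₁ ≤ y₁ ⊔ y₂) with h | h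
    · exact h
    · exfalso
      have hy2 : y₂ ≤ y₁ := h ▸ le_sup_right
      have : y₂ < y₁ := lt_of_le_of_ne hy2 (fun he => hne he.symm)
      exact h2.2 this h1.1
  have hle : y₁ ⊔ y₂ ≤ x := sup_le h1.le h2.le
  by_contra hne'
  exact h1.2 hlt (lt_of_le_of_ne hle hne')

lemma bot_not_mem_JIs : (⊥ : L) ∉ JIs L := by
  simp only [JIs, mem_filter, mem_univ, true_and]
  intro h
  rw [Finset.card_eq_one] at h
  obtain ⟨a, ha⟩ := h
  have : a ∈ Finset.univ.filter (fun y : L => y ⋖ (⊥:L)) := ha ▸ mem_singleton_self a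
  simp only [mem_filter] at this
  exact absurd this.2.1 (not_lt_bot)

lemma top_not_mem_MIs : (⊤ : L) ∉ MIs L := by
  simp only [MIs, mem_filter, mem_univ, true_and]
  intro h
  rw [Finset.card_eq_one] at h
  obtain ⟨a, ha⟩ := h
  have : a ∈ Finset.univ.filter (fun y : L => (⊤:L) ⋖ y) := ha ▸ mem_singleton_self a
  simp only [mem_filter, mem_univ, true_and] at this
  exact absurd this.1 not_top_lt

lemma mem_JIs_of_unique_cover {x y : L} (hy : y ⋖ x)
    (hu : ∀ z, z ⋖ x → z = y) : x ∈ JIs L := by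
  simp only [JIs, mem_filter, mem_univ, true_and]
  rw [Finset.card_eq_one]
  refine ⟨y, ?_⟩
  ext z
  simp only [mem_filter, mem_univ, true_and, mem_singleton]
  exact ⟨fun h => hu z h, fun h => h ▸ hy⟩

lemma Aset_mono {x y : L} (h : x ≤ y) : Aset L x ⊆ Aset L y := by
  intro j hj
  rw [Aset, mem_filter] at hj ⊢
  exact ⟨hj.1, le_trans hj.2 h⟩

lemma genJ (x : L) : (Aset L x).sup id = x := by
  induction x using WellFoundedLT.induction with
  | _ x IH =>
    refine le_antisymm (Finset.sup_le fun j hj => (mem_filter.1 hj).2) ?_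
    rcases eq_or_ne x ⊥ with rfl | hx
    · exact bot_le
    have hcnt : (Finset.univ.filter (fun y : L => y ⋖ x)).Nonempty := by
      obtain ⟨y, hy⟩ := exists_covBy_of_ne_bot hx
      exact ⟨y, by simp [hy]⟩
    rcases eq_or_lt_of_le (Nat.succ_le_of_lt (Finset.Nonempty.card_pos hcnt)) with hc1 | hc2
    · -- card = 1 : x is join-irreducible
      have hxj : x ∈ JIs L := by
        simp only [JIs, mem_filter, mem_univ, true_and]; omega
      have : x ∈ Aset L x := mem_filter.2 ⟨hxj, le_rfl⟩
      exact Finset.le_sup (f := id) this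
    · -- at least two covers
      obtain ⟨y₁, hy₁, y₂, hy₂, hne⟩ := Finset.one_lt_card.1 hc2
      simp only [mem_filter, mem_univ, true_and] at hy₁ hy₂
      have h1 : y₁ ≤ (Aset L x).sup id := by
        rw [← IH y₁ hy₁.lt]
        exact Finset.sup_mono (Aset_mono hy₁.le)
      have h2 : y₂ ≤ (Aset L x).sup id := by
        rw [← IH y₂ hy₂.lt]
        exact Finset.sup_mono (Aset_mono hy₂.le)
      calc x = y₁ ⊔ y₂ := (covBy_join hy₁ hy₂ hne).symm
      _ ≤ (Aset L x).sup id := sup_le h1 h2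


lemma exists_covBy_of_ne_top {x : L} (hx : x ≠ ⊤) : ∃ y, x ⋖ y := by
  have hne : (Finset.univ.filter (fun y : L => x < y)).Nonempty :=
    ⟨⊤, by simp [lt_top_iff_ne_top.2 hx]⟩
  obtain ⟨y, hy, hmin⟩ := fin_exists_minimal_old _ hne
  simp only [mem_filter, mem_univ, true_and] at hy
  exact ⟨y, hy, fun c hc hcy => hmin c (by simp [hc]) hcy⟩

lemma covBy_meet {x y₁ y₂ : L} (h1 : x ⋖ y₁) (h2 : x ⋖ y₂) (hne : y₁ ≠ y₂) : y₁ ⊓ y₂ = x := by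
  have hlt : y₁ ⊓ y₂ < y₁ := by
    rcases lt_or_eq_of_le (inf_le_left : y₁ ⊓ y₂ ≤ y₁) with h | h
    · exact h
    · exfalso
      have hy1 : y₁ ≤ y₂ := by rw [← h]; exact inf_le_right
      have : y₁ < y₂ := lt_of_le_of_ne hy1 hne
      exact h2.2 h1.1 this
  have hle : x ≤ y₁ ⊓ y₂ := le_inf h1.le h2.le
  by_contra hne'
  exact h1.2 (lt_of_le_of_ne hle (fun he => hne' he.symm)) hlt

lemma Bset_anti {x y : L} (h : x ≤ y) : Bset L y ⊆ Bset L x := by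
  intro m hm
  rw [Bset, mem_filter] at hm ⊢
  exact ⟨hm.1, le_trans h hm.2⟩

lemma genM (x : L) : (Bset L x).inf id = x := by
  induction x using WellFoundedGT.induction with
  | _ x IH =>
    refine le_antisymm ?_ (Finset.le_inf fun m hm => (mem_filter.1 hm).2)
    rcases eq_or_ne x ⊤ with rfl | hx
    · exact le_top
    have hcnt : (Finset.univ.filter (fun y : L => x ⋖ y)).Nonempty := by
      obtain ⟨y, hy⟩ := exists_covBy_of_ne_top hx
      exact ⟨y, by simp [hy]⟩
    rcases eq_or_lt_of_le (Nat.succ_le_of_lt (Finset.Nonempty.card_pos hcnt)) with hc1 | hc2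
    · have hxm : x ∈ MIs L := by
        simp only [MIs, mem_filter, mem_univ, true_and]; omega
      have : x ∈ Bset L x := mem_filter.2 ⟨hxm, le_rfl⟩
      exact Finset.inf_le (f := id) this
    · obtain ⟨y₁, hy₁, y₂, hy₂, hne⟩ := Finset.one_lt_card.1 hc2
      simp only [mem_filter, mem_univ, true_and] at hy₁ hy₂
      have h1 : (Bset L x).inf id ≤ y₁ := by
        rw [← IH y₁ hy₁.lt]
        exact Finset.inf_mono (Bset_anti hy₁.le)
      have h2 : (Bset L x).inf id ≤ y₂ := by
        rw [← IH y₂ hy₂.lt]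
        exact Finset.inf_mono (Bset_anti hy₂.le)
      calc (Bset L x).inf id ≤ y₁ ⊓ y₂ := le_inf h1 h2
      _ = x := covBy_meet hy₁ hy₂ hne

lemma Aset_inj {x y : L} (h : Aset L x = Aset L y) : x = y := by
  rw [← genJ x, ← genJ y, h]

lemma Bset_inj {x y : L} (h : Bset L x = Bset L y) : x = y := by
  rw [← genM x, ← genM y, h]

lemma Aset_ssubset {x y : L} (h : x < y) : Aset L x ⊂ Aset L y :=
  (Finset.ssubset_iff_subset_ne).2 ⟨Aset_mono h.le, fun he => h.ne (Aset_inj he)⟩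

lemma Bset_ssubset {x y : L} (h : x < y) : Bset L y ⊂ Bset L x :=
  (Finset.ssubset_iff_subset_ne).2 ⟨Bset_anti h.le, fun he => h.ne (Bset_inj he.symm)⟩

lemma Aset_card_lt {x y : L} (h : x < y) : (Aset L x).card < (Aset L y).card :=
  Finset.card_lt_card (Aset_ssubset h)

lemma Bset_card_lt {x y : L} (h : x < y) : (Bset L y).card < (Bset L x).card :=
  Finset.card_lt_card (Bset_ssubset h)

/-! ### maximum chains -/

lemma card_le_maxChainCard {C : Finset L} (hC : IsChain (· ≤ ·) (C : Set L)) :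
    C.card ≤ maxChainCard L := by
  apply Finset.le_sup (f := Finset.card)
  simp only [mem_filter, Finset.mem_powerset]
  exact ⟨Finset.subset_univ C, hC⟩

lemma exists_max_chain :
    ∃ C : Finset L, IsChain (· ≤ ·) (C : Set L) ∧ C.card = maxChainCard L := by
  have hne : (Finset.univ.powerset.filter
      (fun C : Finset L => IsChain (· ≤ ·) (C : Set L))).Nonempty := by
    refine ⟨∅, ?_⟩
    simp only [mem_filter, Finset.mem_powerset]
    exact ⟨Finset.empty_subset _, by simp [IsChain, Set.Pairwise]⟩
  obtain ⟨C, hmem, h⟩ := Finset.exists_mem_eq_sup _ hne Finset.card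
  simp only [mem_filter, Finset.mem_powerset] at hmem
  exact ⟨C, hmem.2, h.symm⟩

lemma one_le_maxChainCard : 1 ≤ maxChainCard L := by
  have : ({⊥} : Finset L).card ≤ maxChainCard L :=
    card_le_maxChainCard (by simp [IsChain, Set.Pairwise])
  simpa using this

lemma bot_mem_max_chain {C : Finset L} (hC : IsChain (· ≤ ·) (C : Set L))
    (hcard : C.card = maxChainCard L) : (⊥ : L) ∈ C := by
  by_contra hbot
  have hchain : IsChain (· ≤ ·) ((insert ⊥ C : Finset L) : Set L) := by
    rw [Finset.coe_insert]
    exact hC.insert (fun b _ _ => Or.inl bot_le)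
  have := card_le_maxChainCard hchain
  rw [Finset.card_insert_of_notMem hbot, hcard] at this
  omega

lemma top_mem_max_chain {C : Finset L} (hC : IsChain (· ≤ ·) (C : Set L))
    (hcard : C.card = maxChainCard L) : (⊤ : L) ∈ C := by
  by_contra htop
  have hchain : IsChain (· ≤ ·) ((insert ⊤ C : Finset L) : Set L) := by
    rw [Finset.coe_insert]
    exact hC.insert (fun b _ _ => Or.inr le_top)
  have := card_le_maxChainCard hchain
  rw [Finset.card_insert_of_notMem htop, hcard] at this
  omega

/-- predecessor within a maximum chain covers, with maximality -/
lemma exists_pred_max_chain {C : Finset L} (hC : IsChain (· ≤ ·) (C : Set L))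
    (hcard : C.card = maxChainCard L) {y : L} (hy : y ∈ C) (hybot : y ≠ ⊥) :
    ∃ p ∈ C, p ⋖ y ∧ ∀ t ∈ C, t < y → t ≤ p := by
  have hne : (C.filter (· < y)).Nonempty :=
    ⟨⊥, mem_filter.2 ⟨bot_mem_max_chain hC hcard, bot_lt_iff_ne_bot.2 hybot⟩⟩
  have hchainF : IsChain (· ≤ ·) ((C.filter (· < y) : Finset L) : Set L) :=
    hC.mono (by simp only [Finset.coe_filter]; exact Set.sep_subset _ _)
  obtain ⟨p, hpF, hpmax⟩ := chain_exists_max hchainF hne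
  have hp : p ∈ C := (mem_filter.1 hpF).1
  have hplt : p < y := (mem_filter.1 hpF).2
  have hmaxprop : ∀ t ∈ C, t < y → t ≤ p := fun t ht htl =>
    hpmax t (mem_filter.2 ⟨ht, htl⟩)
  refine ⟨p, hp, ⟨hplt, fun t hpt hty => ?_⟩, hmaxprop⟩
  -- no element strictly between p and y
  have htC : t ∉ C := fun htC => absurd (hmaxprop t htC hty) (not_le_of_gt hpt)
  have hchain : IsChain (· ≤ ·) ((insert t C : Finset L) : Set L) := by
    rw [Finset.coe_insert]
    refine hC.insert (fun b hb hne' => ?_)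
    rcases eq_or_ne b y with rfl | hby
    · exact Or.inl hty.le
    rcases hC hb (Set.mem_toFinset.mp (by simpa using hy)) hby with h | h
    · exact Or.inr ((hmaxprop b hb (lt_of_le_of_ne h hby)).trans hpt.le)
    · exact Or.inl (hty.le.trans h)
  have := card_le_maxChainCard hchain
  rw [Finset.card_insert_of_notMem htC, hcard] at this
  omega

lemma exists_succ_max_chain {C : Finset L} (hC : IsChain (· ≤ ·) (C : Set L))
    (hcard : C.card = maxChainCard L) {y : L} (hy : y ∈ C) (hytop : y ≠ ⊤) :
    ∃ p ∈ C, y ⋖ p ∧ ∀ t ∈ C, y < t → p ≤ t := by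
  have hne : (C.filter (y < ·)).Nonempty :=
    ⟨⊤, mem_filter.2 ⟨top_mem_max_chain hC hcard, lt_top_iff_ne_top.2 hytop⟩⟩
  have hchainF : IsChain (· ≤ ·) ((C.filter (y < ·) : Finset L) : Set L) :=
    hC.mono (by simp only [Finset.coe_filter]; exact Set.sep_subset _ _)
  obtain ⟨p, hpF, hpmin⟩ := chain_exists_min hchainF hne
  have hp : p ∈ C := (mem_filter.1 hpF).1
  have hplt : y < p := (mem_filter.1 hpF).2
  have hminprop : ∀ t ∈ C, y < t → p ≤ t := fun t ht htl =>
    hpmin t (mem_filter.2 ⟨ht, htl⟩)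
  refine ⟨p, hp, ⟨hplt, fun t hyt htp => ?_⟩, hminprop⟩
  have htC : t ∉ C := fun htC => absurd (hminprop t htC hyt) (not_le_of_gt htp)
  have hchain : IsChain (· ≤ ·) ((insert t C : Finset L) : Set L) := by
    rw [Finset.coe_insert]
    refine hC.insert (fun b hb hne' => ?_)
    rcases eq_or_ne b y with rfl | hby
    · exact Or.inr hyt.le
    rcases hC hb (by simpa using hy) hby with h | h
    · exact Or.inr (h.trans hyt.le)
    · exact Or.inl (htp.le.trans (hminprop b hb (lt_of_le_of_ne h (fun he => hby he.symm))))
  have := card_le_maxChainCard hchain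
  rw [Finset.card_insert_of_notMem htC, hcard] at this
  omega


/-! ### the κ bijection between join- and meet-irreducibles -/

structure TrimData (L : Type*) [Fintype L] [Lattice L] [BoundedOrder L] where
  arr : L → L
  kap : L → L
  kapMI : ∀ j ∈ JIs L, kap j ∈ MIs L
  kapInj : Set.InjOn kap ↑(JIs L)
  kapSurj : ∀ m ∈ MIs L, ∃ j ∈ JIs L, kap j = m
  nle : ∀ j ∈ JIs L, ¬ j ≤ kap j
  ord : ∀ j ∈ JIs L, ∀ j' ∈ JIs L, ¬ j ≤ kap j' → arr j' ≤ arr j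
  arrInj : Set.InjOn arr ↑(JIs L)
  arrCmp : ∀ j ∈ JIs L, ∀ j' ∈ JIs L, arr j ≤ arr j' ∨ arr j' ≤ arr j
  hmcc : maxChainCard L = (JIs L).card + 1
  hMIcard : (MIs L).card = (JIs L).card

lemma JIs_card_eq : (JIs L).card = numJoinIrred L := rfl
lemma MIs_card_eq : (MIs L).card = numMeetIrred L := rfl

lemma exists_trimData (hJ : maxChainCard L - 1 = numJoinIrred L)
    (hM : maxChainCard L - 1 = numMeetIrred L) : Nonempty (TrimData L) := by
  have h1 : 1 ≤ maxChainCard L := one_le_maxChainCard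
  have hmcc : maxChainCard L = (JIs L).card + 1 := by
    rw [JIs_card_eq]; omega
  have hMIcard : (MIs L).card = (JIs L).card := by
    rw [JIs_card_eq, MIs_card_eq]; omega
  obtain ⟨C, hC, hcard⟩ := exists_max_chain (L := L)
  -- predecessor function
  have hpredE : ∀ y : L, y ∈ C → y ≠ ⊥ → ∃ p, p ∈ C ∧ p ⋖ y ∧ ∀ t ∈ C, t < y → t ≤ p := by
    intro y hy hyb
    obtain ⟨p, h1, h2, h3⟩ := exists_pred_max_chain hC hcard hy hyb
    exact ⟨p, h1, h2, h3⟩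
  choose! pred hpredC hpredcov hpredmax using hpredE
  have hsuccE : ∀ y : L, y ∈ C → y ≠ ⊤ → ∃ p, p ∈ C ∧ y ⋖ p ∧ ∀ t ∈ C, y < t → p ≤ t := by
    intro y hy hyb
    obtain ⟨p, h1, h2, h3⟩ := exists_succ_max_chain hC hcard hy hyb
    exact ⟨p, h1, h2, h3⟩
  choose! succ hsuccC hsucccov hsuccmin using hsuccE
  -- arrival of j into C
  have harrE : ∀ j : L, ∃ y, y ∈ C ∧ j ≤ y ∧ ∀ t ∈ C, j ≤ t → y ≤ t := by
    intro j
    have hne : (C.filter (j ≤ ·)).Nonempty :=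
      ⟨⊤, mem_filter.2 ⟨top_mem_max_chain hC hcard, le_top⟩⟩
    have hchainF : IsChain (· ≤ ·) ((C.filter (j ≤ ·) : Finset L) : Set L) :=
      hC.mono (by simp only [Finset.coe_filter]; exact Set.sep_subset _ _)
    obtain ⟨y, hyF, hymin⟩ := chain_exists_min hchainF hne
    exact ⟨y, (mem_filter.1 hyF).1, (mem_filter.1 hyF).2,
      fun t ht hjt => hymin t (mem_filter.2 ⟨ht, hjt⟩)⟩
  choose arr harrC harrLe harrMin using harrE
  -- leave point of m from C
  have hlvE : ∀ m : L, ∃ y, y ∈ C ∧ y ≤ m ∧ ∀ t ∈ C, t ≤ m → t ≤ y := by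
    intro m
    have hne : (C.filter (· ≤ m)).Nonempty :=
      ⟨⊥, mem_filter.2 ⟨bot_mem_max_chain hC hcard, bot_le⟩⟩
    have hchainF : IsChain (· ≤ ·) ((C.filter (· ≤ m) : Finset L) : Set L) :=
      hC.mono (by simp only [Finset.coe_filter]; exact Set.sep_subset _ _)
    obtain ⟨y, hyF, hymax⟩ := chain_exists_max hchainF hne
    exact ⟨y, (mem_filter.1 hyF).1, (mem_filter.1 hyF).2,
      fun t ht htm => hymax t (mem_filter.2 ⟨ht, htm⟩)⟩
  choose lv hlvC hlvLe hlvMax using hlvE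
  -- basic facts
  have harrBot : ∀ j ∈ JIs L, arr j ≠ ⊥ := by
    intro j hj he
    have : j ≤ ⊥ := he ▸ harrLe j
    exact bot_not_mem_JIs (le_bot_iff.1 this ▸ hj)
  have hlvTop : ∀ m ∈ MIs L, lv m ≠ ⊤ := by
    intro m hm he
    have : (⊤:L) ≤ m := he ▸ hlvLe m
    exact top_not_mem_MIs (top_le_iff.1 this ▸ hm)
  -- surjectivity of arr onto C \ {⊥}
  have harrSurj : ∀ y ∈ C, y ≠ ⊥ → ∃ j ∈ JIs L, arr j = y := by
    intro y hy hyb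
    have hpl : pred y < y := (hpredcov y hy hyb).1
    have hex : ∃ j ∈ JIs L, j ≤ y ∧ ¬ j ≤ pred y := by
      by_contra hcon
      push_neg at hcon
      have : y ≤ pred y := by
        conv_lhs => rw [← genJ y]
        refine Finset.sup_le fun j hj => ?_
        have hj' := mem_filter.1 hj
        exact hcon j hj'.1 hj'.2
      exact absurd this (not_le_of_gt hpl)
    obtain ⟨j, hjJI, hjy, hjp⟩ := hex
    refine ⟨j, hjJI, le_antisymm (harrMin j y hy hjy) ?_⟩
    by_contra hlt
    have h1 : arr j < y := lt_of_le_of_ne (harrMin j y hy hjy) (fun he => hlt (he ▸ le_rfl))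
    have h2 : arr j ≤ pred y := hpredmax y hy hyb (arr j) (harrC j) h1
    exact hjp ((harrLe j).trans h2)
  -- surjectivity of lv onto C \ {⊤}
  have hlvSurj : ∀ y ∈ C, y ≠ ⊤ → ∃ m ∈ MIs L, lv m = y := by
    intro y hy hyt
    have hsl : y < succ y := (hsucccov y hy hyt).1
    have hex : ∃ m ∈ MIs L, y ≤ m ∧ ¬ succ y ≤ m := by
      by_contra hcon
      push_neg at hcon
      have : succ y ≤ y := by
        conv_rhs => rw [← genM y]
        refine Finset.le_inf fun m hm => ?_
        have hm' := mem_filter.1 hm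
        exact hcon m hm'.1 hm'.2
      exact absurd this (not_le_of_gt hsl)
    obtain ⟨m, hmMI, hym, hsm⟩ := hex
    refine ⟨m, hmMI, le_antisymm ?_ (hlvMax m y hy hym)⟩
    by_contra hlt
    have h1 : y < lv m := lt_of_le_of_ne (hlvMax m y hy hym) (fun he => hlt (he ▸ le_rfl))
    have h2 : succ y ≤ lv m := hsuccmin y hy hyt (lv m) (hlvC m) h1
    exact hsm (h2.trans (hlvLe m))
  -- injectivity of arr on JIs by cardinality
  have hCbot : (C.erase ⊥).card = (JIs L).card := by
    rw [Finset.card_erase_of_mem (bot_mem_max_chain hC hcard), hcard, hmcc]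
    omega
  have harrImg : Finset.image arr (JIs L) = C.erase ⊥ := by
    apply Finset.eq_of_subset_of_card_le
    · intro x hx
      obtain ⟨j, hj, he⟩ := Finset.mem_image.1 hx
      exact he ▸ Finset.mem_erase.2 ⟨harrBot j hj, harrC j⟩
    · apply Finset.card_le_card
      intro y hy
      obtain ⟨j, hj, he⟩ := harrSurj y (Finset.mem_of_mem_erase hy) (Finset.ne_of_mem_erase hy)
      exact Finset.mem_image.2 ⟨j, hj, he⟩
  have harrInj : Set.InjOn arr ↑(JIs L) := by
    apply Finset.injOn_of_card_image_eq
    rw [harrImg, hCbot]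

  -- define κ
  have hkapE : ∀ j ∈ JIs L, ∃ m, m ∈ MIs L ∧ lv m = pred (arr j) := by
    intro j hj
    have hp : pred (arr j) ∈ C := hpredC (arr j) (harrC j) (harrBot j hj)
    have hpt : pred (arr j) ≠ ⊤ := by
      have : pred (arr j) < arr j := (hpredcov (arr j) (harrC j) (harrBot j hj)).1
      exact ne_top_of_lt this
    obtain ⟨m, hm, he⟩ := hlvSurj (pred (arr j)) hp hpt
    exact ⟨m, hm, he⟩
  choose! kap hkapMI hkapLv using hkapE
  -- basic comparability
  have harrCmp : ∀ j ∈ JIs L, ∀ j' ∈ JIs L, arr j ≤ arr j' ∨ arr j' ≤ arr j := by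
    intro j _ j' _
    rcases eq_or_ne (arr j) (arr j') with he | hne
    · exact Or.inl he.le
    · exact hC (harrC j) (harrC j') hne
  -- key: ¬ j ≤ κ j
  have hnle : ∀ j ∈ JIs L, ¬ j ≤ kap j := by
    intro j hj hle
    set y := arr j with hy
    have hyC : y ∈ C := harrC j
    have hyb : y ≠ ⊥ := harrBot j hj
    set p := pred y with hp
    have hcov : p ⋖ y := hpredcov y hyC hyb
    have hlvm : lv (kap j) = p := hkapLv j hj
    have hym : ¬ y ≤ kap j := by
      intro hle'
      have : y ≤ lv (kap j) := hlvMax (kap j) y hyC hle'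
      rw [hlvm] at this
      exact absurd this (not_le_of_gt hcov.1)
    have hmeet : kap j ⊓ y = p := by
      have hple : p ≤ kap j ⊓ y := by
        refine le_inf ?_ hcov.1.le
        rw [← hlvm]; exact hlvLe (kap j)
      have hlt : kap j ⊓ y < y :=
        lt_of_le_of_ne inf_le_right (fun he => hym (he ▸ inf_le_left))
      by_contra hne
      exact hcov.2 (lt_of_le_of_ne hple (fun he => hne he.symm)) hlt
    have hjp : j ≤ p := hmeet ▸ le_inf hle (harrLe j)
    have : y ≤ p := harrMin j p (hpredC y hyC hyb) hjp
    exact absurd this (not_le_of_gt hcov.1)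
  -- key: ordering property
  have hord : ∀ j ∈ JIs L, ∀ j' ∈ JIs L, ¬ j ≤ kap j' → arr j' ≤ arr j := by
    intro j hj j' hj' hnle'
    by_contra hcon
    have hlt : arr j < arr j' := by
      rcases harrCmp j hj j' hj' with h | h
      · exact lt_of_le_of_ne h (fun he => hcon (he ▸ le_rfl))
      · exact absurd h hcon
    have hyb : arr j' ≠ ⊥ := harrBot j' hj'
    have h2 : arr j ≤ pred (arr j') :=
      hpredmax (arr j') (harrC j') hyb (arr j) (harrC j) hlt
    have h3 : arr j ≤ kap j' := h2.trans (by rw [← hkapLv j' hj']; exact hlvLe (kap j'))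
    exact hnle' ((harrLe j).trans h3)
  -- injectivity of κ
  have hkapInj : Set.InjOn kap ↑(JIs L) := by
    intro j hj j' hj' he
    have hpe : pred (arr j) = pred (arr j') := by
      rw [← hkapLv j (by simpa using hj), ← hkapLv j' (by simpa using hj'), he]
    have harre : arr j = arr j' := by
      by_contra hne
      have hj1 : j ∈ JIs L := by simpa using hj
      have hj'1 : j' ∈ JIs L := by simpa using hj'
      rcases harrCmp j hj1 j' hj'1 with h | h
      · have hlt : arr j < arr j' := lt_of_le_of_ne h hne
        have : arr j ≤ pred (arr j') :=
          hpredmax (arr j') (harrC j') (harrBot j' hj'1) (arr j) (harrC j) hlt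
        rw [← hpe] at this
        exact absurd this (not_le_of_gt (hpredcov (arr j) (harrC j) (harrBot j hj1)).1)
      · have hlt : arr j' < arr j := lt_of_le_of_ne h (fun he' => hne he'.symm)
        have : arr j' ≤ pred (arr j) :=
          hpredmax (arr j) (harrC j) (harrBot j hj1) (arr j') (harrC j') hlt
        rw [hpe] at this
        exact absurd this (not_le_of_gt (hpredcov (arr j') (harrC j') (harrBot j' hj'1)).1)
    exact harrInj hj hj' harre
  -- surjectivity of κ
  have hkapSurj : ∀ m ∈ MIs L, ∃ j ∈ JIs L, kap j = m := by
    intro m hm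
    have himg : Finset.image kap (JIs L) = MIs L := by
      apply Finset.eq_of_subset_of_card_le
      · intro x hx
        obtain ⟨j, hj, he⟩ := Finset.mem_image.1 hx
        exact he ▸ hkapMI j hj
      · rw [Finset.card_image_of_injOn hkapInj, hMIcard]
    rw [← himg] at hm
    obtain ⟨j, hj, he⟩ := Finset.mem_image.1 hm
    exact ⟨j, hj, he⟩
  exact ⟨⟨arr, kap, hkapMI, hkapInj, hkapSurj, hnle, hord, harrInj, harrCmp, hmcc, hMIcard⟩⟩


/-! ### counting characterization of the spine -/

lemma mem_spineF_iff {x : L} : x ∈ spineF L ↔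
    ∃ C : Finset L, IsChain (· ≤ ·) (C : Set L) ∧ C.card = maxChainCard L ∧ x ∈ C := by
  simp [spineF]

lemma AB_le (td : TrimData L) (x : L) :
    (Aset L x).card + (Bset L x).card ≤ (JIs L).card := by
  have h1 : (Aset L x).card ≤ (MIs L \ Bset L x).card := by
    apply Finset.card_le_card_of_injOn td.kap
    · intro j hj
      have hj' := mem_filter.1 hj
      refine Finset.mem_sdiff.2 ⟨td.kapMI j hj'.1, fun hB => ?_⟩
      exact td.nle j hj'.1 (hj'.2.trans (mem_filter.1 hB).2)
    · exact td.kapInj.mono (by exact_mod_cast Finset.filter_subset _ _)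
  have h2 : (MIs L \ Bset L x).card = (MIs L).card - (Bset L x).card :=
    Finset.card_sdiff_of_subset (Finset.filter_subset _ _)
  have h3 : (Bset L x).card ≤ (MIs L).card := Finset.card_le_card (Finset.filter_subset _ _)
  have h4 := td.hMIcard
  omega

lemma spine_AB (td : TrimData L) {x : L} (hx : x ∈ spineF L) :
    (Aset L x).card + (Bset L x).card = (JIs L).card := by
  obtain ⟨C, hC, hcard, hxC⟩ := mem_spineF_iff.1 hx
  set F1 := C.filter (· < x) with hF1
  set F2 := C.filter (x < ·) with hF2
  have hsplit : C.card = F1.card + F2.card + 1 := by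
    have h0 := Finset.card_filter_add_card_filter_not (s := C) (p := (· < x))
    rw [← hF1] at h0
    have hins : C.filter (fun y => ¬ y < x) = insert x F2 := by
      ext y
      simp only [mem_filter, Finset.mem_insert, hF2]
      constructor
      · rintro ⟨hyC, hny⟩
        rcases eq_or_ne y x with rfl | hne
        · exact Or.inl rfl
        · rcases hC hyC hxC hne with h | h
          · exact absurd (lt_of_le_of_ne h hne) hny
          · exact Or.inr ⟨hyC, lt_of_le_of_ne h (fun he => hne he.symm)⟩
      · rintro (rfl | ⟨hyC, hxy⟩)
        · exact ⟨hxC, lt_irrefl _⟩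
        · exact ⟨hyC, fun hlt => absurd (hlt.trans hxy) (lt_irrefl _)⟩
    have hnx : x ∉ F2 := by simp [hF2]
    rw [hins, Finset.card_insert_of_notMem hnx] at h0
    omega
  have hcF1 : F1.card ≤ (Aset L x).card := by
    have hmem : ∀ y ∈ F1, (Aset L y).card ∈ Finset.range ((Aset L x).card) := by
      intro y hy
      exact Finset.mem_range.2 (Aset_card_lt (mem_filter.1 hy).2)
    have hinj : Set.InjOn (fun y => (Aset L y).card) ↑F1 := by
      intro y hy y' hy' he
      simp only [hF1, Finset.coe_filter, Set.mem_setOf_eq] at hy hy'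
      by_contra hne
      rcases hC hy.1 hy'.1 hne with h | h
      · exact absurd he (Nat.ne_of_lt (Aset_card_lt (lt_of_le_of_ne h hne)))
      · exact absurd he.symm
          (Nat.ne_of_lt (Aset_card_lt (lt_of_le_of_ne h (fun hh => hne hh.symm))))
    simpa using Finset.card_le_card_of_injOn _ hmem hinj
  have hcF2 : F2.card ≤ (Bset L x).card := by
    have hmem : ∀ y ∈ F2, (Bset L y).card ∈ Finset.range ((Bset L x).card) := by
      intro y hy
      exact Finset.mem_range.2 (Bset_card_lt (mem_filter.1 hy).2)
    have hinj : Set.InjOn (fun y => (Bset L y).card) ↑F2 := by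
      intro y hy y' hy' he
      simp only [hF2, Finset.coe_filter, Set.mem_setOf_eq] at hy hy'
      by_contra hne
      rcases hC hy.1 hy'.1 hne with h | h
      · exact absurd he.symm (Nat.ne_of_lt (Bset_card_lt (lt_of_le_of_ne h hne)))
      · exact absurd he
          (Nat.ne_of_lt (Bset_card_lt (lt_of_le_of_ne h (fun hh => hne hh.symm))))
    simpa using Finset.card_le_card_of_injOn _ hmem hinj
  have hle := AB_le td x
  have hmcc := td.hmcc
  omega

lemma exists_max_of_cmp (f : L → L) :
    ∀ (S : Finset L), S.Nonempty → (∀ a ∈ S, ∀ b ∈ S, f a ≤ f b ∨ f b ≤ f a) →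
    ∃ a ∈ S, ∀ b ∈ S, f b ≤ f a := by
  intro S
  induction S using Finset.induction_on with
  | empty => intro h; exact absurd h (by simp)
  | @insert a S hna IH =>
    intro _ hcmp
    rcases S.eq_empty_or_nonempty with rfl | hne
    · refine ⟨a, Finset.mem_insert_self a _, fun b hb => ?_⟩
      rcases Finset.mem_insert.1 hb with rfl | hb'
      · exact le_rfl
      · exact absurd hb' (by simp)
    · obtain ⟨m, hm, hmax⟩ := IH hne (fun u hu v hv =>
        hcmp u (Finset.mem_insert_of_mem hu) v (Finset.mem_insert_of_mem hv))
      rcases hcmp a (Finset.mem_insert_self a _) m (Finset.mem_insert_of_mem hm) with h | h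
      · refine ⟨m, Finset.mem_insert_of_mem hm, fun b hb => ?_⟩
        rcases Finset.mem_insert.1 hb with rfl | hb'
        · exact h
        · exact hmax b hb'
      · refine ⟨a, Finset.mem_insert_self a _, fun b hb => ?_⟩
        rcases Finset.mem_insert.1 hb with rfl | hb'
        · exact le_rfl
        · exact (hmax b hb').trans h

lemma exists_min_of_cmp (f : L → L) :
    ∀ (S : Finset L), S.Nonempty → (∀ a ∈ S, ∀ b ∈ S, f a ≤ f b ∨ f b ≤ f a) →
    ∃ a ∈ S, ∀ b ∈ S, f a ≤ f b := by
  intro S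
  induction S using Finset.induction_on with
  | empty => intro h; exact absurd h (by simp)
  | @insert a S hna IH =>
    intro _ hcmp
    rcases S.eq_empty_or_nonempty with rfl | hne
    · refine ⟨a, Finset.mem_insert_self a _, fun b hb => ?_⟩
      rcases Finset.mem_insert.1 hb with rfl | hb'
      · exact le_rfl
      · exact absurd hb' (by simp)
    · obtain ⟨m, hm, hmin⟩ := IH hne (fun u hu v hv =>
        hcmp u (Finset.mem_insert_of_mem hu) v (Finset.mem_insert_of_mem hv))
      rcases hcmp a (Finset.mem_insert_self a _) m (Finset.mem_insert_of_mem hm) with h | h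
      · refine ⟨a, Finset.mem_insert_self a _, fun b hb => ?_⟩
        rcases Finset.mem_insert.1 hb with rfl | hb'
        · exact le_rfl
        · exact h.trans (hmin b hb')
      · refine ⟨m, Finset.mem_insert_of_mem hm, fun b hb => ?_⟩
        rcases Finset.mem_insert.1 hb with rfl | hb'
        · exact h
        · exact hmin b hb'

lemma chain_down (td : TrimData L) : ∀ (k : ℕ) (x : L), (Aset L x).card = k →
    (Aset L x).card + (Bset L x).card = (JIs L).card →
    ∃ D : Finset L, IsChain (· ≤ ·) (D : Set L) ∧ x ∈ D ∧ (∀ y ∈ D, y ≤ x) ∧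
      D.card = (Aset L x).card + 1 := by
  intro k
  induction k with
  | zero =>
    intro x hk _
    have hx : x = ⊥ := by
      have he : Aset L x = ∅ := Finset.card_eq_zero.1 hk
      have := genJ x
      rw [he] at this
      simp at this
      exact this.symm
    subst hx
    exact ⟨{⊥}, by simp [IsChain, Set.Pairwise], by simp, by simp, by simp [hk]⟩
  | succ k IH =>
    intro x hk hab
    have hne : (Aset L x).Nonempty := Finset.card_pos.1 (by omega)
    have hsub : Aset L x ⊆ JIs L := Finset.filter_subset _ _
    obtain ⟨j, hjA, hjmax⟩ := exists_max_of_cmp td.arr (Aset L x) hne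
      (fun a ha b hb => td.arrCmp a (hsub ha) b (hsub hb))
    have hjJ : j ∈ JIs L := hsub hjA
    have hjx : j ≤ x := (mem_filter.1 hjA).2
    set x' := x ⊓ td.kap j with hx'
    have hA' : Aset L x' = (Aset L x).erase j := by
      ext t
      simp only [Aset, mem_filter, Finset.mem_erase]
      constructor
      · rintro ⟨htJ, htx'⟩
        refine ⟨fun he => td.nle j hjJ ?_, htJ, htx'.trans inf_le_left⟩
        subst he
        exact htx'.trans inf_le_right
      · rintro ⟨htj, htJ, htx⟩
        refine ⟨htJ, le_inf htx ?_⟩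
        by_contra hcon
        have h1 := td.ord t htJ j hjJ hcon
        have h2 := hjmax t (mem_filter.2 ⟨htJ, htx⟩)
        exact htj (td.arrInj (by exact_mod_cast htJ) (by exact_mod_cast hjJ)
          (le_antisymm h2 h1))
    have hcA' : (Aset L x').card = k := by
      rw [hA', Finset.card_erase_of_mem hjA, hk]
      omega
    have hkapB : td.kap j ∉ Bset L x := by
      intro hB
      exact td.nle j hjJ (hjx.trans (mem_filter.1 hB).2)
    have hx'le : x' < x := by
      refine lt_of_le_of_ne inf_le_left (fun he => ?_)
      refine td.nle j hjJ ?_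
      have : j ≤ x' := he ▸ hjx
      exact this.trans inf_le_right
    have hB'sub : insert (td.kap j) (Bset L x) ⊆ Bset L x' := by
      intro m hm
      rcases Finset.mem_insert.1 hm with rfl | hm'
      · exact mem_filter.2 ⟨td.kapMI j hjJ, inf_le_right⟩
      · exact Bset_anti hx'le.le hm'
    have hcB' : (Bset L x').card = (Bset L x).card + 1 := by
      have h1 : (Bset L x).card + 1 ≤ (Bset L x').card := by
        rw [← Finset.card_insert_of_notMem hkapB]
        exact Finset.card_le_card hB'sub
      have h2 := AB_le td x'
      omega
    have hab' : (Aset L x').card + (Bset L x').card = (JIs L).card := by omega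
    obtain ⟨D, hD, hxD, hDle, hDcard⟩ := IH x' hcA' hab'
    have hxnD : x ∉ D := fun hx => absurd (hDle x hx) (not_le_of_gt hx'le)
    refine ⟨insert x D, ?_, Finset.mem_insert_self _ _,
      fun y hy => ?_, ?_⟩
    · rw [Finset.coe_insert]
      exact hD.insert (fun b hb _ => Or.inr ((hDle b hb).trans hx'le.le))
    · rcases Finset.mem_insert.1 hy with rfl | hy'
      · exact le_rfl
      · exact (hDle y hy').trans hx'le.le
    · rw [Finset.card_insert_of_notMem hxnD, hDcard, hcA', hk]

lemma chain_up (td : TrimData L) : ∀ (k : ℕ) (x : L), (Bset L x).card = k →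
    (Aset L x).card + (Bset L x).card = (JIs L).card →
    ∃ D : Finset L, IsChain (· ≤ ·) (D : Set L) ∧ x ∈ D ∧ (∀ y ∈ D, x ≤ y) ∧
      D.card = (Bset L x).card + 1 := by
  intro k
  induction k with
  | zero =>
    intro x hk _
    have hx : x = ⊤ := by
      have he : Bset L x = ∅ := Finset.card_eq_zero.1 hk
      have := genM x
      rw [he] at this
      simp at this
      exact this.symm
    subst hx
    exact ⟨{⊤}, by simp [IsChain, Set.Pairwise], by simp, by simp, by simp [hk]⟩
  | succ k IH =>
    intro x hk hab
    have hBne : (Bset L x).Nonempty := Finset.card_pos.1 (by omega)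
    set S := (JIs L).filter (fun j => x ≤ td.kap j) with hS
    have hSne : S.Nonempty := by
      obtain ⟨m, hm⟩ := hBne
      have hm' := mem_filter.1 hm
      obtain ⟨j, hjJ, hje⟩ := td.kapSurj m hm'.1
      exact ⟨j, mem_filter.2 ⟨hjJ, hje ▸ hm'.2⟩⟩
    have hSsub : S ⊆ JIs L := Finset.filter_subset _ _
    obtain ⟨j, hjS, hjmin⟩ := exists_min_of_cmp td.arr S hSne
      (fun a ha b hb => td.arrCmp a (hSsub ha) b (hSsub hb))
    have hjJ : j ∈ JIs L := hSsub hjS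
    have hxkap : x ≤ td.kap j := (mem_filter.1 hjS).2
    have hjx : ¬ j ≤ x := fun hc => td.nle j hjJ (hc.trans hxkap)
    set x' := x ⊔ j with hx'
    have hx'gt : x < x' := lt_of_le_of_ne le_sup_left
      (fun he => hjx (he ▸ le_sup_right))
    have hB' : Bset L x' = (Bset L x).erase (td.kap j) := by
      ext m
      simp only [Bset, mem_filter, Finset.mem_erase]
      constructor
      · rintro ⟨hmM, hxm⟩
        refine ⟨fun he => ?_, hmM, le_sup_left.trans hxm⟩
        exact td.nle j hjJ (le_sup_right.trans (he ▸ hxm))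
      · rintro ⟨hmne, hmM, hxm⟩
        obtain ⟨j'', hj''J, hj''e⟩ := td.kapSurj m hmM
        have hj''S : j'' ∈ S := mem_filter.2 ⟨hj''J, hj''e ▸ hxm⟩
        have hj''ne : j'' ≠ j := fun he => hmne (by rw [← hj''e, he])
        refine ⟨hmM, sup_le hxm ?_⟩
        rw [← hj''e]
        by_contra hcon
        have h1 := td.ord j hjJ j'' hj''J hcon
        have h2 := hjmin j'' hj''S
        exact hj''ne (td.arrInj (by exact_mod_cast hj''J) (by exact_mod_cast hjJ)
          (le_antisymm h1 h2))
    have hkapB : td.kap j ∈ Bset L x := mem_filter.2 ⟨td.kapMI j hjJ, hxkap⟩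
    have hcB' : (Bset L x').card = k := by
      rw [hB', Finset.card_erase_of_mem hkapB, hk]
      omega
    have hA'sub : insert j (Aset L x) ⊆ Aset L x' := by
      intro t ht
      rcases Finset.mem_insert.1 ht with rfl | ht'
      · exact mem_filter.2 ⟨hjJ, le_sup_right⟩
      · exact Aset_mono hx'gt.le ht'
    have hjA : j ∉ Aset L x := fun hc => hjx (mem_filter.1 hc).2
    have hcA' : (Aset L x').card = (Aset L x).card + 1 := by
      have h1 : (Aset L x).card + 1 ≤ (Aset L x').card := by
        rw [← Finset.card_insert_of_notMem hjA]
        exact Finset.card_le_card hA'sub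
      have h2 := AB_le td x'
      omega
    have hab' : (Aset L x').card + (Bset L x').card = (JIs L).card := by omega
    obtain ⟨D, hD, hxD, hDle, hDcard⟩ := IH x' hcB' hab'
    have hxnD : x ∉ D := fun hx => absurd (hDle x hx) (not_le_of_gt hx'gt)
    refine ⟨insert x D, ?_, Finset.mem_insert_self _ _, fun y hy => ?_, ?_⟩
    · rw [Finset.coe_insert]
      exact hD.insert (fun b hb _ => Or.inl (hx'gt.le.trans (hDle b hb)))
    · rcases Finset.mem_insert.1 hy with rfl | hy'
      · exact le_rfl
      · exact hx'gt.le.trans (hDle y hy')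
    · rw [Finset.card_insert_of_notMem hxnD, hDcard, hcB', hk]

lemma AB_spine (td : TrimData L) {x : L}
    (hab : (Aset L x).card + (Bset L x).card = (JIs L).card) : x ∈ spineF L := by
  obtain ⟨D₁, hD₁, hxD₁, hD₁le, hD₁card⟩ := chain_down td (Aset L x).card x rfl hab
  obtain ⟨D₂, hD₂, hxD₂, hD₂le, hD₂card⟩ := chain_up td (Bset L x).card x rfl hab
  have hinter : D₁ ∩ D₂ = {x} := by
    ext y
    simp only [Finset.mem_inter, Finset.mem_singleton]
    constructor
    · rintro ⟨h1, h2⟩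
      exact le_antisymm (hD₁le y h1) (hD₂le y h2)
    · rintro rfl
      exact ⟨hxD₁, hxD₂⟩
  have hcard : (D₁ ∪ D₂).card = (JIs L).card + 1 := by
    have := Finset.card_union_add_card_inter D₁ D₂
    rw [hinter] at this
    simp only [Finset.card_singleton] at this
    omega
  refine mem_spineF_iff.2 ⟨D₁ ∪ D₂, ?_, by rw [hcard, td.hmcc], Finset.mem_union_left _ hxD₁⟩
  intro a ha b hb hne
  simp only [Finset.coe_union, Set.mem_union, Finset.mem_coe] at ha hb
  rcases ha with ha | ha
  · rcases hb with hb | hb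
    · exact hD₁ ha hb hne
    · exact Or.inl ((hD₁le a ha).trans (hD₂le b hb))
  · rcases hb with hb | hb
    · exact Or.inr ((hD₁le b hb).trans (hD₂le a ha))
    · exact hD₂ ha hb hne

lemma spine_xor (td : TrimData L) {x : L} (hx : x ∈ spineF L) :
    ∀ j ∈ JIs L, j ≤ x ∨ x ≤ td.kap j := by
  set S₂ := (JIs L).filter (fun j => x ≤ td.kap j) with hS₂
  have himg : Finset.image td.kap S₂ = Bset L x := by
    ext m
    simp only [Finset.mem_image, Bset, mem_filter, hS₂]
    constructor
    · rintro ⟨j, ⟨hjJ, hxk⟩, rfl⟩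
      exact ⟨td.kapMI j hjJ, hxk⟩
    · rintro ⟨hmM, hxm⟩
      obtain ⟨j, hjJ, hje⟩ := td.kapSurj m hmM
      exact ⟨j, ⟨hjJ, by rw [hje]; exact hxm⟩, hje⟩
  have hcS₂ : S₂.card = (Bset L x).card := by
    rw [← himg, Finset.card_image_of_injOn
      (td.kapInj.mono (by exact_mod_cast Finset.filter_subset _ _))]
  have hdisj : Disjoint (Aset L x) S₂ := by
    rw [Finset.disjoint_left]
    intro j hjA hjS
    exact td.nle j (mem_filter.1 hjA).1 ((mem_filter.1 hjA).2.trans (mem_filter.1 hjS).2)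
  have hsub : Aset L x ∪ S₂ ⊆ JIs L :=
    Finset.union_subset (Finset.filter_subset _ _) (Finset.filter_subset _ _)
  have hcard : (Aset L x ∪ S₂).card = (JIs L).card := by
    rw [Finset.card_union_of_disjoint hdisj, hcS₂]
    exact spine_AB td hx
  have heq : Aset L x ∪ S₂ = JIs L :=
    Finset.eq_of_subset_of_card_le hsub (by omega)
  intro j hj
  rw [← heq] at hj
  rcases Finset.mem_union.1 hj with h | h
  · exact Or.inl (mem_filter.1 h).2
  · exact Or.inr (mem_filter.1 h).2

lemma xor_spine (td : TrimData L) {x : L}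
    (hxor : ∀ j ∈ JIs L, j ≤ x ∨ x ≤ td.kap j) : x ∈ spineF L := by
  set S₂ := (JIs L).filter (fun j => x ≤ td.kap j) with hS₂
  have hcS₂ : S₂.card = (Bset L x).card := by
    have himg : Finset.image td.kap S₂ = Bset L x := by
      ext m
      simp only [Finset.mem_image, Bset, mem_filter, hS₂]
      constructor
      · rintro ⟨j, ⟨hjJ, hxk⟩, rfl⟩
        exact ⟨td.kapMI j hjJ, hxk⟩
      · rintro ⟨hmM, hxm⟩
        obtain ⟨j, hjJ, hje⟩ := td.kapSurj m hmM
        exact ⟨j, ⟨hjJ, by rw [hje]; exact hxm⟩, hje⟩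
    rw [← himg, Finset.card_image_of_injOn
      (td.kapInj.mono (by exact_mod_cast Finset.filter_subset _ _))]
  have hsub : JIs L ⊆ Aset L x ∪ S₂ := by
    intro j hj
    rcases hxor j hj with h | h
    · exact Finset.mem_union_left _ (mem_filter.2 ⟨hj, h⟩)
    · exact Finset.mem_union_right _ (mem_filter.2 ⟨hj, h⟩)
  have h1 : (JIs L).card ≤ (Aset L x).card + (Bset L x).card := by
    calc (JIs L).card ≤ (Aset L x ∪ S₂).card := Finset.card_le_card hsub
    _ ≤ (Aset L x).card + S₂.card := Finset.card_union_le _ _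
    _ = (Aset L x).card + (Bset L x).card := by rw [hcS₂]
  exact AB_spine td (le_antisymm (AB_le td x) h1)

lemma spine_meet (td : TrimData L) {x y : L} (hx : x ∈ spineF L) (hy : y ∈ spineF L) :
    x ⊓ y ∈ spineF L := by
  apply xor_spine td
  intro j hj
  by_cases h1 : j ≤ x
  · by_cases h2 : j ≤ y
    · exact Or.inl (le_inf h1 h2)
    · rcases spine_xor td hy j hj with h' | h'
      · exact absurd h' h2
      · exact Or.inr (inf_le_right.trans h')
  · rcases spine_xor td hx j hj with h' | h'
    · exact absurd h' h1
    · exact Or.inr (inf_le_left.trans h')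


/-! ### spine cover facts -/

lemma mem_spineCov_iff {s z : L} : z ∈ spineCov L s ↔
    z ∈ spineF L ∧ z < s ∧ ∀ t ∈ spineF L, z < t → ¬ t < s := by
  simp only [spineCov, mem_filter]

lemma spineCov_subset_spineF {s : L} : spineCov L s ⊆ spineF L :=
  Finset.filter_subset _ _

lemma bot_mem_spineF : (⊥ : L) ∈ spineF L := by
  obtain ⟨C, hC, hcard⟩ := exists_max_chain (L := L)
  exact mem_spineF_iff.2 ⟨C, hC, hcard, bot_mem_max_chain hC hcard⟩

lemma top_mem_spineF : (⊤ : L) ∈ spineF L := by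
  obtain ⟨C, hC, hcard⟩ := exists_max_chain (L := L)
  exact mem_spineF_iff.2 ⟨C, hC, hcard, top_mem_max_chain hC hcard⟩

lemma spineCov_nonempty {s : L} (hs : s ∈ spineF L) (hsb : s ≠ ⊥) :
    (spineCov L s).Nonempty := by
  have hne : ((spineF L).filter (· < s)).Nonempty :=
    ⟨⊥, mem_filter.2 ⟨bot_mem_spineF, bot_lt_iff_ne_bot.2 hsb⟩⟩
  obtain ⟨z, hz, hzmax⟩ := fin_exists_maximal_old _ hne
  have hz' := mem_filter.1 hz
  refine ⟨z, mem_spineCov_iff.2 ⟨hz'.1, hz'.2, fun t ht hzt hts => ?_⟩⟩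
  exact hzmax t (mem_filter.2 ⟨ht, hts⟩) hzt

/-- The central structural fact: a spine cover differs by exactly one join-irreducible. -/
lemma spine_cov_data (td : TrimData L) {s z : L} (hs : s ∈ spineF L)
    (hzc : z ∈ spineCov L s) :
    ∃ j ∈ JIs L, ¬ j ≤ z ∧ Aset L s = insert j (Aset L z) := by
  obtain ⟨hz, hzs, hzmax⟩ := mem_spineCov_iff.1 hzc
  set DIFF := Aset L s \ Aset L z with hD
  have hDne : DIFF.Nonempty := by
    rw [hD, Finset.sdiff_nonempty]
    intro hsub
    exact absurd (Aset_inj (le_antisymm (Aset_mono hzs.le) hsub)) hzs.ne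
  have hDsub : DIFF ⊆ JIs L := fun t ht =>
    (mem_filter.1 (Finset.mem_sdiff.1 ht).1).1
  obtain ⟨j, hjD, hjmin⟩ := exists_min_of_cmp td.arr DIFF hDne
    (fun a ha b hb => td.arrCmp a (hDsub ha) b (hDsub hb))
  have hjJ : j ∈ JIs L := hDsub hjD
  have hjs : j ≤ s := (mem_filter.1 (Finset.mem_sdiff.1 hjD).1).2
  have hjz : ¬ j ≤ z := fun hc =>
    (Finset.mem_sdiff.1 hjD).2 (mem_filter.2 ⟨hjJ, hc⟩)
  -- every other element of DIFF is impossible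
  have huniq : ∀ j'' ∈ DIFF, j'' = j ∧ True → True := fun _ _ _ => trivial
  -- show z ⊔ j ∈ spineF
  set w := z ⊔ j with hw
  have hws : w ≤ s := sup_le hzs.le hjs
  have hwspine : w ∈ spineF L := by
    apply xor_spine td
    intro j' hj'
    by_cases hj'w : j' ≤ w
    · exact Or.inl hj'w
    have hj'z : ¬ j' ≤ z := fun h => hj'w (h.trans le_sup_left)
    have hzk : z ≤ td.kap j' := (spine_xor td hz j' hj').resolve_left hj'z
    by_cases hj's : j' ≤ s
    · have hj'D : j' ∈ DIFF := Finset.mem_sdiff.2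
        ⟨mem_filter.2 ⟨hj', hj's⟩, fun hc => hj'z (mem_filter.1 hc).2⟩
      have hj'ne : j' ≠ j := fun he => hj'w (he ▸ le_sup_right)
      have hjk : j ≤ td.kap j' := by
        by_contra hc
        have h1 := td.ord j hjJ j' hj' hc
        have h2 := hjmin j' hj'D
        exact hj'ne (td.arrInj (by exact_mod_cast hj') (by exact_mod_cast hjJ)
          (le_antisymm h1 h2))
      exact Or.inr (sup_le hzk hjk)
    · have := (spine_xor td hs j' hj').resolve_left hj's
      exact Or.inr (hws.trans this)
  have hzw : z < w := lt_of_le_of_ne le_sup_left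
    (fun he => hjz (he ▸ le_sup_right))
  have hweq : w = s := by
    rcases lt_or_eq_of_le hws with h | h
    · exact absurd h (hzmax w hwspine hzw)
    · exact h
  -- DIFF = {j}
  have hDj : ∀ j'' ∈ DIFF, j'' = j := by
    intro j'' hj''D
    by_contra hne
    have hj''J : j'' ∈ JIs L := hDsub hj''D
    have hj''z : ¬ j'' ≤ z := fun hc =>
      (Finset.mem_sdiff.1 hj''D).2 (mem_filter.2 ⟨hj''J, hc⟩)
    have hjk : j ≤ td.kap j'' := by
      by_contra hc
      have h1 := td.ord j hjJ j'' hj''J hc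
      have h2 := hjmin j'' hj''D
      exact hne (td.arrInj (by exact_mod_cast hj''J) (by exact_mod_cast hjJ)
        (le_antisymm h1 h2))
    have hzk : z ≤ td.kap j'' := (spine_xor td hz j'' hj''J).resolve_left hj''z
    have hsk : s ≤ td.kap j'' := by
      rw [← hweq, hw]
      exact sup_le hzk hjk
    have hj''s : j'' ≤ s := (mem_filter.1 (Finset.mem_sdiff.1 hj''D).1).2
    exact td.nle j'' hj''J (hj''s.trans hsk)
  refine ⟨j, hjJ, hjz, ?_⟩
  ext t
  simp only [Finset.mem_insert]
  constructor
  · intro ht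
    by_cases htz : t ∈ Aset L z
    · exact Or.inr htz
    · exact Or.inl (hDj t (Finset.mem_sdiff.2 ⟨ht, htz⟩))
  · rintro (rfl | ht)
    · exact mem_filter.2 ⟨hjJ, hjs⟩
    · exact Aset_mono hzs.le ht

lemma spine_cov_x_data (td : TrimData L) {s z x : L} (hs : s ∈ spineF L)
    (hzc : z ∈ spineCov L s) (hxs : x ≤ s) (hxz : ¬ x ≤ z) :
    ∃ j ∈ JIs L, ¬ j ≤ z ∧ Aset L s = insert j (Aset L z) ∧ j ∈ Aset L x ∧
      Aset L (x ⊓ z) = (Aset L x).erase j := by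
  obtain ⟨j, hjJ, hjz, hAs⟩ := spine_cov_data td hs hzc
  have hjx : j ∈ Aset L x := by
    by_contra hc
    have hsub : Aset L x ⊆ Aset L z := by
      intro t ht
      have hts : t ∈ Aset L s := Aset_mono hxs ht
      rw [hAs] at hts
      rcases Finset.mem_insert.1 hts with rfl | h
      · exact absurd ht hc
      · exact h
    have : x ≤ z := by
      calc x = (Aset L x).sup id := (genJ x).symm
      _ ≤ (Aset L z).sup id := Finset.sup_mono hsub
      _ = z := genJ z
    exact hxz this
  refine ⟨j, hjJ, hjz, hAs, hjx, ?_⟩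
  ext t
  simp only [Finset.mem_erase]
  constructor
  · intro ht
    have ht' := mem_filter.1 ht
    refine ⟨fun he => hjz (he ▸ (ht'.2.trans inf_le_right)), mem_filter.2 ⟨ht'.1, ht'.2.trans inf_le_left⟩⟩
  · rintro ⟨htne, ht⟩
    have ht' := mem_filter.1 ht
    have htz : t ≤ z := by
      have hts : t ∈ Aset L s := Aset_mono hxs ht
      rw [hAs] at hts
      rcases Finset.mem_insert.1 hts with rfl | h
      · exact absurd rfl htne
      · exact (mem_filter.1 h).2
    exact mem_filter.2 ⟨ht'.1, le_inf ht'.2 htz⟩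

/-- K2: meeting with a spine cover gives a cover. -/
lemma spine_cov_meet_covBy (td : TrimData L) {s z x : L} (hs : s ∈ spineF L)
    (hzc : z ∈ spineCov L s) (hxs : x ≤ s) (hxz : ¬ x ≤ z) : (x ⊓ z) ⋖ x := by
  obtain ⟨j, hjJ, hjz, hAs, hjx, hAu⟩ := spine_cov_x_data td hs hzc hxs hxz
  have hlt : x ⊓ z < x := by
    refine lt_of_le_of_ne inf_le_left (fun he => ?_)
    have : j ∈ Aset L (x ⊓ z) := he.symm ▸ hjx
    rw [hAu] at this
    exact (Finset.mem_erase.1 this).1 rfl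
  refine ⟨hlt, fun t h1 h2 => ?_⟩
  have hc1 : (Aset L (x ⊓ z)).card < (Aset L t).card := Aset_card_lt h1
  have hc2 : (Aset L t).card < (Aset L x).card := Aset_card_lt h2
  rw [hAu, Finset.card_erase_of_mem hjx] at hc1
  omega

/-- K3: injectivity of the meet map. -/
lemma spine_cov_meet_inj (td : TrimData L) {s z₁ z₂ x : L} (hs : s ∈ spineF L)
    (hz₁ : z₁ ∈ spineCov L s) (hz₂ : z₂ ∈ spineCov L s) (hxs : x ≤ s)
    (hxz₁ : ¬ x ≤ z₁) (hxz₂ : ¬ x ≤ z₂) (he : x ⊓ z₁ = x ⊓ z₂) : z₁ = z₂ := by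
  obtain ⟨j₁, hj₁J, hj₁z, hAs₁, hj₁x, hAu₁⟩ := spine_cov_x_data td hs hz₁ hxs hxz₁
  obtain ⟨j₂, hj₂J, hj₂z, hAs₂, hj₂x, hAu₂⟩ := spine_cov_x_data td hs hz₂ hxs hxz₂
  have hj : j₁ = j₂ := by
    by_contra hne
    have h1 : (Aset L x).erase j₁ = (Aset L x).erase j₂ := by
      rw [← hAu₁, he, hAu₂]
    have : j₂ ∈ (Aset L x).erase j₁ := Finset.mem_erase.2 ⟨fun hh => hne hh.symm, hj₂x⟩
    rw [h1] at this
    exact (Finset.mem_erase.1 this).1 rfl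
  subst hj
  have hz₁e : (Aset L s).erase j₁ = Aset L z₁ := by
    rw [hAs₁]
    exact Finset.erase_insert (fun hc => hj₁z (mem_filter.1 hc).2)
  have hz₂e : (Aset L s).erase j₁ = Aset L z₂ := by
    rw [hAs₂]
    exact Finset.erase_insert (fun hc => hj₂z (mem_filter.1 hc).2)
  exact Aset_inj (hz₁e.symm.trans hz₂e)

/-- K1: meets of spine covers stay in the spine. -/
lemma spine_inf_mem (td : TrimData L) {s : L} (hs : s ∈ spineF L) :
    ∀ T : Finset L, T ⊆ spineCov L s → (insert s T).inf id ∈ spineF L := by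
  intro T
  induction T using Finset.induction_on with
  | empty =>
    intro _
    simpa using hs
  | @insert z T hzT IH =>
    intro hsub
    have hzc : z ∈ spineCov L s := hsub (Finset.mem_insert_self _ _)
    have hTsub : T ⊆ spineCov L s := fun t ht => hsub (Finset.mem_insert_of_mem ht)
    have heq : (insert s (insert z T)).inf id = z ⊓ (insert s T).inf id := by
      rw [Finset.insert_comm, Finset.inf_insert]
      rfl
    rw [heq]
    exact spine_meet td (spineCov_subset_spineF hzc) (IH hTsub)


/-! ### summation helpers -/

lemma sum_w (A : Finset L) (a b : ℝ) :
    ∑ T ∈ A.powerset, a ^ T.card * b ^ (A.card - T.card) = (a + b) ^ A.card := by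
  have h := Finset.prod_add (fun _ : L => a) (fun _ : L => b) A
  simp only [Finset.prod_const] at h
  calc ∑ T ∈ A.powerset, a ^ T.card * b ^ (A.card - T.card)
      = ∑ T ∈ A.powerset, a ^ T.card * b ^ ((A \ T).card) := by
        refine Finset.sum_congr rfl (fun T hT => ?_)
        rw [Finset.card_sdiff_of_subset (Finset.mem_powerset.1 hT)]
    _ = (a + b) ^ A.card := h.symm

lemma sum_powerset_union {A B : Finset L} (h : Disjoint A B) (f : Finset L → ℝ) :
    ∑ S ∈ (A ∪ B).powerset, f S = ∑ S₁ ∈ A.powerset, ∑ S₂ ∈ B.powerset, f (S₁ ∪ S₂) := by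
  rw [← Finset.sum_product']
  refine Finset.sum_nbij' (fun S => (S ∩ A, S ∩ B)) (fun P => P.1 ∪ P.2) ?_ ?_ ?_ ?_ ?_
  · intro S hS
    simp only [Finset.mem_product, Finset.mem_powerset]
    exact ⟨Finset.inter_subset_right, Finset.inter_subset_right⟩
  · intro P hP
    simp only [Finset.mem_product, Finset.mem_powerset] at hP
    exact Finset.mem_powerset.2 (Finset.union_subset
      (hP.1.trans Finset.subset_union_left) (hP.2.trans Finset.subset_union_right))
  · intro S hS
    have hsub := Finset.mem_powerset.1 hS
    simp only []
    rw [← Finset.inter_union_distrib_left]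
    exact Finset.inter_eq_left.2 hsub
  · intro P hP
    simp only [Finset.mem_product, Finset.mem_powerset] at hP
    have h1 : (P.1 ∪ P.2) ∩ A = P.1 := by
      ext t
      simp only [Finset.mem_inter, Finset.mem_union]
      constructor
      · rintro ⟨(h1 | h1), h2⟩
        · exact h1
        · exact absurd h2 (Finset.disjoint_right.1 h (hP.2 h1))
      · intro ht
        exact ⟨Or.inl ht, hP.1 ht⟩
    have h2 : (P.1 ∪ P.2) ∩ B = P.2 := by
      ext t
      simp only [Finset.mem_inter, Finset.mem_union]
      constructor
      · rintro ⟨(h1 | h1), h2⟩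
        · exact absurd h2 (Finset.disjoint_left.1 h (hP.1 h1))
        · exact h1
      · intro ht
        exact ⟨Or.inr ht, hP.2 ht⟩
    exact Prod.ext h1 h2
  · intro S hS
    congr 1
    have hsub := Finset.mem_powerset.1 hS
    rw [← Finset.inter_union_distrib_left]
    exact (Finset.inter_eq_left.2 hsub).symm

lemma sum_powerset_image {Z : Finset L} {c : L → L} (hinj : Set.InjOn c ↑Z)
    (f : Finset L → ℝ) :
    ∑ S ∈ (Z.image c).powerset, f S = ∑ T ∈ Z.powerset, f (T.image c) := by
  refine Finset.sum_nbij' (fun S => Z.filter (fun z => c z ∈ S)) (fun T => T.image c)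
    ?_ ?_ ?_ ?_ ?_
  · intro S _
    exact Finset.mem_powerset.2 (Finset.filter_subset _ _)
  · intro T hT
    exact Finset.mem_powerset.2 (Finset.image_subset_image (Finset.mem_powerset.1 hT))
  · intro S hS
    have hsub := Finset.mem_powerset.1 hS
    ext t
    simp only [Finset.mem_image, mem_filter]
    constructor
    · rintro ⟨z, ⟨hzZ, hczS⟩, rfl⟩
      exact hczS
    · intro ht
      obtain ⟨z, hzZ, rfl⟩ := Finset.mem_image.1 (hsub ht)
      exact ⟨z, ⟨hzZ, ht⟩, rfl⟩
  · intro T hT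
    have hsub := Finset.mem_powerset.1 hT
    ext z
    simp only [mem_filter, Finset.mem_image]
    constructor
    · rintro ⟨hzZ, t, htT, he⟩
      rwa [hinj (by exact_mod_cast hsub htT) (by exact_mod_cast hzZ) he] at htT
    · intro hz
      exact ⟨hsub hz, z, hz, rfl⟩
  · intro S hS
    congr 1
    have hsub := Finset.mem_powerset.1 hS
    ext t
    simp only [Finset.mem_image, mem_filter]
    constructor
    · intro ht
      obtain ⟨z, hzZ, rfl⟩ := Finset.mem_image.1 (hsub ht)
      exact ⟨z, ⟨hzZ, ht⟩, rfl⟩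
    · rintro ⟨z, ⟨hzZ, hczS⟩, rfl⟩
      exact hczS

lemma expand_ungar {p : ℝ} {E : L → ℝ} (hE : IsUngarExp p E) {x : L} (hx : x ≠ ⊥) :
    E x = 1 + ∑ S ∈ (ungarCov x).powerset,
      (p ^ S.card * (1-p) ^ ((ungarCov x).card - S.card)) * E ((insert x S).inf id) := by
  rw [hE.2 x hx]
  congr 1
  rw [← Finset.sum_fiberwise_of_maps_to (g := fun S : Finset L => (insert x S).inf id)
    (t := (univ : Finset L)) (fun S _ => mem_univ _)
    (fun S => (p ^ S.card * (1-p) ^ ((ungarCov x).card - S.card)) * E ((insert x S).inf id))]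
  apply Finset.sum_congr rfl
  intro y _
  rw [ungarP, Finset.sum_mul]
  apply Finset.sum_congr rfl
  intro S hS
  rw [(mem_filter.1 hS).2]

lemma expand_spine (td : TrimData L) {p : ℝ} {E' : L → ℝ} (hE' : IsSpineExp p E')
    {s : L} (hs : s ∈ spineF L) (hsb : s ≠ ⊥) :
    E' s = 1 + ∑ T ∈ (spineCov L s).powerset,
      (p ^ T.card * (1-p) ^ ((spineCov L s).card - T.card)) * E' ((insert s T).inf id) := by
  rw [hE'.2 s hs hsb]
  congr 1
  rw [← Finset.sum_fiberwise_of_maps_to (g := fun T : Finset L => (insert s T).inf id)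
    (t := spineF L) (fun T hT => spine_inf_mem td hs T (Finset.mem_powerset.1 hT))
    (fun T => (p ^ T.card * (1-p) ^ ((spineCov L s).card - T.card)) * E' ((insert s T).inf id))]
  apply Finset.sum_congr rfl
  intro y _
  rw [spineP, Finset.sum_mul]
  apply Finset.sum_congr rfl
  intro T hT
  rw [(mem_filter.1 hT).2]


/-! ### the main inequality -/

theorem main_ineq (td : TrimData L) {p : ℝ} (hp : 0 < p) (hp1 : p ≤ 1)
    {E E' : L → ℝ} (hE : IsUngarExp p E) (hE' : IsSpineExp p E') :
    ∀ s, s ∈ spineF L → 0 ≤ E' s ∧ ∀ x, x ≤ s → E x ≤ E' s := by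
  intro s
  induction s using WellFoundedLT.induction with
  | _ s IHout =>
  intro hs
  rcases eq_or_ne s ⊥ with rfl | hsb
  · refine ⟨le_of_eq hE'.1.symm, fun x hx => ?_⟩
    rw [le_bot_iff.1 hx, hE.1, hE'.1]
  have hq0 : (0:ℝ) ≤ 1 - p := by linarith
  have hq1 : 1 - p < 1 := by linarith
  have hpq : p + (1 - p) = 1 := by ring
  set q : ℝ := 1 - p with hqdef
  set SC := spineCov L s with hSCdef
  set k := SC.card with hkdef
  have hkpos : 0 < k := Finset.card_pos.2 (spineCov_nonempty hs hsb)
  have hEx : E' s = 1 + ∑ T ∈ SC.powerset,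
      (p ^ T.card * q ^ (k - T.card)) * E' ((insert s T).inf id) :=
    expand_spine td hE' hs hsb
  have hinfT_mem : ∀ T ∈ SC.powerset, (insert s T).inf id ∈ spineF L :=
    fun T hT => spine_inf_mem td hs T (Finset.mem_powerset.1 hT)
  have hinfT_lt : ∀ T ∈ SC.powerset, T ≠ ∅ → (insert s T).inf id < s := by
    intro T hT hTne
    obtain ⟨z, hz⟩ := Finset.nonempty_iff_ne_empty.2 hTne
    have h1 : (insert s T).inf id ≤ z := Finset.inf_le (Finset.mem_insert_of_mem hz)
    have h2 : z < s :=
      (mem_spineCov_iff.1 (Finset.mem_powerset.1 hT hz)).2.1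
    exact lt_of_le_of_lt h1 h2
  have hinf_empty : (insert s (∅ : Finset L)).inf id = s := by simp
  have h_empty_term : (p ^ (∅:Finset L).card * q ^ (k - (∅:Finset L).card)) *
      E' ((insert s (∅:Finset L)).inf id) = q ^ k * E' s := by
    rw [hinf_empty]
    simp
  have hsplitE' : E' s = 1 + ((q ^ k) * E' s +
      ∑ T ∈ SC.powerset.erase ∅, (p ^ T.card * q ^ (k - T.card)) * E' ((insert s T).inf id)) := by
    have h2 : ∑ T ∈ SC.powerset, (p ^ T.card * q ^ (k - T.card)) * E' ((insert s T).inf id)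
        = q ^ k * E' s + ∑ T ∈ SC.powerset.erase ∅,
          (p ^ T.card * q ^ (k - T.card)) * E' ((insert s T).inf id) := by
      rw [← Finset.add_sum_erase _ _ (Finset.empty_mem_powerset SC), h_empty_term]
    calc E' s = 1 + ∑ T ∈ SC.powerset,
        (p ^ T.card * q ^ (k - T.card)) * E' ((insert s T).inf id) := hEx
      _ = _ := by rw [h2]
  have hSig0 : 0 ≤ ∑ T ∈ SC.powerset.erase ∅,
      (p ^ T.card * q ^ (k - T.card)) * E' ((insert s T).inf id) := by
    apply Finset.sum_nonneg
    intro T hT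
    have hT1 : T ∈ SC.powerset := Finset.mem_of_mem_erase hT
    have hTne : T ≠ ∅ := Finset.ne_of_mem_erase hT
    exact mul_nonneg (mul_nonneg (pow_nonneg hp.le _) (pow_nonneg hq0 _))
      ((IHout _ (hinfT_lt T hT1 hTne) (hinfT_mem T hT1)).1)
  have hqk1 : q ^ k < 1 := pow_lt_one₀ hq0 hq1 (by omega)
  have hqk0 : (0:ℝ) ≤ q ^ k := pow_nonneg hq0 k
  have hE's0 : 0 ≤ E' s := by nlinarith [hsplitE', hSig0]
  refine ⟨hE's0, ?_⟩
  intro x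
  induction x using WellFoundedLT.induction with
  | _ x IHin =>
  intro hxs
  rcases eq_or_ne x ⊥ with rfl | hxb
  · rw [hE.1]; exact hE's0
  -- inner setup
  set cov := ungarCov x with hcovdef
  set Z₀ := SC.filter (fun z => x ≤ z) with hZ₀def
  set Z₁ := SC.filter (fun z => ¬ x ≤ z) with hZ₁def
  have hZdisj : Disjoint Z₀ Z₁ := by
    rw [Finset.disjoint_left]
    intro z h0 h1
    exact (mem_filter.1 h1).2 (mem_filter.1 h0).2
  have hZunion : Z₀ ∪ Z₁ = SC := Finset.filter_union_filter_not_eq _ SC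
  have hZcard : Z₀.card + Z₁.card = k := by
    rw [← Finset.card_union_of_disjoint hZdisj, hZunion]
  set c : L → L := fun z => x ⊓ z with hcdef
  have hcmem : ∀ z ∈ Z₁, c z ∈ cov := by
    intro z hz
    have hz' := mem_filter.1 hz
    have hcv := spine_cov_meet_covBy td hs hz'.1 hxs hz'.2
    exact mem_filter.2 ⟨mem_univ _, hcv⟩
  have hcinj : Set.InjOn c ↑Z₁ := by
    intro z₁ hz₁ z₂ hz₂ he
    have h1 := mem_filter.1 (by exact_mod_cast hz₁ : z₁ ∈ Z₁)
    have h2 := mem_filter.1 (by exact_mod_cast hz₂ : z₂ ∈ Z₁)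
    exact spine_cov_meet_inj td hs h1.1 h2.1 hxs h1.2 h2.2 he
  set I := Z₁.image c with hIdef
  have hIsub : I ⊆ cov := by
    intro t ht
    obtain ⟨z, hz, rfl⟩ := Finset.mem_image.1 ht
    exact hcmem z hz
  set R := cov \ I with hRdef
  have hcovu : I ∪ R = cov := Finset.union_sdiff_of_subset hIsub
  have hIRdisj : Disjoint I R := Finset.disjoint_sdiff
  set r := R.card with hrdef
  have hIcard : I.card = Z₁.card := Finset.card_image_of_injOn hcinj
  have hcovcard : cov.card = Z₁.card + r := by
    rw [← hcovu, Finset.card_union_of_disjoint hIRdisj, hIcard]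
  have hw₂sum : ∑ S ∈ R.powerset, p ^ S.card * q ^ (r - S.card) = 1 := by
    rw [sum_w, hpq, one_pow]
  have hw₂0 : ∀ S : Finset L, 0 ≤ p ^ S.card * q ^ (r - S.card) :=
    fun S => mul_nonneg (pow_nonneg hp.le _) (pow_nonneg hq0 _)
  -- inner sum for a given T₁ ⊆ Z₁
  set u : Finset L → Finset L → L :=
    fun T₁ S₂ => (insert x (T₁.image c ∪ S₂)).inf id with hudef
  set inner : Finset L → ℝ :=
    fun T₁ => ∑ S₂ ∈ R.powerset, (p ^ S₂.card * q ^ (r - S₂.card)) * E (u T₁ S₂)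
    with hinnerdef
  -- step 1: E x = 1 + ∑_{T₁ ⊆ Z₁} c₁ T₁ * inner T₁
  have hstep1 : E x = 1 + ∑ T₁ ∈ Z₁.powerset,
      (p ^ T₁.card * q ^ (Z₁.card - T₁.card)) * inner T₁ := by
    rw [expand_ungar hE hxb]
    congr 1
    have hps : (ungarCov x).powerset = (I ∪ R).powerset := by rw [hcovu]
    rw [hps, sum_powerset_union hIRdisj (fun S =>
      (p ^ S.card * q ^ ((ungarCov x).card - S.card)) * E ((insert x S).inf id))]
    rw [sum_powerset_image hcinj (fun S₁ => ∑ S₂ ∈ R.powerset,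
      (p ^ (S₁ ∪ S₂).card * q ^ ((ungarCov x).card - (S₁ ∪ S₂).card)) *
        E ((insert x (S₁ ∪ S₂)).inf id))]
    apply Finset.sum_congr rfl
    intro T₁ hT₁
    have hT₁sub : T₁ ⊆ Z₁ := Finset.mem_powerset.1 hT₁
    rw [hinnerdef]
    rw [Finset.mul_sum]
    apply Finset.sum_congr rfl
    intro S₂ hS₂
    have hS₂sub : S₂ ⊆ R := Finset.mem_powerset.1 hS₂
    have hdisj' : Disjoint (T₁.image c) S₂ :=
      hIRdisj.mono (Finset.image_subset_image hT₁sub) hS₂sub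
    have hcards : (T₁.image c ∪ S₂).card = T₁.card + S₂.card := by
      rw [Finset.card_union_of_disjoint hdisj',
        Finset.card_image_of_injOn (hcinj.mono (by exact_mod_cast hT₁sub))]
    have hT₁le : T₁.card ≤ Z₁.card := Finset.card_le_card hT₁sub
    have hS₂le : S₂.card ≤ r := Finset.card_le_card hS₂sub
    have hexp : cov.card - (T₁.card + S₂.card) = (Z₁.card - T₁.card) + (r - S₂.card) := by
      omega
    rw [hcards, hexp, pow_add, pow_add]
    ring
  -- step 2: introduce phantom Z₀ bits
  have hc₀sum : ∑ T₀ ∈ Z₀.powerset, p ^ T₀.card * q ^ (Z₀.card - T₀.card) = 1 := by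
    rw [sum_w, hpq, one_pow]
  have hstep2 : E x = 1 + ∑ T₀ ∈ Z₀.powerset, ∑ T₁ ∈ Z₁.powerset,
      (p ^ T₀.card * q ^ (Z₀.card - T₀.card)) *
        ((p ^ T₁.card * q ^ (Z₁.card - T₁.card)) * inner T₁) := by
    rw [hstep1]
    congr 1
    have hfact : (∑ T₀ ∈ Z₀.powerset, p ^ T₀.card * q ^ (Z₀.card - T₀.card)) *
        (∑ T₁ ∈ Z₁.powerset, (p ^ T₁.card * q ^ (Z₁.card - T₁.card)) * inner T₁)
        = ∑ T₀ ∈ Z₀.powerset, ∑ T₁ ∈ Z₁.powerset,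
          (p ^ T₀.card * q ^ (Z₀.card - T₀.card)) *
            ((p ^ T₁.card * q ^ (Z₁.card - T₁.card)) * inner T₁) := by
      rw [Finset.sum_mul]
      exact Finset.sum_congr rfl (fun T₀ _ => Finset.mul_sum _ _ _)
    rw [← hfact, hc₀sum, one_mul]
  -- the analogous split of the spine recursion
  have hstepH : E' s = 1 + ∑ T₀ ∈ Z₀.powerset, ∑ T₁ ∈ Z₁.powerset,
      (p ^ T₀.card * q ^ (Z₀.card - T₀.card)) *
        ((p ^ T₁.card * q ^ (Z₁.card - T₁.card)) * E' ((insert s (T₀ ∪ T₁)).inf id)) := by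
    rw [hEx]
    congr 1
    rw [show SC.powerset = (Z₀ ∪ Z₁).powerset by rw [hZunion]]
    rw [sum_powerset_union hZdisj]
    apply Finset.sum_congr rfl
    intro T₀ hT₀
    apply Finset.sum_congr rfl
    intro T₁ hT₁
    have hT₀sub : T₀ ⊆ Z₀ := Finset.mem_powerset.1 hT₀
    have hT₁sub : T₁ ⊆ Z₁ := Finset.mem_powerset.1 hT₁
    have hdisj' : Disjoint T₀ T₁ := hZdisj.mono hT₀sub hT₁sub
    have hcards : (T₀ ∪ T₁).card = T₀.card + T₁.card := Finset.card_union_of_disjoint hdisj'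
    have h0le : T₀.card ≤ Z₀.card := Finset.card_le_card hT₀sub
    have h1le : T₁.card ≤ Z₁.card := Finset.card_le_card hT₁sub
    have hexp : k - (T₀.card + T₁.card) = (Z₀.card - T₀.card) + (Z₁.card - T₁.card) := by omega
    rw [hcards, hexp, pow_add, pow_add]
    ring
  -- bound the inner sum when T₁ = ∅
  have hu_empty : ∀ S₂ : Finset L, u ∅ S₂ = (insert x S₂).inf id := by
    intro S₂
    rw [hudef]
    simp
  have claim_inner_empty : inner ∅ ≤ q ^ r * E x + (1 - q ^ r) * E' s := by
    rw [hinnerdef]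
    simp only []
    rw [← Finset.add_sum_erase _ _ (Finset.empty_mem_powerset R)]
    have h0 : (p ^ (∅ : Finset L).card * q ^ (r - (∅ : Finset L).card)) * E (u ∅ ∅)
        = q ^ r * E x := by
      rw [hu_empty]
      simp
    rw [h0]
    have hsum_erase : ∑ S₂ ∈ R.powerset.erase ∅, (p ^ S₂.card * q ^ (r - S₂.card))
        = 1 - q ^ r := by
      have h1 := hw₂sum
      rw [← Finset.add_sum_erase _ _ (Finset.empty_mem_powerset R)] at h1
      simp only [Finset.card_empty, pow_zero, Nat.sub_zero, one_mul] at h1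
      linarith
    have hrest : ∑ S₂ ∈ R.powerset.erase ∅, (p ^ S₂.card * q ^ (r - S₂.card)) * E (u ∅ S₂)
        ≤ ∑ S₂ ∈ R.powerset.erase ∅, (p ^ S₂.card * q ^ (r - S₂.card)) * E' s := by
      apply Finset.sum_le_sum
      intro S₂ hS₂
      have hS₂p : S₂ ∈ R.powerset := Finset.mem_of_mem_erase hS₂
      have hS₂ne : S₂ ≠ ∅ := Finset.ne_of_mem_erase hS₂
      obtain ⟨c', hc'⟩ := Finset.nonempty_iff_ne_empty.2 hS₂ne
      have hc'R : c' ∈ R := Finset.mem_powerset.1 hS₂p hc'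
      have hc'cov : c' ⋖ x := by
        have : c' ∈ cov := (Finset.mem_sdiff.1 hc'R).1
        exact (mem_filter.1 this).2
      have hult : u ∅ S₂ < x := by
        have h1 : u ∅ S₂ ≤ c' := by
          rw [hu_empty]
          exact Finset.inf_le (Finset.mem_insert_of_mem hc')
        exact lt_of_le_of_lt h1 hc'cov.lt
      have hule : u ∅ S₂ ≤ s := by
        have h1 : u ∅ S₂ ≤ x := by
          rw [hu_empty]
          exact Finset.inf_le (Finset.mem_insert_self x _)
        exact h1.trans hxs
      exact mul_le_mul_of_nonneg_left (IHin _ hult hule) (hw₂0 S₂)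
    calc q ^ r * E x + ∑ S₂ ∈ R.powerset.erase ∅,
          (p ^ S₂.card * q ^ (r - S₂.card)) * E (u ∅ S₂)
        ≤ q ^ r * E x + ∑ S₂ ∈ R.powerset.erase ∅,
          (p ^ S₂.card * q ^ (r - S₂.card)) * E' s := by linarith [hrest]
      _ = q ^ r * E x + (1 - q ^ r) * E' s := by
          rw [← Finset.sum_mul, hsum_erase]
  -- bound the inner sum when T₀ ∪ T₁ ≠ ∅
  have claim_nonempty : ∀ T₀ ∈ Z₀.powerset, ∀ T₁ ∈ Z₁.powerset, T₀ ∪ T₁ ≠ ∅ →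
      inner T₁ ≤ E' ((insert s (T₀ ∪ T₁)).inf id) := by
    intro T₀ hT₀ T₁ hT₁ hne
    have hT₀sub : T₀ ⊆ Z₀ := Finset.mem_powerset.1 hT₀
    have hT₁sub : T₁ ⊆ Z₁ := Finset.mem_powerset.1 hT₁
    have hTsub : T₀ ∪ T₁ ∈ SC.powerset := by
      rw [Finset.mem_powerset, ← hZunion]
      exact Finset.union_subset_union hT₀sub hT₁sub
    have hv_mem := hinfT_mem _ hTsub
    have hv_lt := hinfT_lt _ hTsub hne
    have IH := (IHout _ hv_lt hv_mem).2
    have hub : ∀ S₂ ∈ R.powerset, u T₁ S₂ ≤ (insert s (T₀ ∪ T₁)).inf id := by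
      intro S₂ _
      apply Finset.le_inf
      intro b hb
      have hux : u T₁ S₂ ≤ x := Finset.inf_le (Finset.mem_insert_self x _)
      rcases Finset.mem_insert.1 hb with rfl | hb'
      · exact hux.trans hxs
      rcases Finset.mem_union.1 hb' with hb0 | hb1
      · exact hux.trans (mem_filter.1 (hT₀sub hb0)).2
      · have hcb : c b ∈ insert x (T₁.image c ∪ S₂) :=
          Finset.mem_insert_of_mem (Finset.mem_union_left _ (Finset.mem_image_of_mem c hb1))
        have h1 : u T₁ S₂ ≤ c b := Finset.inf_le hcb
        exact h1.trans inf_le_right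
    calc inner T₁
        ≤ ∑ S₂ ∈ R.powerset, (p ^ S₂.card * q ^ (r - S₂.card)) *
            E' ((insert s (T₀ ∪ T₁)).inf id) := by
          apply Finset.sum_le_sum
          intro S₂ hS₂
          exact mul_le_mul_of_nonneg_left (IH _ (hub S₂ hS₂)) (hw₂0 S₂)
      _ = E' ((insert s (T₀ ∪ T₁)).inf id) := by
          rw [← Finset.sum_mul, hw₂sum, one_mul]
  -- the correction term
  set δ : ℝ := q ^ k * (q ^ r * E x + (1 - q ^ r) * E' s) - q ^ k * E' s with hδdef
  have hmaster : ∀ T₀ ∈ Z₀.powerset, ∀ T₁ ∈ Z₁.powerset,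
      (p ^ T₀.card * q ^ (Z₀.card - T₀.card)) *
        ((p ^ T₁.card * q ^ (Z₁.card - T₁.card)) * inner T₁)
      ≤ (p ^ T₀.card * q ^ (Z₀.card - T₀.card)) *
        ((p ^ T₁.card * q ^ (Z₁.card - T₁.card)) * E' ((insert s (T₀ ∪ T₁)).inf id))
        + (if T₀ = ∅ then (if T₁ = ∅ then δ else 0) else 0) := by
    intro T₀ hT₀ T₁ hT₁
    have hc₀0 : (0:ℝ) ≤ p ^ T₀.card * q ^ (Z₀.card - T₀.card) :=
      mul_nonneg (pow_nonneg hp.le _) (pow_nonneg hq0 _)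
    have hc₁0 : (0:ℝ) ≤ p ^ T₁.card * q ^ (Z₁.card - T₁.card) :=
      mul_nonneg (pow_nonneg hp.le _) (pow_nonneg hq0 _)
    by_cases hT₀e : T₀ = ∅
    · by_cases hT₁e : T₁ = ∅
      · subst hT₀e; subst hT₁e
        simp only [if_pos rfl, if_true, Finset.card_empty, pow_zero, Nat.sub_zero, one_mul,
          Finset.empty_union, Finset.union_empty]
        have h1 : q ^ Z₀.card * (q ^ Z₁.card * inner ∅)
            ≤ q ^ Z₀.card * (q ^ Z₁.card * (q ^ r * E x + (1 - q ^ r) * E' s)) := by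
          apply mul_le_mul_of_nonneg_left _ (pow_nonneg hq0 _)
          exact mul_le_mul_of_nonneg_left claim_inner_empty (pow_nonneg hq0 _)
        have h2 : q ^ Z₀.card * q ^ Z₁.card = q ^ k := by
          rw [← pow_add, hZcard]
        have h3 : (insert s (∅ : Finset L)).inf id = s := hinf_empty
        have h4 : q ^ Z₀.card * (q ^ Z₁.card * (q ^ r * E x + (1 - q ^ r) * E' s))
            = q ^ k * (q ^ r * E x + (1 - q ^ r) * E' s) := by rw [← mul_assoc, h2]
        have h5 : q ^ Z₀.card * (q ^ Z₁.card * E' s) = q ^ k * E' s := by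
          rw [← mul_assoc, h2]
        rw [h3, hδdef]
        linarith [h1, h4, h5]
      · have hne : T₀ ∪ T₁ ≠ ∅ := by
          subst hT₀e
          simpa using hT₁e
        simp only [if_neg hT₁e, if_pos hT₀e, add_zero, ite_self]
        exact mul_le_mul_of_nonneg_left
          (mul_le_mul_of_nonneg_left (claim_nonempty T₀ hT₀ T₁ hT₁ hne) hc₁0) hc₀0
    · have hne : T₀ ∪ T₁ ≠ ∅ := by
        intro hc
        exact hT₀e (Finset.union_eq_empty.1 hc).1
      simp only [if_neg hT₀e, add_zero]
      exact mul_le_mul_of_nonneg_left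
        (mul_le_mul_of_nonneg_left (claim_nonempty T₀ hT₀ T₁ hT₁ hne) hc₁0) hc₀0
  -- summing the correction
  have hsumite : ∑ T₀ ∈ Z₀.powerset, ∑ T₁ ∈ Z₁.powerset,
      (if T₀ = ∅ then (if T₁ = ∅ then δ else 0) else 0) = δ := by
    have hinner : ∀ T₀ ∈ Z₀.powerset, ∑ T₁ ∈ Z₁.powerset,
        (if T₀ = ∅ then (if T₁ = ∅ then δ else 0) else 0)
        = (if T₀ = ∅ then δ else 0) := by
      intro T₀ _
      by_cases hT₀e : T₀ = ∅
      · simp only [if_pos hT₀e]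
        rw [Finset.sum_ite_eq' Z₁.powerset ∅ (fun _ => δ)]
        simp
      · simp [hT₀e]
    rw [Finset.sum_congr rfl hinner, Finset.sum_ite_eq' Z₀.powerset ∅ (fun _ => δ)]
    simp
  -- put everything together
  have hG_le : ∑ T₀ ∈ Z₀.powerset, ∑ T₁ ∈ Z₁.powerset,
      (p ^ T₀.card * q ^ (Z₀.card - T₀.card)) *
        ((p ^ T₁.card * q ^ (Z₁.card - T₁.card)) * inner T₁)
      ≤ (∑ T₀ ∈ Z₀.powerset, ∑ T₁ ∈ Z₁.powerset,
        (p ^ T₀.card * q ^ (Z₀.card - T₀.card)) *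
          ((p ^ T₁.card * q ^ (Z₁.card - T₁.card)) * E' ((insert s (T₀ ∪ T₁)).inf id))) + δ := by
    rw [← hsumite, ← Finset.sum_add_distrib]
    apply Finset.sum_le_sum
    intro T₀ hT₀
    rw [← Finset.sum_add_distrib]
    apply Finset.sum_le_sum
    intro T₁ hT₁
    exact hmaster T₀ hT₀ T₁ hT₁
  have hfinal : E x ≤ E' s + δ := by
    rw [hstep2, hstepH]
    linarith [hG_le]
  have hqkr : q ^ (k + r) < 1 := pow_lt_one₀ hq0 hq1 (by omega)
  have hqkr_eq : q ^ k * q ^ r = q ^ (k + r) := (pow_add q k r).symm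
  have hdelta : δ = q ^ (k + r) * (E x - E' s) := by
    rw [hδdef, ← hqkr_eq]
    ring
  by_contra hc
  push_neg at hc
  have hd : 0 < E x - E' s := by linarith
  have h1 : q ^ (k + r) * (E x - E' s) < 1 * (E x - E' s) :=
    mul_lt_mul_of_pos_right hqkr hd
  rw [hdelta] at hfinal
  linarith

end Chunk1

/-- For a finite trim lattice `L` and `p ∈ (0,1]`, the expected
top-to-bottom absorption time of the Ungarian Markov chain satisfies
`𝓔(L) ≤ 𝓔(spine(L))`. -/
theorem stmt_12 {L : Type*} [Fintype L] [Lattice L] [BoundedOrder L]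
    (hL : IsTrim L) (p : ℝ) (hp : 0 < p) (hp1 : p ≤ 1)
    (E E' : L → ℝ) (hE : IsUngarExp p E) (hE' : IsSpineExp p E') :
    E ⊤ ≤ E' ⊤ := by
  obtain ⟨td⟩ := exists_trimData hL.1.1 hL.1.2
  exact (main_ineq td hp hp1 hE hE' ⊤ top_mem_spineF).2 ⊤ le_rfl
end

section
/- Let $\nu$ be a lattice path from $(0,0)$ to $(\ell-n, n)$ using unit north and east steps, with height vector $\mathbf{h}(\nu) = (h_0(\nu), \ldots, h_\ell(\nu))$. Then the componentwise minimum of two $\nu$-bracket vectors is again a $\nu$-bracket vector. -/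
/-- `b` is a `ν`-bracket vector for the lattice path `ν` with height vector `h`
(where `f k` is the largest index at which `h` takes the value `k`):
(I) `b (f k) = k` for all `k`; (II) `h i ≤ b i ≤ n` for all `i`;
(III) `b` avoids the pattern `121`. -/
def IsBracketVec (ℓ n : ℕ) (h : Fin (ℓ + 1) → ℕ) (f : Fin (n + 1) → Fin (ℓ + 1))
    (b : Fin (ℓ + 1) → ℕ) : Prop :=
  (∀ k : Fin (n + 1), b (f k) = (k : ℕ)) ∧
  (∀ i : Fin (ℓ + 1), h i ≤ b i ∧ b i ≤ n) ∧
  ∀ i1 i2 i3 : Fin (ℓ + 1), i1 < i2 → i2 < i3 → b i1 = b i3 → ¬ b i1 < b i2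

/-- For a lattice path `ν` from `(0,0)` to `(ℓ-n, n)` with height
vector `h`, the componentwise minimum of two `ν`-bracket vectors is again a
`ν`-bracket vector. -/
theorem stmt_14 (ℓ n : ℕ) (h : Fin (ℓ + 1) → ℕ) (f : Fin (n + 1) → Fin (ℓ + 1))
    (h0 : h 0 = 0) (hlast : h (Fin.last ℓ) = n)
    (hstep : ∀ i : Fin ℓ, h i.succ = h i.castSucc ∨ h i.succ = h i.castSucc + 1)
    (hf : ∀ k : Fin (n + 1), h (f k) = (k : ℕ) ∧ ∀ i : Fin (ℓ + 1), h i = (k : ℕ) → i ≤ f k)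
    (b b' : Fin (ℓ + 1) → ℕ)
    (hb : IsBracketVec ℓ n h f b) (hb' : IsBracketVec ℓ n h f b') :
    IsBracketVec ℓ n h f (fun i => min (b i) (b' i)) := by
  have hmono : Monotone h := by
    refine Fin.monotone_iff_le_succ.mpr fun i => ?_
    rcases hstep i with h1 | h1 <;> omega
  refine ⟨fun k => by simp [hb.1 k, hb'.1 k], fun i =>
    ⟨le_min (hb.2.1 i).1 (hb'.2.1 i).1, (min_le_left _ _).trans (hb.2.1 i).2⟩, ?_⟩
  intro i1 i2 i3 h12 h23 heq hlt
  simp only at heq hlt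
  set v := min (b i1) (b' i1) with hv
  have hvn : v ≤ n := (min_le_left _ _).trans (hb.2.1 i1).2
  set k : Fin (n + 1) := ⟨v, Nat.lt_succ_of_le hvn⟩ with hk
  have hkv : (k : ℕ) = v := rfl
  have h3f : i3 ≤ f k := by
    by_contra hc
    push_neg at hc
    have h1 : h (f k) ≤ h i3 := hmono hc.le
    have h2 : h i3 ≤ v := by
      have := (hb.2.1 i3).1
      have := (hb'.2.1 i3).1
      omega
    have h3 : h i3 = (k : ℕ) := by rw [(hf k).1] at h1; omega
    exact absurd ((hf k).2 i3 h3) (not_le.mpr hc)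
  have h2f : i2 < f k := lt_of_lt_of_le h23 h3f
  have hb2 : v < b i2 := lt_of_lt_of_le hlt (min_le_left _ _)
  have hb2' : v < b' i2 := lt_of_lt_of_le hlt (min_le_right _ _)
  rcases min_cases (b i1) (b' i1) with ⟨he, _⟩ | ⟨he, _⟩
  · have hfk : b (f k) = v := by rw [hb.1 k, hkv]
    exact hb.2.2 i1 i2 (f k) h12 h2f (by omega) (by omega)
  · have hfk : b' (f k) = v := by rw [hb'.1 k, hkv]
    exact hb'.2.2 i1 i2 (f k) h12 h2f (by omega) (by omega)
end

section
/- Let $\nu$ be a lattice path with height vector $\mathbf{h}(\nu)$, and suppose $1 \leq k \leq n$, $f_{k-1} < i < f_k$, and $h_i(\nu)+1 \leq m \leq n$. Define $\mathfrak{b}^{i,m}$ by $\mathfrak{b}^{i,m}_r = m$ if $f_{k-1}+1 \leq r \leq i$ and $\mathfrak{b}^{i,m}_r = h_r(\nu)$ otherwise. Then $\mathfrak{b}^{i,m}$ is a $\nu$-bracket vector whose unique descent is at position $i$ (i.e., $i$ is the only index $j$ with $\mathfrak{b}^{i,m}_j > \mathfrak{b}^{i,m}_{j+1}$). -/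
/-- With `1 ≤ k ≤ n`, `f_{k-1} < i < f_k`, and `h_i + 1 ≤ m ≤ n`,
the vector `𝔟^{i,m}` (equal to `m` on positions `f_{k-1}+1, …, i` and to the height
vector elsewhere) is a `ν`-bracket vector whose unique descent is at position `i`. -/
theorem stmt_15 (ℓ n : ℕ) (h : Fin (ℓ + 1) → ℕ) (f : Fin (n + 1) → Fin (ℓ + 1))
    (h0 : h 0 = 0) (hlast : h (Fin.last ℓ) = n)
    (hstep : ∀ i : Fin ℓ, h i.succ = h i.castSucc ∨ h i.succ = h i.castSucc + 1)
    (hf : ∀ k : Fin (n + 1), h (f k) = (k : ℕ) ∧ ∀ i : Fin (ℓ + 1), h i = (k : ℕ) → i ≤ f k)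
    (k : ℕ) (hk1 : 1 ≤ k) (hk2 : k ≤ n)
    (i : Fin (ℓ + 1))
    (hi1 : f ⟨k - 1, by omega⟩ < i) (hi2 : i < f ⟨k, by omega⟩)
    (m : ℕ) (hm1 : h i + 1 ≤ m) (hm2 : m ≤ n)
    (B : Fin (ℓ + 1) → ℕ)
    (hB : B = fun r => if f ⟨k - 1, by omega⟩ < r ∧ r ≤ i then m else h r) :
    IsBracketVec ℓ n h f B ∧
      ∀ j : Fin ℓ, B j.succ < B j.castSucc ↔ j.castSucc = i := by
  have hk1' : k - 1 < n + 1 := by omega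
  have hk' : k < n + 1 := by omega
  have hmono : Monotone h := Fin.monotone_iff_le_succ.mpr
    (fun j => by rcases hstep j with e | e <;> omega)
  have hBpos : ∀ r : Fin (ℓ + 1), f ⟨k - 1, hk1'⟩ < r → r ≤ i → B r = m := by
    intro r h1 h2; rw [hB]; exact if_pos ⟨h1, h2⟩
  have hBneg : ∀ r : Fin (ℓ + 1), ¬ (f ⟨k - 1, hk1'⟩ < r ∧ r ≤ i) → B r = h r := by
    intro r h1; rw [hB]; exact if_neg h1
  have hfk1 : h (f ⟨k - 1, hk1'⟩) = k - 1 := (hf _).1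
  have hfk : h (f ⟨k, hk'⟩) = k := (hf _).1
  have hub : ∀ r : Fin (ℓ + 1), h r ≤ n := fun r => hlast ▸ hmono (Fin.le_last r)
  have hlow : ∀ r : Fin (ℓ + 1), f ⟨k - 1, hk1'⟩ < r → k ≤ h r := by
    intro r hr
    have h1 : k - 1 ≤ h r := hfk1 ▸ hmono hr.le
    by_contra hc
    have h2 : h r = k - 1 := by omega
    exact absurd ((hf _).2 r (by rw [h2]) ) (not_le.mpr hr)
  have hhigh : ∀ r : Fin (ℓ + 1), r ≤ f ⟨k, hk'⟩ → h r ≤ k := fun r hr => hfk ▸ hmono hr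
  have hhi : h i = k := le_antisymm (hhigh i hi2.le) (hlow i hi1)
  have hm : k + 1 ≤ m := by omega
  have key : ∀ r : Fin (ℓ + 1),
      (f ⟨k - 1, hk1'⟩ < r ∧ r ≤ i ∧ B r = m) ∨
      (r ≤ f ⟨k - 1, hk1'⟩ ∧ h r + 1 ≤ k ∧ B r = h r) ∨
      (i < r ∧ k ≤ h r ∧ B r = h r) := by
    intro r
    by_cases hc1 : f ⟨k - 1, hk1'⟩ < r
    · by_cases hc2 : r ≤ i
      · exact Or.inl ⟨hc1, hc2, hBpos r hc1 hc2⟩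
      · exact Or.inr (Or.inr ⟨not_le.mp hc2, hlow r hc1,
          hBneg r (fun hc => hc2 hc.2)⟩)
    · have hr : r ≤ f ⟨k - 1, hk1'⟩ := not_lt.mp hc1
      have : h r ≤ k - 1 := hfk1 ▸ hmono hr
      exact Or.inr (Or.inl ⟨hr, by omega, hBneg r (fun hc => hc1 hc.1)⟩)
  refine ⟨⟨?_, ?_, ?_⟩, ?_⟩
  · -- B (f j) = j
    intro j
    by_cases hj : (j : ℕ) ≤ k - 1
    · have hle : f j ≤ f ⟨k - 1, hk1'⟩ := by
        by_contra hc
        push_neg at hc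
        have h1 : k - 1 ≤ h (f j) := hfk1 ▸ hmono hc.le
        rw [(hf j).1] at h1
        have : j = ⟨k - 1, hk1'⟩ := Fin.ext (show (j : ℕ) = k - 1 by omega)
        rw [this] at hc
        exact lt_irrefl _ hc
      rw [hBneg (f j) (fun hc => absurd hle (not_le.mpr hc.1))]
      exact (hf j).1
    · push_neg at hj
      have hk3 : k ≤ (j : ℕ) := by omega
      have hgt : i < f j := by
        by_contra hc
        push_neg at hc
        have h1 : h (f j) ≤ h i := hmono hc
        rw [(hf j).1, hhi] at h1
        have : j = ⟨k, hk'⟩ := Fin.ext (show (j : ℕ) = k by omega)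
        rw [this] at hc
        exact absurd hi2 (not_lt.mpr hc)
      rw [hBneg (f j) (fun hc => absurd hgt (not_lt.mpr hc.2))]
      exact (hf j).1
  · -- bounds
    intro r
    rcases key r with ⟨h1, h2, h3⟩ | ⟨h1, h2, h3⟩ | ⟨h1, h2, h3⟩ <;> rw [h3]
    · have : h r ≤ k := hhigh r (le_trans h2 hi2.le)
      omega
    · exact ⟨le_refl _, hub r⟩
    · exact ⟨le_refl _, hub r⟩
  · -- no 121 pattern
    intro i1 i2 i3 h12 h23 heq hlt
    have m12 : h i1 ≤ h i2 := hmono h12.le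
    have m23 : h i2 ≤ h i3 := hmono h23.le
    have v12 : (i1 : ℕ) < i2 := h12
    have v23 : (i2 : ℕ) < i3 := h23
    rcases key i1 with ⟨a1, a2, a3⟩ | ⟨a1, a2, a3⟩ | ⟨a1, a2, a3⟩ <;>
      rcases key i2 with ⟨b1, b2, b3⟩ | ⟨b1, b2, b3⟩ | ⟨b1, b2, b3⟩ <;>
      rcases key i3 with ⟨c1, c2, c3⟩ | ⟨c1, c2, c3⟩ | ⟨c1, c2, c3⟩ <;>
      rw [a3, c3] at heq <;> rw [a3, b3] at hlt <;>
      simp only [Fin.lt_def, Fin.le_def] at a1 b1 c1 <;>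
      omega
  · -- unique descent
    intro j
    have hvs : (j.succ : ℕ) = (j : ℕ) + 1 := Fin.val_succ j
    have hvc : (j.castSucc : ℕ) = (j : ℕ) := Fin.coe_castSucc j
    constructor
    · intro hd
      by_contra hne
      have hne' : (j.castSucc : ℕ) ≠ (i : ℕ) := fun hc => hne (Fin.ext hc)
      refine absurd hd (not_lt.mpr ?_)
      by_cases c1 : f ⟨k - 1, hk1'⟩ < j.castSucc ∧ j.castSucc ≤ i
      · have hcsucc : j.succ ≤ i := by
          rw [Fin.le_def, hvs]
          have := Fin.le_def.mp c1.2
          omega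
        have hc2 : f ⟨k - 1, hk1'⟩ < j.succ :=
          lt_of_lt_of_le c1.1 (le_of_lt (Fin.castSucc_lt_succ (i := j)))
        rw [hBpos _ c1.1 c1.2, hBpos _ hc2 hcsucc]
      · rw [hBneg _ c1]
        by_cases c2 : f ⟨k - 1, hk1'⟩ < j.succ ∧ j.succ ≤ i
        · rw [hBpos _ c2.1 c2.2]
          have hcs : j.castSucc ≤ i := le_trans (le_of_lt (Fin.castSucc_lt_succ (i := j))) c2.2
          have hcsle : j.castSucc ≤ f ⟨k - 1, hk1'⟩ := by
            by_contra hc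
            exact c1 ⟨not_le.mp hc, hcs⟩
          have : h j.castSucc ≤ k - 1 := hfk1 ▸ hmono hcsle
          omega
        · rw [hBneg _ c2]
          rcases hstep j with e | e <;> omega
    · intro he
      have hBc : B j.castSucc = m := hBpos _ (he ▸ hi1) (he.le)
      have hBs : B j.succ = h j.succ := by
        refine hBneg _ (fun hc => ?_)
        have h1 := Fin.le_def.mp hc.2
        have h2 := congrArg Fin.val he
        rw [hvc] at h2
        omega
      have hsk : j.succ ≤ f ⟨k, hk'⟩ := by
        rw [Fin.le_def, hvs]
        have h1 := Fin.lt_def.mp hi2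
        have h2 := congrArg Fin.val he
        rw [hvc] at h2
        omega
      have : h j.succ ≤ k := hhigh _ hsk
      rw [hBc, hBs]
      omega
end
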